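/- arXiv:2209.11164 — 3 statements merged into one kernel-verified Lean document; each statement's English description precedes it below -/
import Mathlib

section
/- For ε > 0, define ⟨x,y⟩_ε = ⟨x,(I−Π(μ))y⟩_{1/μ} + ε⟨x,Π(μ)y⟩_{1/μ}. Then ⟨·,·⟩_ε is an inner product on ℝ^N, and the induced operator norm satisfies ‖J(μ)‖_ε ≤ √( ‖(I−Π(μ))J(μ)‖²_{1/μ} + ε ‖Π(μ)−S(μ)‖²_{1/μ} ). -/
open Matrix BigOperators

/-- A matrix is column stochastic: nonnegative entries, each column sums to one. -/
def ColStoch {m : Type*} [Fintype m] (M : Matrix m m ℝ) : Prop :=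
  (∀ i j, 0 ≤ M i j) ∧ ∀ j, ∑ i, M i j = 1

/-- Irreducibility of a matrix via its pattern of nonzero entries:
the associated directed graph is strongly connected. -/
def Irred {m : Type*} [Fintype m] [DecidableEq m] (M : Matrix m m ℝ) : Prop :=
  ∀ i j, ∃ k : ℕ, 0 < k ∧ (M ^ k) i j ≠ 0

/-- Weighted inner product `⟨x,y⟩_w = ∑ i, x i * y i * w i`. -/
def innerW {m : Type*} [Fintype m] (w x y : m → ℝ) : ℝ := ∑ i, x i * y i * w i

/-- Weighted `ℓ²(w)` norm. -/
noncomputable def normW {m : Type*} [Fintype m] (w x : m → ℝ) : ℝ :=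
  Real.sqrt (innerW w x x)

/-- Operator norm of a matrix with respect to the `ℓ²(w)` norm. -/
noncomputable def opNormW {m : Type*} [Fintype m] (w : m → ℝ) (M : Matrix m m ℝ) : ℝ :=
  sInf {c | 0 ≤ c ∧ ∀ x, normW w (M.mulVec x) ≤ c * normW w x}

/-- Aggregation operator for the partition `{f⁻¹(i)}` of `Fin N`. -/
def Agg {N n : ℕ} (f : Fin N → Fin n) : Matrix (Fin n) (Fin N) ℝ :=
  fun i x => if f x = i then 1 else 0

/-- Disaggregation operator for the partition `{f⁻¹(i)}` and weight vector ν. -/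
noncomputable def Disagg {N n : ℕ} (f : Fin N → Fin n) (ν : Fin N → ℝ) :
    Matrix (Fin N) (Fin n) ℝ :=
  fun j i => if f j = i then ν j / (Agg f).mulVec ν i else 0

/-- Coarse approximation `C(ν) = A P D(ν)`. -/
noncomputable def CoarseC {N n : ℕ} (P : Matrix (Fin N) (Fin N) ℝ) (f : Fin N → Fin n)
    (ν : Fin N → ℝ) : Matrix (Fin n) (Fin n) ℝ := Agg f * P * Disagg f ν

/-- `P̂ = P - μ 𝟙ᵀ`. -/
def hatP {N : ℕ} (P : Matrix (Fin N) (Fin N) ℝ) (μ : Fin N → ℝ) :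
    Matrix (Fin N) (Fin N) ℝ := P - vecMulVec μ 1

/-- Coarse projection `S(ν) = D(ν)[A(I-P+μ𝟙ᵀ)D(ν)]⁻¹ A(I-P+μ𝟙ᵀ)`. -/
noncomputable def CoarseS {N n : ℕ} (P : Matrix (Fin N) (Fin N) ℝ) (f : Fin N → Fin n)
    (μ ν : Fin N → ℝ) : Matrix (Fin N) (Fin N) ℝ :=
  Disagg f ν * (Agg f * (1 - P + vecMulVec μ 1) * Disagg f ν)⁻¹ *
    (Agg f * (1 - P + vecMulVec μ 1))

/-- Orthogonal coarse projection `Π(ν) = D(ν) A`. -/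
noncomputable def PiProj {N n : ℕ} (f : Fin N → Fin n) (ν : Fin N → ℝ) :
    Matrix (Fin N) (Fin N) ℝ := Disagg f ν * Agg f

/-- Error propagation operator `J(ν) = P̂ (I - S(ν))`. -/
noncomputable def Jop {N n : ℕ} (P : Matrix (Fin N) (Fin N) ℝ) (f : Fin N → Fin n)
    (μ ν : Fin N → ℝ) : Matrix (Fin N) (Fin N) ℝ := hatP P μ * (1 - CoarseS P f μ ν)

/-- Spectrum (set of complex eigenvalues) of a real matrix. -/
noncomputable def specC {N : ℕ} (M : Matrix (Fin N) (Fin N) ℝ) : Set ℂ :=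
  spectrum ℂ (M.map (Complex.ofReal))

/-- Spectral radius of a real matrix. -/
noncomputable def specRad {N : ℕ} (M : Matrix (Fin N) (Fin N) ℝ) : ℝ :=
  sSup ((fun z : ℂ => ‖z‖) '' specC M)

/-- The `ℓ²(1/μ)`-adjoint `diag(μ) Mᵀ diag(1/μ)`. -/
noncomputable def adjW {N : ℕ} (μ : Fin N → ℝ) (M : Matrix (Fin N) (Fin N) ℝ) :
    Matrix (Fin N) (Fin N) ℝ :=
  Matrix.diagonal μ * Mᵀ * Matrix.diagonal (fun i => (μ i)⁻¹)

/-- The ε-inner product `⟨x,y⟩_ε = ⟨x,(I-Π(μ))y⟩_{1/μ} + ε ⟨x,Π(μ)y⟩_{1/μ}`. -/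
noncomputable def innerEps {N n : ℕ} (f : Fin N → Fin n) (μ : Fin N → ℝ) (ε : ℝ)
    (x y : Fin N → ℝ) : ℝ :=
  innerW (fun i => (μ i)⁻¹) x ((1 - PiProj f μ).mulVec y) +
    ε * innerW (fun i => (μ i)⁻¹) x ((PiProj f μ).mulVec y)

/-- The ε-norm. -/
noncomputable def normEps {N n : ℕ} (f : Fin N → Fin n) (μ : Fin N → ℝ) (ε : ℝ)
    (x : Fin N → ℝ) : ℝ := Real.sqrt (innerEps f μ ε x x)

/-- Operator norm induced by the ε-norm. -/
noncomputable def opNormEps {N n : ℕ} (f : Fin N → Fin n) (μ : Fin N → ℝ) (ε : ℝ)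
    (M : Matrix (Fin N) (Fin N) ℝ) : ℝ :=
  sInf {c | 0 ≤ c ∧ ∀ x, normEps f μ ε (M.mulVec x) ≤ c * normEps f μ ε x}

section Aux1
variable {m : Type*} [Fintype m]

lemma innerW_comm (w x y : m → ℝ) : innerW w x y = innerW w y x := by
  unfold innerW; apply Finset.sum_congr rfl; intros; ring

lemma innerW_add_left (w x y z : m → ℝ) :
    innerW w (x + y) z = innerW w x z + innerW w y z := by
  unfold innerW; rw [← Finset.sum_add_distrib]
  apply Finset.sum_congr rfl; intro i _; simp [Pi.add_apply]; ring

lemma innerW_smul_left (w : m → ℝ) (c : ℝ) (x y : m → ℝ) :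
    innerW w (c • x) y = c * innerW w x y := by
  unfold innerW; rw [Finset.mul_sum]
  apply Finset.sum_congr rfl; intro i _; simp [Pi.smul_apply]; ring

lemma innerW_self_nonneg {w : m → ℝ} (hw : ∀ i, 0 < w i) (x : m → ℝ) :
    0 ≤ innerW w x x := by
  unfold innerW
  apply Finset.sum_nonneg; intro i _
  have := (hw i).le
  nlinarith [sq_nonneg (x i)]

lemma innerW_self_eq_zero {w : m → ℝ} (hw : ∀ i, 0 < w i) {x : m → ℝ}
    (h : innerW w x x = 0) : x = 0 := by
  funext i
  by_contra hxi
  have hxi' : x i ≠ 0 := fun h0 => hxi (by simpa using h0)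
  have h1 : 0 < x i * x i * w i :=
    mul_pos (mul_self_pos.mpr hxi') (hw i)
  have h2 : ∀ j ∈ Finset.univ, 0 ≤ x j * x j * w j := by
    intro j _; nlinarith [sq_nonneg (x j), (hw j).le]
  have := Finset.single_le_sum h2 (Finset.mem_univ i)
  unfold innerW at h
  simp [Pi.zero_apply] at *
  linarith

lemma normW_nonneg (w x : m → ℝ) : 0 ≤ normW w x := Real.sqrt_nonneg _

lemma normW_sq {w : m → ℝ} (hw : ∀ i, 0 < w i) (x : m → ℝ) :
    normW w x ^ 2 = innerW w x x := Real.sq_sqrt (innerW_self_nonneg hw x)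

end Aux1


section Aux2
variable {m : Type*} [Fintype m]

lemma opNormW_set_nonempty {w : m → ℝ} (hw : ∀ i, 0 < w i) (M : Matrix m m ℝ) :
    {c | 0 ≤ c ∧ ∀ x, normW w (M.mulVec x) ≤ c * normW w x}.Nonempty := by
  refine ⟨Real.sqrt (∑ i, ∑ j, (M i j)^2 * w i / w j), Real.sqrt_nonneg _, fun x => ?_⟩
  have key : innerW w (M.mulVec x) (M.mulVec x) ≤
      (∑ i, ∑ j, (M i j)^2 * w i / w j) * innerW w x x := by
    unfold innerW
    have hrow : ∀ i, (M.mulVec x i) * (M.mulVec x i) * w i ≤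
        (∑ j, (M i j)^2 * w i / w j) * (∑ j, x j * x j * w j) := by
      intro i
      have hcs := Finset.sum_mul_sq_le_sq_mul_sq Finset.univ
        (fun j => M i j / Real.sqrt (w j)) (fun j => x j * Real.sqrt (w j))
      have hM : ∀ j, M i j / Real.sqrt (w j) * (x j * Real.sqrt (w j)) = M i j * x j := by
        intro j
        have : Real.sqrt (w j) ≠ 0 := by
          rw [Real.sqrt_ne_zero' ]; exact hw j
        field_simp
      have e1 : ∑ j, M i j / Real.sqrt (w j) * (x j * Real.sqrt (w j)) = M.mulVec x i := by
        rw [Matrix.mulVec, dotProduct]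
        exact Finset.sum_congr rfl fun j _ => hM j
      have e2 : ∀ j, (M i j / Real.sqrt (w j))^2 = (M i j)^2 / w j := by
        intro j
        rw [div_pow, Real.sq_sqrt (hw j).le]
      have e3 : ∀ j, (x j * Real.sqrt (w j))^2 = x j * x j * w j := by
        intro j
        rw [mul_pow, Real.sq_sqrt (hw j).le]; ring
      rw [e1] at hcs
      calc M.mulVec x i * M.mulVec x i * w i = (M.mulVec x i)^2 * w i := by ring
        _ ≤ ((∑ j, (M i j / Real.sqrt (w j))^2) * ∑ j, (x j * Real.sqrt (w j))^2) * w i := by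
            apply mul_le_mul_of_nonneg_right hcs (hw i).le
        _ = ((∑ j, (M i j)^2 / w j) * w i) * (∑ j, x j * x j * w j) := by
            simp only [e2, e3]; ring
        _ = (∑ j, (M i j)^2 * w i / w j) * (∑ j, x j * x j * w j) := by
            congr 1
            rw [Finset.sum_mul]
            apply Finset.sum_congr rfl; intro j _; ring
    calc ∑ i, (M.mulVec x i) * (M.mulVec x i) * w i
        ≤ ∑ i, (∑ j, (M i j)^2 * w i / w j) * (∑ j, x j * x j * w j) :=
          Finset.sum_le_sum (fun i _ => hrow i)
      _ = (∑ i, ∑ j, (M i j)^2 * w i / w j) * (∑ j, x j * x j * w j) := by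
          rw [Finset.sum_mul]
  unfold normW
  have hnn : 0 ≤ ∑ i, ∑ j, (M i j)^2 * w i / w j := Finset.sum_nonneg fun i _ => Finset.sum_nonneg fun j _ =>
    div_nonneg (mul_nonneg (sq_nonneg _) (hw i).le) (hw j).le
  rw [← Real.sqrt_mul hnn (innerW w x x)]
  exact Real.sqrt_le_sqrt key

lemma opNormW_nonneg {w : m → ℝ} (hw : ∀ i, 0 < w i) (M : Matrix m m ℝ) :
    0 ≤ opNormW w M :=
  le_csInf (opNormW_set_nonempty hw M) (fun c hc => hc.1)

lemma opNormW_bound {w : m → ℝ} (hw : ∀ i, 0 < w i) (M : Matrix m m ℝ) (x : m → ℝ) :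
    normW w (M.mulVec x) ≤ opNormW w M * normW w x := by
  by_cases hx : x = 0
  · subst hx
    have h0 : normW w (0 : m → ℝ) = 0 := by
      unfold normW innerW; simp
    rw [show M.mulVec 0 = 0 from Matrix.mulVec_zero M, h0, mul_zero]
  · have hxpos : 0 < normW w x := by
      rcases lt_or_eq_of_le (Real.sqrt_nonneg (innerW w x x)) with h | h
      · exact h
      · exfalso
        apply hx
        apply innerW_self_eq_zero hw
        have := innerW_self_nonneg hw x
        have h2 : normW w x = 0 := h.symm ▸ rfl
        unfold normW at h2
        nlinarith [Real.sq_sqrt this, h2]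
    have : normW w (M.mulVec x) / normW w x ≤ opNormW w M := by
      apply le_csInf (opNormW_set_nonempty hw M)
      intro c hc
      rw [div_le_iff₀ hxpos]
      exact hc.2 x
    calc normW w (M.mulVec x) = (normW w (M.mulVec x) / normW w x) * normW w x := by
          field_simp
      _ ≤ opNormW w M * normW w x := mul_le_mul_of_nonneg_right this hxpos.le

end Aux2


section Aux3
variable {N n : ℕ} (f : Fin N → Fin n) (μ : Fin N → ℝ)

lemma aggVec_apply (i : Fin n) :
    (Agg f).mulVec μ i = ∑ j, if f j = i then μ j else 0 := by
  rw [Matrix.mulVec, dotProduct]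
  apply Finset.sum_congr rfl; intro j _
  simp [Agg, ite_mul]

lemma aggVec_pos (hf : Function.Surjective f) (hμpos : ∀ i, 0 < μ i) (i : Fin n) :
    0 < (Agg f).mulVec μ i := by
  obtain ⟨j₀, hj₀⟩ := hf i
  rw [aggVec_apply]
  have h1 : (if f j₀ = i then μ j₀ else 0) ≤ ∑ j, if f j = i then μ j else 0 := by
    apply Finset.single_le_sum (fun j _ => ?_) (Finset.mem_univ j₀)
    split
    · exact (hμpos j).le
    · exact le_refl 0
  rw [if_pos hj₀] at h1
  exact lt_of_lt_of_le (hμpos j₀) h1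

lemma AD_eq_one (hf : Function.Surjective f) (hμpos : ∀ i, 0 < μ i) :
    Agg f * Disagg f μ = 1 := by
  ext i i'
  rw [Matrix.mul_apply, Matrix.one_apply]
  have hterm : ∀ j, Agg f i j * Disagg f μ j i' =
      if f j = i ∧ f j = i' then μ j / (Agg f).mulVec μ i' else 0 := by
    intro j
    simp only [Agg, Disagg]
    by_cases h1 : f j = i <;> by_cases h2 : f j = i' <;> simp [h1, h2]
  rw [Finset.sum_congr rfl (fun j _ => hterm j)]
  by_cases h : i = i'
  · subst h
    rw [if_pos rfl]
    have : ∀ j, (if f j = i ∧ f j = i then μ j / (Agg f).mulVec μ i else 0)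
        = (if f j = i then μ j else 0) / (Agg f).mulVec μ i := by
      intro j; by_cases h1 : f j = i <;> simp [h1]
    rw [Finset.sum_congr rfl (fun j _ => this j), ← Finset.sum_div, ← aggVec_apply]
    exact div_self (ne_of_gt (aggVec_pos f μ hf hμpos i))
  · rw [if_neg h]
    apply Finset.sum_eq_zero
    intro j _
    rw [if_neg]
    rintro ⟨h1, h2⟩
    exact h (h1 ▸ h2)

lemma piProj_apply (j k : Fin N) :
    PiProj f μ j k = if f j = f k then μ j / (Agg f).mulVec μ (f j) else 0 := by
  rw [PiProj, Matrix.mul_apply]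
  rw [Finset.sum_eq_single (f j)]
  · simp only [Disagg, Agg, if_pos rfl]
    by_cases h : f j = f k
    · rw [if_pos h, if_pos h.symm, mul_one]; simp
    · rw [if_neg h, if_neg (fun hh => h (Eq.symm hh)), mul_zero]
  · intro i _ hi
    simp only [Disagg]
    rw [if_neg (fun hh => hi (Eq.symm hh)), zero_mul]
  · intro h; exact absurd (Finset.mem_univ _) h

lemma pi_symm_aux (x y : Fin N → ℝ) (hμpos : ∀ i, 0 < μ i)
    (hf : Function.Surjective f) :
    innerW (fun i => (μ i)⁻¹) x ((PiProj f μ).mulVec y) =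
      ∑ j, ∑ k, (if f j = f k then x j * y k * ((Agg f).mulVec μ (f j))⁻¹ else 0) := by
  unfold innerW
  apply Finset.sum_congr rfl; intro j _
  rw [Matrix.mulVec, dotProduct, Finset.mul_sum, Finset.sum_mul]
  apply Finset.sum_congr rfl; intro k _
  rw [piProj_apply]
  by_cases h : f j = f k
  · rw [if_pos h, if_pos h]
    have h1 : μ j ≠ 0 := ne_of_gt (hμpos j)
    have h2 : (Agg f).mulVec μ (f j) ≠ 0 := ne_of_gt (aggVec_pos f μ hf hμpos (f j))
    field_simp
  · rw [if_neg h, if_neg h]; ring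

lemma innerW_pi_symm (hμpos : ∀ i, 0 < μ i) (hf : Function.Surjective f)
    (x y : Fin N → ℝ) :
    innerW (fun i => (μ i)⁻¹) x ((PiProj f μ).mulVec y) =
      innerW (fun i => (μ i)⁻¹) ((PiProj f μ).mulVec x) y := by
  rw [innerW_comm _ ((PiProj f μ).mulVec x) y]
  rw [pi_symm_aux f μ x y hμpos hf, pi_symm_aux f μ y x hμpos hf]
  rw [Finset.sum_comm]
  apply Finset.sum_congr rfl; intro j _
  apply Finset.sum_congr rfl; intro k _
  by_cases h : f j = f k
  · rw [if_pos h, if_pos h.symm, h]; ring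
  · rw [if_neg h, if_neg (fun hh => h (Eq.symm hh))]

lemma piProj_idem (hf : Function.Surjective f) (hμpos : ∀ i, 0 < μ i) :
    PiProj f μ * PiProj f μ = PiProj f μ := by
  show (Disagg f μ * Agg f) * (Disagg f μ * Agg f) = _
  rw [Matrix.mul_assoc, ← Matrix.mul_assoc (Agg f), AD_eq_one f μ hf hμpos,
    Matrix.one_mul, ← PiProj]

end Aux3


section Aux4

lemma mul_apply_ge {a b c : Type*} [Fintype b] {M : Matrix a b ℝ} {O : Matrix b c ℝ}
    (hM : ∀ i j, 0 ≤ M i j) (hO : ∀ i j, 0 ≤ O i j) (i : a) (l : b) (j : c) :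
    M i l * O l j ≤ (M * O) i j := by
  rw [Matrix.mul_apply]
  exact Finset.single_le_sum (fun k _ => mul_nonneg (hM i k) (hO k j)) (Finset.mem_univ l)

lemma mul_nonneg_entries {a b c : Type*} [Fintype b] {M : Matrix a b ℝ} {O : Matrix b c ℝ}
    (hM : ∀ i j, 0 ≤ M i j) (hO : ∀ i j, 0 ≤ O i j) :
    ∀ i j, 0 ≤ (M * O) i j := fun i j => by
  rw [Matrix.mul_apply]
  exact Finset.sum_nonneg fun k _ => mul_nonneg (hM i k) (hO k j)

lemma pow_nonneg_entries {m : Type*} [Fintype m] [DecidableEq m] {M : Matrix m m ℝ}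
    (hM : ∀ i j, 0 ≤ M i j) (k : ℕ) : ∀ i j, 0 ≤ (M ^ k) i j := by
  induction k with
  | zero => intro i j; rw [pow_zero, Matrix.one_apply]; split <;> norm_num
  | succ k ih =>
      intro i j
      rw [pow_succ]
      exact mul_nonneg_entries ih hM i j

lemma pow_mulVec_fixed {m : Type*} [Fintype m] [DecidableEq m] {M : Matrix m m ℝ}
    {y : m → ℝ} (h : M.mulVec y = y) (k : ℕ) : (M ^ k).mulVec y = y := by
  induction k with
  | zero => rw [pow_zero, Matrix.one_mulVec]
  | succ k ih => rw [pow_succ, ← Matrix.mulVec_mulVec, h, ih]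

/-- Positivity spreading for irreducible nonnegative matrices. -/
lemma spread_pos {n : ℕ} {C : Matrix (Fin n) (Fin n) ℝ}
    (hC0 : ∀ i j, 0 ≤ C i j)
    (hirr : ∀ i j, ∃ k, 0 < k ∧ 0 < (C ^ k) i j)
    {y : Fin n → ℝ} (hy0 : ∀ i, 0 ≤ y i) (hfix : C.mulVec y = y)
    {j : Fin n} (hyj : 0 < y j) : ∀ i, 0 < y i := by
  intro i
  obtain ⟨k, hk, hpos⟩ := hirr i j
  have hfk := pow_mulVec_fixed hfix k
  have : (C ^ k) i j * y j ≤ y i := by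
    conv_rhs => rw [← hfk]
    rw [Matrix.mulVec, dotProduct]
    exact Finset.single_le_sum
      (fun l _ => mul_nonneg (pow_nonneg_entries hC0 k i l) (hy0 l)) (Finset.mem_univ j)
  exact lt_of_lt_of_le (mul_pos hpos hyj) this

/-- PF-type kernel lemma: fixed vector with zero sum is zero. -/
lemma PF_ker {n : ℕ} {C : Matrix (Fin n) (Fin n) ℝ}
    (hC0 : ∀ i j, 0 ≤ C i j)
    (hirr : ∀ i j, ∃ k, 0 < k ∧ 0 < (C ^ k) i j)
    {ν : Fin n → ℝ} (hν : ∀ i, 0 < ν i) (hCν : C.mulVec ν = ν) (hνsum : ∑ i, ν i = 1)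
    {x : Fin n → ℝ} (hx : C.mulVec x = x) (hxsum : ∑ i, x i = 0) : x = 0 := by
  rcases Nat.eq_zero_or_pos n with hn | hn
  · subst hn; funext i; exact i.elim0
  have hne : (Finset.univ : Finset (Fin n)).Nonempty := by
    have : Nonempty (Fin n) := ⟨⟨0, hn⟩⟩
    exact Finset.univ_nonempty
  obtain ⟨i₀, _, hmin⟩ := Finset.exists_min_image Finset.univ (fun i => x i / ν i) hne
  set t := x i₀ / ν i₀ with ht
  have hz0 : ∀ i, 0 ≤ x i - t * ν i := by
    intro i
    have h1 : t ≤ x i / ν i := hmin i (Finset.mem_univ i)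
    have := (le_div_iff₀ (hν i)).mp h1
    linarith
  set z : Fin n → ℝ := x - t • ν with hzdef
  have hz0' : ∀ i, 0 ≤ z i := by
    intro i; simpa [hzdef] using hz0 i
  have hzfix : C.mulVec z = z := by
    rw [hzdef, Matrix.mulVec_sub, Matrix.mulVec_smul, hx, hCν]
  have hzi₀ : z i₀ = 0 := by
    simp only [hzdef, Pi.sub_apply, Pi.smul_apply, smul_eq_mul, ht]
    rw [div_mul_cancel₀ _ (ne_of_gt (hν i₀)), sub_self]
  have hzzero : z = 0 := by
    by_contra hzne
    obtain ⟨j, hj⟩ := Function.ne_iff.mp hzne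
    have hjpos : 0 < z j := lt_of_le_of_ne (hz0' j) (fun h => hj (by simpa using h.symm))
    have := spread_pos hC0 hirr hz0' hzfix hjpos i₀
    rw [hzi₀] at this
    exact lt_irrefl 0 this
  have hxt : x = t • ν := by
    have := sub_eq_zero.mp hzzero
    exact this
  have : (0 : ℝ) = t := by
    have h1 : ∑ i, x i = ∑ i, t * ν i := by
      rw [hxt]; apply Finset.sum_congr rfl; intros; simp
    rw [hxsum, ← Finset.mul_sum, hνsum, mul_one] at h1
    exact h1
  rw [hxt, ← this, zero_smul]

end Aux4

section Aux5
variable {N n : ℕ} (P : Matrix (Fin N) (Fin N) ℝ) (f : Fin N → Fin n) (μ : Fin N → ℝ)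

lemma agg_nonneg : ∀ i j, 0 ≤ Agg f i j := by
  intro i j; unfold Agg; split <;> norm_num

lemma disagg_nonneg (hf : Function.Surjective f) (hμpos : ∀ i, 0 < μ i) :
    ∀ i j, 0 ≤ Disagg f μ i j := by
  intro i j; unfold Disagg; split
  · exact div_nonneg (hμpos i).le (aggVec_pos f μ hf hμpos j).le
  · exact le_refl 0

lemma coarseC_nonneg (hf : Function.Surjective f) (hμpos : ∀ i, 0 < μ i)
    (hP0 : ∀ i j, 0 ≤ P i j) : ∀ i j, 0 ≤ CoarseC P f μ i j := by
  unfold CoarseC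
  exact mul_nonneg_entries (mul_nonneg_entries (agg_nonneg f) hP0)
    (disagg_nonneg f μ hf hμpos)

lemma colsum_agg (j : Fin N) : ∑ i, Agg f i j = 1 := by
  unfold Agg
  rw [Finset.sum_ite_eq Finset.univ (f j) (fun _ => (1:ℝ))]
  simp

lemma colsum_disagg (hf : Function.Surjective f) (hμpos : ∀ i, 0 < μ i) (i : Fin n) :
    ∑ j, Disagg f μ j i = 1 := by
  unfold Disagg
  have : ∀ j, (if f j = i then μ j / (Agg f).mulVec μ i else 0)
      = (if f j = i then μ j else 0) / (Agg f).mulVec μ i := by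
    intro j; split <;> simp
  rw [Finset.sum_congr rfl (fun j _ => this j), ← Finset.sum_div, ← aggVec_apply]
  exact div_self (ne_of_gt (aggVec_pos f μ hf hμpos i))

lemma colsum_mul {a b c : Type*} [Fintype a] [Fintype b]
    (M : Matrix a b ℝ) (O : Matrix b c ℝ) (j : c) :
    ∑ i, (M * O) i j = ∑ k, (∑ i, M i k) * O k j := by
  simp only [Matrix.mul_apply]
  rw [Finset.sum_comm]
  apply Finset.sum_congr rfl; intro k _
  rw [Finset.sum_mul]

lemma colsum_coarseC (hf : Function.Surjective f) (hμpos : ∀ i, 0 < μ i)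
    (hPcol : ∀ j, ∑ i, P i j = 1) (i' : Fin n) :
    ∑ i, CoarseC P f μ i i' = 1 := by
  unfold CoarseC
  rw [colsum_mul]
  have hAP : ∀ k, ∑ i, (Agg f * P) i k = 1 := by
    intro k
    rw [colsum_mul]
    have : ∀ j, (∑ i, Agg f i j) * P j k = P j k := by
      intro j; rw [colsum_agg]; ring
    rw [Finset.sum_congr rfl (fun j _ => this j)]
    exact hPcol k
  have : ∀ k, (∑ i, (Agg f * P) i k) * Disagg f μ k i' = Disagg f μ k i' := by
    intro k; rw [hAP]; ring
  rw [Finset.sum_congr rfl (fun k _ => this k)]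
  exact colsum_disagg f μ hf hμpos i'

lemma disagg_mulVec_agg (hf : Function.Surjective f) (hμpos : ∀ i, 0 < μ i) :
    (Disagg f μ).mulVec ((Agg f).mulVec μ) = μ := by
  funext j
  rw [Matrix.mulVec, dotProduct]
  rw [Finset.sum_eq_single (f j)]
  · unfold Disagg
    rw [if_pos rfl]
    exact div_mul_cancel₀ (μ j) (ne_of_gt (aggVec_pos f μ hf hμpos (f j)))
  · intro i _ hi
    unfold Disagg
    rw [if_neg (fun hh => hi hh.symm), zero_mul]
  · intro h; exact absurd (Finset.mem_univ _) h

lemma coarseC_fixed (hf : Function.Surjective f) (hμpos : ∀ i, 0 < μ i)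
    (hinv : P.mulVec μ = μ) :
    (CoarseC P f μ).mulVec ((Agg f).mulVec μ) = (Agg f).mulVec μ := by
  unfold CoarseC
  rw [← Matrix.mulVec_mulVec, ← Matrix.mulVec_mulVec,
    disagg_mulVec_agg f μ hf hμpos, hinv]

lemma coarseC_irred (hf : Function.Surjective f) (hμpos : ∀ i, 0 < μ i)
    (hP0 : ∀ i j, 0 ≤ P i j) (hirr : Irred P) :
    ∀ i i', ∃ k, 0 < k ∧ 0 < ((CoarseC P f μ) ^ k) i i' := by
  have hC0 := coarseC_nonneg P f μ hf hμpos hP0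
  have base : ∀ x y, 0 < P x y → 0 < CoarseC P f μ (f x) (f y) := by
    intro x y hxy
    have h1 : (1 : ℝ) * P x y ≤ (Agg f * P) (f x) y := by
      have := mul_apply_ge (agg_nonneg f) hP0 (f x) x y
      rwa [show Agg f (f x) x = 1 from if_pos rfl] at this
    have h2 : (Agg f * P) (f x) y * Disagg f μ y (f y) ≤ CoarseC P f μ (f x) (f y) := by
      unfold CoarseC
      exact mul_apply_ge (mul_nonneg_entries (agg_nonneg f) hP0)
        (disagg_nonneg f μ hf hμpos) (f x) y (f y)
    have hD : 0 < Disagg f μ y (f y) := by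
      unfold Disagg
      rw [if_pos rfl]
      exact div_pos (hμpos y) (aggVec_pos f μ hf hμpos (f y))
    have hAP : 0 < (Agg f * P) (f x) y := lt_of_lt_of_le (by linarith) h1
    exact lt_of_lt_of_le (mul_pos hAP hD) h2
  have step : ∀ k x y, 0 < (P ^ (k+1)) x y →
      0 < ((CoarseC P f μ) ^ (k+1)) (f x) (f y) := by
    intro k
    induction k with
    | zero => intro x y h; rw [pow_one] at *; exact base x y h
    | succ k ih =>
        intro x y h
        rw [pow_succ'] at h
        rw [Matrix.mul_apply] at h
        have hex : ∃ z, z ∈ Finset.univ ∧ P x z * (P ^ (k+1)) z y ≠ 0 := by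
          by_contra hall
          push_neg at hall
          have : ∑ z, P x z * (P ^ (k+1)) z y = 0 :=
            Finset.sum_eq_zero (fun z hz => hall z hz)
          rw [this] at h
          exact lt_irrefl 0 h
        obtain ⟨z, _, hz⟩ := hex
        have hPz : 0 < P x z := by
          rcases lt_or_eq_of_le (hP0 x z) with h' | h'
          · exact h'
          · exfalso; apply hz; rw [← h', zero_mul]
        have hPk : 0 < (P ^ (k+1)) z y := by
          rcases lt_or_eq_of_le (pow_nonneg_entries hP0 (k+1) z y) with h' | h'
          · exact h'
          · exfalso; apply hz; rw [← h', mul_zero]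
        have h1 := base x z hPz
        have h2 := ih z y hPk
        rw [pow_succ']
        have := mul_apply_ge hC0 (pow_nonneg_entries hC0 (k+1)) (f x) (f z) (f y)
        exact lt_of_lt_of_le (mul_pos h1 h2) this
  intro i i'
  obtain ⟨x, hx⟩ := hf i
  obtain ⟨y, hy⟩ := hf i'
  obtain ⟨k, hk, hne⟩ := hirr x y
  obtain ⟨k', rfl⟩ := Nat.exists_eq_succ_of_ne_zero (Nat.pos_iff_ne_zero.mp hk)
  have hPk : 0 < (P ^ (k'+1)) x y := by
    rcases lt_or_eq_of_le (pow_nonneg_entries hP0 (k'+1) x y) with h' | h'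
    · exact h'
    · exact absurd h'.symm hne
  exact ⟨k'+1, Nat.succ_pos _, hx ▸ hy ▸ step k' x y hPk⟩

end Aux5


section Aux6
variable {N n : ℕ} (P : Matrix (Fin N) (Fin N) ℝ) (f : Fin N → Fin n) (μ : Fin N → ℝ)

lemma sum_aggVec : ∑ i, (Agg f).mulVec μ i = ∑ j, μ j := by
  simp only [aggVec_apply]
  rw [Finset.sum_comm]
  apply Finset.sum_congr rfl; intro j _
  rw [Finset.sum_ite_eq Finset.univ (f j) (fun _ => μ j)]
  simp

lemma agg_vecMulVec :
    Agg f * vecMulVec μ (1 : Fin N → ℝ) =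
      vecMulVec ((Agg f).mulVec μ) (1 : Fin N → ℝ) := by
  ext i k
  rw [Matrix.mul_apply, vecMulVec_apply]
  simp only [vecMulVec_apply, Pi.one_apply, mul_one]
  rw [Matrix.mulVec, dotProduct]

lemma vecMulVec_disagg (hf : Function.Surjective f) (hμpos : ∀ i, 0 < μ i) :
    vecMulVec ((Agg f).mulVec μ) (1 : Fin N → ℝ) * Disagg f μ =
      vecMulVec ((Agg f).mulVec μ) (1 : Fin n → ℝ) := by
  ext i i'
  rw [Matrix.mul_apply, vecMulVec_apply]
  simp only [vecMulVec_apply, Pi.one_apply, mul_one]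
  rw [← Finset.mul_sum, colsum_disagg f μ hf hμpos i', mul_one]

lemma M_eq (hf : Function.Surjective f) (hμpos : ∀ i, 0 < μ i) :
    Agg f * (1 - P + vecMulVec μ 1) * Disagg f μ =
      1 - CoarseC P f μ + vecMulVec ((Agg f).mulVec μ) 1 := by
  rw [Matrix.mul_add, Matrix.mul_sub, Matrix.mul_one, agg_vecMulVec,
    Matrix.add_mul, Matrix.sub_mul, AD_eq_one f μ hf hμpos,
    vecMulVec_disagg f μ hf hμpos, CoarseC, Matrix.mul_assoc]

lemma Mdet_isUnit (hP : ColStoch P) (hirr : Irred P)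
    (hμpos : ∀ i, 0 < μ i) (hμsum : ∑ i, μ i = 1) (hinv : P.mulVec μ = μ)
    (hf : Function.Surjective f) :
    IsUnit (Agg f * (1 - P + vecMulVec μ 1) * Disagg f μ).det := by
  rw [isUnit_iff_ne_zero]
  intro hdet0
  obtain ⟨v, hv0, hker⟩ := (Matrix.exists_mulVec_eq_zero_iff).mpr hdet0
  rw [M_eq P f μ hf hμpos] at hker
  set ν' := (Agg f).mulVec μ with hν'
  have hνsum : ∑ i, ν' i = 1 := by rw [hν', sum_aggVec]; exact hμsum
  have hVv : (vecMulVec ν' (1 : Fin n → ℝ)).mulVec v = (∑ k, v k) • ν' := by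
    funext i
    rw [Matrix.mulVec, dotProduct]
    simp only [vecMulVec_apply, Pi.one_apply, mul_one, Pi.smul_apply, smul_eq_mul]
    rw [← Finset.mul_sum]
    ring
  rw [Matrix.add_mulVec, Matrix.sub_mulVec, Matrix.one_mulVec, hVv] at hker
  have hkerpt : ∀ i, v i - (CoarseC P f μ).mulVec v i + (∑ k, v k) * ν' i = 0 := by
    intro i
    have h := congrFun hker i
    simpa [Pi.add_apply, Pi.sub_apply, Pi.smul_apply, smul_eq_mul] using h
  have hCv : ∑ i, (CoarseC P f μ).mulVec v i = ∑ i, v i := by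
    simp only [Matrix.mulVec, dotProduct]
    rw [Finset.sum_comm]
    apply Finset.sum_congr rfl; intro l _
    rw [← Finset.sum_mul, colsum_coarseC P f μ hf hμpos hP.2 l, one_mul]
  have hsum0 : ∑ i, v i = 0 := by
    have h := Finset.sum_congr rfl (fun i (_ : i ∈ Finset.univ) => (hkerpt i))
    rw [Finset.sum_add_distrib, Finset.sum_sub_distrib, hCv, ← Finset.mul_sum, hνsum,
      Finset.sum_const, mul_one] at h
    simpa using h
  have hfix : (CoarseC P f μ).mulVec v = v := by
    funext i
    have := hkerpt i
    rw [hsum0, zero_mul, add_zero] at this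
    linarith
  have := PF_ker (coarseC_nonneg P f μ hf hμpos hP.1)
    (coarseC_irred P f μ hf hμpos hP.1 hirr)
    (aggVec_pos f μ hf hμpos) (coarseC_fixed P f μ hf hμpos hinv) hνsum hfix hsum0
  exact hv0 this

lemma hABS (hP : ColStoch P) (hirr : Irred P)
    (hμpos : ∀ i, 0 < μ i) (hμsum : ∑ i, μ i = 1) (hinv : P.mulVec μ = μ)
    (hf : Function.Surjective f) :
    Agg f * (1 - P + vecMulVec μ 1) * CoarseS P f μ μ =
      Agg f * (1 - P + vecMulVec μ 1) := by
  have hdet := Mdet_isUnit P f μ hP hirr hμpos hμsum hinv hf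
  calc Agg f * (1 - P + vecMulVec μ 1) * CoarseS P f μ μ
      = (Agg f * (1 - P + vecMulVec μ 1) * Disagg f μ) *
          (Agg f * (1 - P + vecMulVec μ 1) * Disagg f μ)⁻¹ *
          (Agg f * (1 - P + vecMulVec μ 1)) := by
        rw [CoarseS]; simp only [Matrix.mul_assoc]
    _ = (1 : Matrix (Fin n) (Fin n) ℝ) * (Agg f * (1 - P + vecMulVec μ 1)) := by
        rw [Matrix.mul_nonsing_inv _ hdet]
    _ = Agg f * (1 - P + vecMulVec μ 1) := Matrix.one_mul _

lemma hSPi (hP : ColStoch P) (hirr : Irred P)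
    (hμpos : ∀ i, 0 < μ i) (hμsum : ∑ i, μ i = 1) (hinv : P.mulVec μ = μ)
    (hf : Function.Surjective f) : CoarseS P f μ μ * PiProj f μ = PiProj f μ := by
  have hdet := Mdet_isUnit P f μ hP hirr hμpos hμsum hinv hf
  have h2 : (Agg f * (1 - P + vecMulVec μ 1) * Disagg f μ)⁻¹ *
      (Agg f * (1 - P + vecMulVec μ 1) * Disagg f μ) = 1 := Matrix.nonsing_inv_mul _ hdet
  calc CoarseS P f μ μ * PiProj f μ
      = Disagg f μ * ((Agg f * (1 - P + vecMulVec μ 1) * Disagg f μ)⁻¹ *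
          (Agg f * (1 - P + vecMulVec μ 1) * Disagg f μ) * Agg f) := by
        rw [CoarseS, PiProj]; simp only [Matrix.mul_assoc]
    _ = Disagg f μ * ((1 : Matrix (Fin n) (Fin n) ℝ) * Agg f) := by rw [h2]
    _ = PiProj f μ := by rw [Matrix.one_mul, PiProj]

lemma hJQ (hP : ColStoch P) (hirr : Irred P)
    (hμpos : ∀ i, 0 < μ i) (hμsum : ∑ i, μ i = 1) (hinv : P.mulVec μ = μ)
    (hf : Function.Surjective f) : Jop P f μ μ * (1 - PiProj f μ) = Jop P f μ μ := by
  have h1 := hSPi P f μ hP hirr hμpos hμsum hinv hf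
  have h2 : Jop P f μ μ * PiProj f μ = 0 := by
    rw [Jop, Matrix.mul_assoc, Matrix.sub_mul, Matrix.one_mul, h1, sub_self,
      Matrix.mul_zero]
  rw [Matrix.mul_sub, Matrix.mul_one, h2, sub_zero]

lemma hAS (hμpos : ∀ i, 0 < μ i) (hf : Function.Surjective f) :
    Agg f * CoarseS P f μ μ =
      (Agg f * (1 - P + vecMulVec μ 1) * Disagg f μ)⁻¹ *
        (Agg f * (1 - P + vecMulVec μ 1)) := by
  calc Agg f * CoarseS P f μ μ
      = (Agg f * Disagg f μ) * ((Agg f * (1 - P + vecMulVec μ 1) * Disagg f μ)⁻¹ *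
          (Agg f * (1 - P + vecMulVec μ 1))) := by
        rw [CoarseS]; simp only [Matrix.mul_assoc]
    _ = _ := by rw [AD_eq_one f μ hf hμpos, Matrix.one_mul]

lemma hAhat :
    Agg f * hatP P μ = Agg f - Agg f * (1 - P + vecMulVec μ 1) := by
  rw [hatP, Matrix.mul_sub, Matrix.mul_add, Matrix.mul_sub, Matrix.mul_one]
  abel

lemma hPiJ (hP : ColStoch P) (hirr : Irred P)
    (hμpos : ∀ i, 0 < μ i) (hμsum : ∑ i, μ i = 1) (hinv : P.mulVec μ = μ)
    (hf : Function.Surjective f) : PiProj f μ * Jop P f μ μ = PiProj f μ - CoarseS P f μ μ := by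
  have e1 : Agg f * (1 - P + vecMulVec μ 1) * (1 - CoarseS P f μ μ) = 0 := by
    rw [Matrix.mul_sub, Matrix.mul_one, hABS P f μ hP hirr hμpos hμsum hinv hf, sub_self]
  have e2 : Agg f * (1 - CoarseS P f μ μ) =
      Agg f - (Agg f * (1 - P + vecMulVec μ 1) * Disagg f μ)⁻¹ *
        (Agg f * (1 - P + vecMulVec μ 1)) := by
    rw [Matrix.mul_sub, Matrix.mul_one, hAS P f μ hμpos hf]
  calc PiProj f μ * Jop P f μ μ
      = Disagg f μ * (Agg f * hatP P μ * (1 - CoarseS P f μ μ)) := by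
        rw [PiProj, Jop]; simp only [Matrix.mul_assoc]
    _ = Disagg f μ * ((Agg f - Agg f * (1 - P + vecMulVec μ 1)) * (1 - CoarseS P f μ μ)) := by
        rw [hAhat]
    _ = Disagg f μ * (Agg f * (1 - CoarseS P f μ μ)) -
          Disagg f μ * (Agg f * (1 - P + vecMulVec μ 1) * (1 - CoarseS P f μ μ)) := by
        rw [Matrix.sub_mul, Matrix.mul_sub]
    _ = Disagg f μ * (Agg f - (Agg f * (1 - P + vecMulVec μ 1) * Disagg f μ)⁻¹ *
          (Agg f * (1 - P + vecMulVec μ 1))) - Disagg f μ * (0 : Matrix (Fin n) (Fin N) ℝ) := by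
        rw [e1, e2]
    _ = Disagg f μ * Agg f - Disagg f μ *
          ((Agg f * (1 - P + vecMulVec μ 1) * Disagg f μ)⁻¹ *
            (Agg f * (1 - P + vecMulVec μ 1))) := by
        rw [Matrix.mul_zero, sub_zero, Matrix.mul_sub]
    _ = PiProj f μ - CoarseS P f μ μ := by
        rw [PiProj, CoarseS]; simp only [Matrix.mul_assoc]

end Aux6


section Aux7
variable {m : Type*} [Fintype m]

lemma innerW_sub_right (w x y z : m → ℝ) :
    innerW w x (y - z) = innerW w x y - innerW w x z := by
  unfold innerW
  rw [← Finset.sum_sub_distrib]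
  apply Finset.sum_congr rfl; intro i _
  simp only [Pi.sub_apply]; ring

lemma innerW_sub_left (w x y z : m → ℝ) :
    innerW w (x - y) z = innerW w x z - innerW w y z := by
  unfold innerW
  rw [← Finset.sum_sub_distrib]
  apply Finset.sum_congr rfl; intro i _
  simp only [Pi.sub_apply]; ring

end Aux7

/-- `⟨·,·⟩_ε` is an inner product and
`‖J(μ)‖_ε ≤ √(‖(I-Π(μ))J(μ)‖²_{1/μ} + ε ‖Π(μ)-S(μ)‖²_{1/μ})`. -/
theorem stmt13 {N n : ℕ} (P : Matrix (Fin N) (Fin N) ℝ)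
    (μ : Fin N → ℝ) (hP : ColStoch P) (hirr : Irred P)
    (hμpos : ∀ i, 0 < μ i) (hμsum : ∑ i, μ i = 1) (hinv : P.mulVec μ = μ)
    (f : Fin N → Fin n) (hf : Function.Surjective f)
    (ε : ℝ) (hε : 0 < ε) :
    (∀ x y, innerEps f μ ε x y = innerEps f μ ε y x) ∧
      (∀ x y z, innerEps f μ ε (x + y) z = innerEps f μ ε x z + innerEps f μ ε y z) ∧
      (∀ (c : ℝ) (x y : Fin N → ℝ), innerEps f μ ε (c • x) y = c * innerEps f μ ε x y) ∧
      (∀ x : Fin N → ℝ, x ≠ 0 → 0 < innerEps f μ ε x x) ∧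
      opNormEps f μ ε (Jop P f μ μ) ≤
        Real.sqrt (opNormW (fun i => (μ i)⁻¹) ((1 - PiProj f μ) * Jop P f μ μ) ^ 2 +
          ε * opNormW (fun i => (μ i)⁻¹) (PiProj f μ - CoarseS P f μ μ) ^ 2) := by
  have hw : ∀ i, 0 < (μ i)⁻¹ := fun i => inv_pos.mpr (hμpos i)
  have hQy : ∀ y : Fin N → ℝ, (1 - PiProj f μ).mulVec y = y - (PiProj f μ).mulVec y :=
    fun y => by rw [Matrix.sub_mulVec, Matrix.one_mulVec]
  have hsym := innerW_pi_symm f μ hμpos hf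
  have hidem : ∀ x : Fin N → ℝ,
      (PiProj f μ).mulVec ((PiProj f μ).mulVec x) = (PiProj f μ).mulVec x := by
    intro x; rw [Matrix.mulVec_mulVec, piProj_idem f μ hf hμpos]
  have hpix : ∀ x : Fin N → ℝ, innerW (fun i => (μ i)⁻¹) x ((PiProj f μ).mulVec x)
      = innerW (fun i => (μ i)⁻¹) ((PiProj f μ).mulVec x) ((PiProj f μ).mulVec x) := by
    intro x
    conv_lhs => rw [← hidem x]
    rw [hsym x ((PiProj f μ).mulVec x)]
  have hself : ∀ x : Fin N → ℝ, innerEps f μ ε x x =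
      innerW (fun i => (μ i)⁻¹) ((1 - PiProj f μ).mulVec x) ((1 - PiProj f μ).mulVec x)
        + ε * innerW (fun i => (μ i)⁻¹) ((PiProj f μ).mulVec x) ((PiProj f μ).mulVec x) := by
    intro x
    unfold innerEps
    have key : innerW (fun i => (μ i)⁻¹) (x - (PiProj f μ).mulVec x)
        (x - (PiProj f μ).mulVec x)
        = innerW (fun i => (μ i)⁻¹) x x
          - innerW (fun i => (μ i)⁻¹) ((PiProj f μ).mulVec x) ((PiProj f μ).mulVec x) := by
      rw [innerW_sub_left, innerW_sub_right, innerW_sub_right]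
      have h2 : innerW (fun i => (μ i)⁻¹) ((PiProj f μ).mulVec x) x
          = innerW (fun i => (μ i)⁻¹) ((PiProj f μ).mulVec x) ((PiProj f μ).mulVec x) := by
        rw [innerW_comm]; exact hpix x
      rw [hpix x, h2]; ring
    rw [hQy, innerW_sub_right, hpix x, key]
  refine ⟨?_, ?_, ?_, ?_, ?_⟩
  · intro x y
    unfold innerEps
    rw [hQy, hQy, innerW_sub_right, innerW_sub_right, innerW_comm _ x y, hsym x y,
      innerW_comm _ ((PiProj f μ).mulVec x) y]
  · intro x y z
    unfold innerEps
    rw [innerW_add_left, innerW_add_left]; ring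
  · intro c x y
    unfold innerEps
    rw [innerW_smul_left, innerW_smul_left]; ring
  · intro x hx
    have hnn1 := innerW_self_nonneg hw ((1 - PiProj f μ).mulVec x)
    have hnn2 := innerW_self_nonneg hw ((PiProj f μ).mulVec x)
    have hge : 0 ≤ innerEps f μ ε x x := by
      rw [hself x]; nlinarith
    rcases lt_or_eq_of_le hge with h | h
    · exact h
    · exfalso
      apply hx
      have h0 : innerW (fun i => (μ i)⁻¹) ((1 - PiProj f μ).mulVec x)
          ((1 - PiProj f μ).mulVec x)
          + ε * innerW (fun i => (μ i)⁻¹) ((PiProj f μ).mulVec x) ((PiProj f μ).mulVec x)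
          = 0 := by rw [← hself x, ← h]
      have hz1 : innerW (fun i => (μ i)⁻¹) ((1 - PiProj f μ).mulVec x)
          ((1 - PiProj f μ).mulVec x) = 0 := by nlinarith
      have hz2 : innerW (fun i => (μ i)⁻¹) ((PiProj f μ).mulVec x)
          ((PiProj f μ).mulVec x) = 0 := by nlinarith
      have e1 : (1 - PiProj f μ).mulVec x = 0 := innerW_self_eq_zero hw hz1
      have e2 : (PiProj f μ).mulVec x = 0 := innerW_self_eq_zero hw hz2
      rw [hQy, e2, sub_zero] at e1
      exact e1
  · have hJQ' := hJQ P f μ hP hirr hμpos hμsum hinv hf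
    have hPiJ' := hPiJ P f μ hP hirr hμpos hμsum hinv hf
    have ha0 : 0 ≤ opNormW (fun i => (μ i)⁻¹) ((1 - PiProj f μ) * Jop P f μ μ) :=
      opNormW_nonneg hw _
    have hb0 : 0 ≤ opNormW (fun i => (μ i)⁻¹) (PiProj f μ - CoarseS P f μ μ) :=
      opNormW_nonneg hw _
    have hR0 : 0 ≤ opNormW (fun i => (μ i)⁻¹) ((1 - PiProj f μ) * Jop P f μ μ) ^ 2
        + ε * opNormW (fun i => (μ i)⁻¹) (PiProj f μ - CoarseS P f μ μ) ^ 2 := by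
      positivity
    rw [opNormEps]
    apply csInf_le ⟨0, fun c hc => hc.1⟩
    refine ⟨Real.sqrt_nonneg _, fun x => ?_⟩
    unfold normEps
    rw [← Real.sqrt_mul hR0]
    apply Real.sqrt_le_sqrt
    have hJx : (Jop P f μ μ).mulVec x
        = (Jop P f μ μ).mulVec ((1 - PiProj f μ).mulVec x) := by
      rw [Matrix.mulVec_mulVec, hJQ']
    have huu : innerW (fun i => (μ i)⁻¹) ((1 - PiProj f μ).mulVec x)
        ((1 - PiProj f μ).mulVec x) ≤ innerEps f μ ε x x := by
      rw [hself x]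
      have := innerW_self_nonneg hw ((PiProj f μ).mulVec x)
      nlinarith
    rw [hself, hJx]
    have t1 : (1 - PiProj f μ).mulVec ((Jop P f μ μ).mulVec ((1 - PiProj f μ).mulVec x))
        = ((1 - PiProj f μ) * Jop P f μ μ).mulVec ((1 - PiProj f μ).mulVec x) :=
      Matrix.mulVec_mulVec _ _ _
    have t2 : (PiProj f μ).mulVec ((Jop P f μ μ).mulVec ((1 - PiProj f μ).mulVec x))
        = (PiProj f μ - CoarseS P f μ μ).mulVec ((1 - PiProj f μ).mulVec x) := by
      rw [Matrix.mulVec_mulVec, hPiJ']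
    rw [t1, t2]
    set u := (1 - PiProj f μ).mulVec x with hu
    set a := opNormW (fun i => (μ i)⁻¹) ((1 - PiProj f μ) * Jop P f μ μ) with hadef
    set b := opNormW (fun i => (μ i)⁻¹) (PiProj f μ - CoarseS P f μ μ) with hbdef
    have e1 : innerW (fun i => (μ i)⁻¹) (((1 - PiProj f μ) * Jop P f μ μ).mulVec u)
        (((1 - PiProj f μ) * Jop P f μ μ).mulVec u)
        ≤ a ^ 2 * innerW (fun i => (μ i)⁻¹) u u := by
      have hbd := opNormW_bound hw ((1 - PiProj f μ) * Jop P f μ μ) u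
      calc innerW (fun i => (μ i)⁻¹) (((1 - PiProj f μ) * Jop P f μ μ).mulVec u)
            (((1 - PiProj f μ) * Jop P f μ μ).mulVec u)
          = normW (fun i => (μ i)⁻¹) (((1 - PiProj f μ) * Jop P f μ μ).mulVec u) ^ 2 :=
            (normW_sq hw _).symm
        _ ≤ (a * normW (fun i => (μ i)⁻¹) u) ^ 2 := by
            apply pow_le_pow_left₀ (normW_nonneg _ _) hbd
        _ = a ^ 2 * normW (fun i => (μ i)⁻¹) u ^ 2 := by ring
        _ = a ^ 2 * innerW (fun i => (μ i)⁻¹) u u := by rw [normW_sq hw]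
    have e2 : innerW (fun i => (μ i)⁻¹) ((PiProj f μ - CoarseS P f μ μ).mulVec u)
        ((PiProj f μ - CoarseS P f μ μ).mulVec u)
        ≤ b ^ 2 * innerW (fun i => (μ i)⁻¹) u u := by
      have hbd := opNormW_bound hw (PiProj f μ - CoarseS P f μ μ) u
      calc innerW (fun i => (μ i)⁻¹) ((PiProj f μ - CoarseS P f μ μ).mulVec u)
            ((PiProj f μ - CoarseS P f μ μ).mulVec u)
          = normW (fun i => (μ i)⁻¹) ((PiProj f μ - CoarseS P f μ μ).mulVec u) ^ 2 :=
            (normW_sq hw _).symm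
        _ ≤ (b * normW (fun i => (μ i)⁻¹) u) ^ 2 := by
            apply pow_le_pow_left₀ (normW_nonneg _ _) hbd
        _ = b ^ 2 * normW (fun i => (μ i)⁻¹) u ^ 2 := by ring
        _ = b ^ 2 * innerW (fun i => (μ i)⁻¹) u u := by rw [normW_sq hw]
    calc innerW (fun i => (μ i)⁻¹) (((1 - PiProj f μ) * Jop P f μ μ).mulVec u)
          (((1 - PiProj f μ) * Jop P f μ μ).mulVec u)
        + ε * innerW (fun i => (μ i)⁻¹) ((PiProj f μ - CoarseS P f μ μ).mulVec u)
          ((PiProj f μ - CoarseS P f μ μ).mulVec u)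
        ≤ a ^ 2 * innerW (fun i => (μ i)⁻¹) u u
          + ε * (b ^ 2 * innerW (fun i => (μ i)⁻¹) u u) :=
          add_le_add e1 (mul_le_mul_of_nonneg_left e2 hε.le)
      _ = (a ^ 2 + ε * b ^ 2) * innerW (fun i => (μ i)⁻¹) u u := by ring
      _ ≤ (a ^ 2 + ε * b ^ 2) * innerEps f μ ε x x :=
          mul_le_mul_of_nonneg_left huu hR0
end

section
/- Assume P and PᵀP are irreducible and at least one coarse state contains more than one fine state. Then ‖(I − Π(μ)) J(μ)‖²_{1/μ} = 1 − inf_{z ∈ rg(I−S(μ)), z≠0} ⟨z, (I − P̂*P̂) z⟩_{1/μ} / ‖(I − Π(μ)) z‖²_{1/μ}, and this quantity is strictly less than 1. -/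
open Matrix BigOperators

section Aux14
open Finset

variable {N n : ℕ}

namespace Aux14

/-! ### Basic weighted inner product lemmas -/

lemma innerW_comm {m : Type*} [Fintype m] (w x y : m → ℝ) : innerW w x y = innerW w y x :=
  Finset.sum_congr rfl fun i _ => by ring

lemma innerW_self_nonneg {m : Type*} [Fintype m] {w : m → ℝ} (hw : ∀ i, 0 ≤ w i)
    (x : m → ℝ) : 0 ≤ innerW w x x :=
  Finset.sum_nonneg fun i _ => mul_nonneg (mul_self_nonneg _) (hw i)

lemma innerW_self_pos {m : Type*} [Fintype m] {w : m → ℝ} (hw : ∀ i, 0 < w i)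
    {x : m → ℝ} (hx : x ≠ 0) : 0 < innerW w x x := by
  obtain ⟨i, hi⟩ : ∃ i, x i ≠ 0 := by
    by_contra h; push_neg at h; exact hx (funext fun i => h i)
  refine Finset.sum_pos' (fun j _ => mul_nonneg (mul_self_nonneg _) (hw j).le) ⟨i, Finset.mem_univ i, ?_⟩
  exact mul_pos (mul_self_pos.mpr hi) (hw i)

lemma normW_sq {m : Type*} [Fintype m] {w : m → ℝ} (hw : ∀ i, 0 ≤ w i) (x : m → ℝ) :
    normW w x ^ 2 = innerW w x x := Real.sq_sqrt (innerW_self_nonneg hw x)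

lemma normW_nonneg {m : Type*} [Fintype m] (w x : m → ℝ) : 0 ≤ normW w x :=
  Real.sqrt_nonneg _

lemma innerW_sub_right {m : Type*} [Fintype m] (w x y z : m → ℝ) :
    innerW w x (y - z) = innerW w x y - innerW w x z := by
  simp only [innerW]
  rw [← Finset.sum_sub_distrib]; exact Finset.sum_congr rfl fun i _ => by simp only [Pi.sub_apply]; ring

lemma innerW_add_right {m : Type*} [Fintype m] (w x y z : m → ℝ) :
    innerW w x (y + z) = innerW w x y + innerW w x z := by
  simp only [innerW]
  rw [← Finset.sum_add_distrib]; exact Finset.sum_congr rfl fun i _ => by simp only [Pi.add_apply]; ring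

lemma innerW_sub_left {m : Type*} [Fintype m] (w x y z : m → ℝ) :
    innerW w (x - y) z = innerW w x z - innerW w y z := by
  rw [innerW_comm w (x - y) z, innerW_sub_right, innerW_comm w z x, innerW_comm w z y]

lemma innerW_smul_smul {m : Type*} [Fintype m] (w : m → ℝ) (c : ℝ) (x y : m → ℝ) :
    innerW w (c • x) (c • y) = c ^ 2 * innerW w x y := by
  simp only [innerW]
  rw [Finset.mul_sum]; exact Finset.sum_congr rfl fun i _ => by
    simp [Pi.smul_apply, smul_eq_mul]; ring

/-! ### Adjoint -/

lemma adjW_apply (μ : Fin N → ℝ) (M : Matrix (Fin N) (Fin N) ℝ) (j i : Fin N) :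
    adjW μ M j i = μ j * M i j * (μ i)⁻¹ := by
  simp [adjW, Matrix.mul_diagonal, Matrix.diagonal_mul, Matrix.transpose_apply]

lemma innerW_adjW (μ : Fin N → ℝ) (hμ : ∀ i, 0 < μ i) (M : Matrix (Fin N) (Fin N) ℝ)
    (x y : Fin N → ℝ) :
    innerW (fun i => (μ i)⁻¹) (M.mulVec x) y
      = innerW (fun i => (μ i)⁻¹) x ((adjW μ M).mulVec y) := by
  simp only [innerW, Matrix.mulVec, dotProduct, adjW_apply]
  simp only [Finset.sum_mul, Finset.mul_sum]
  rw [Finset.sum_comm]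
  refine Finset.sum_congr rfl fun j _ => Finset.sum_congr rfl fun i _ => ?_
  have h1 := (hμ j).ne'
  have h2 := (hμ i).ne'
  field_simp

lemma innerW_adjW_mul (μ : Fin N → ℝ) (hμ : ∀ i, 0 < μ i) (M : Matrix (Fin N) (Fin N) ℝ)
    (z : Fin N → ℝ) :
    innerW (fun i => (μ i)⁻¹) z ((adjW μ M * M).mulVec z)
      = innerW (fun i => (μ i)⁻¹) (M.mulVec z) (M.mulVec z) := by
  rw [← Matrix.mulVec_mulVec, ← innerW_adjW μ hμ]

/-! ### Aggregation / disaggregation -/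

lemma Agg_mulVec (f : Fin N → Fin n) (v : Fin N → ℝ) (i : Fin n) :
    (Agg f).mulVec v i = ∑ j, if f j = i then v j else 0 := by
  simp [Agg, Matrix.mulVec, dotProduct, ite_mul]

lemma fiber_sum (f : Fin N → Fin n) (g : Fin n → ℝ) (y : Fin N → ℝ) :
    ∑ j, g (f j) * y j = ∑ i, g i * (Agg f).mulVec y i := by
  simp only [Agg_mulVec, Finset.mul_sum, mul_ite, mul_zero]
  rw [Finset.sum_comm]
  exact Finset.sum_congr rfl fun j _ => by
    rw [Finset.sum_ite_eq univ (f j) (fun i => g i * y j)]; simp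

lemma aggMu_pos (f : Fin N → Fin n) (hf : Function.Surjective f) (μ : Fin N → ℝ)
    (hμpos : ∀ i, 0 < μ i) (i : Fin n) : 0 < (Agg f).mulVec μ i := by
  obtain ⟨j, hj⟩ := hf i
  rw [Agg_mulVec]
  refine Finset.sum_pos' (fun l _ => by by_cases h : f l = i <;> simp [h, (hμpos l).le]) ?_
  exact ⟨j, Finset.mem_univ j, by rw [if_pos hj]; exact hμpos j⟩

lemma Disagg_mulVec (f : Fin N → Fin n) (μ : Fin N → ℝ) (u : Fin n → ℝ) (j : Fin N) :
    (Disagg f μ).mulVec u j = μ j / (Agg f).mulVec μ (f j) * u (f j) := by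
  rw [Matrix.mulVec, dotProduct]
  rw [Finset.sum_congr rfl (fun i _ => show Disagg f μ j i * u i
      = if f j = i then μ j / (Agg f).mulVec μ i * u i else 0 from by
        by_cases h : f j = i <;> simp [Disagg, h])]
  rw [Finset.sum_ite_eq univ (f j) (fun i => μ j / (Agg f).mulVec μ i * u i)]
  simp

lemma hAD (f : Fin N → Fin n) (hf : Function.Surjective f) (μ : Fin N → ℝ)
    (hμpos : ∀ i, 0 < μ i) : Agg f * Disagg f μ = 1 := by
  ext i i'
  rw [Matrix.mul_apply, Matrix.one_apply]
  by_cases h : i = i'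
  · subst h
    rw [if_pos rfl]
    rw [Finset.sum_congr rfl (fun j _ => show Agg f i j * Disagg f μ j i
        = (if f j = i then μ j else 0) / (Agg f).mulVec μ i from by
      by_cases hj : f j = i <;> simp [Agg, Disagg, hj])]
    rw [← Finset.sum_div, ← Agg_mulVec]
    exact div_self (aggMu_pos f hf μ hμpos i).ne'
  · rw [if_neg h]
    refine Finset.sum_eq_zero fun j _ => ?_
    by_cases hj : f j = i
    · by_cases hj' : f j = i'
      · exact absurd (hj.symm.trans hj') h
      · simp [Disagg, hj']
    · simp [Agg, hj]

lemma hDcol (f : Fin N → Fin n) (hf : Function.Surjective f) (μ : Fin N → ℝ)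
    (hμpos : ∀ i, 0 < μ i) (i : Fin n) : ∑ j, Disagg f μ j i = 1 := by
  rw [Finset.sum_congr rfl (fun j _ => show Disagg f μ j i
      = (if f j = i then μ j else 0) / (Agg f).mulVec μ i from by
    by_cases hj : f j = i <;> simp [Disagg, hj])]
  rw [← Finset.sum_div, ← Agg_mulVec]
  exact div_self (aggMu_pos f hf μ hμpos i).ne'
/-! ### The orthogonal projection Π -/

lemma PiProj_mulVec (f : Fin N → Fin n) (μ : Fin N → ℝ) (x : Fin N → ℝ) (j : Fin N) :
    (PiProj f μ).mulVec x j
      = μ j / (Agg f).mulVec μ (f j) * (Agg f).mulVec x (f j) := by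
  rw [PiProj, ← Matrix.mulVec_mulVec, Disagg_mulVec]

lemma innerW_Pi (f : Fin N → Fin n) (μ : Fin N → ℝ) (hμpos : ∀ i, 0 < μ i)
    (x y : Fin N → ℝ) :
    innerW (fun i => (μ i)⁻¹) ((PiProj f μ).mulVec x) y
      = ∑ i, ((Agg f).mulVec x i / (Agg f).mulVec μ i) * (Agg f).mulVec y i := by
  rw [innerW]
  rw [Finset.sum_congr rfl (fun j _ => show (PiProj f μ).mulVec x j * y j * (μ j)⁻¹
      = ((Agg f).mulVec x (f j) / (Agg f).mulVec μ (f j)) * y j from by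
    rw [PiProj_mulVec]
    rw [show μ j / (Agg f).mulVec μ (f j) * (Agg f).mulVec x (f j) * y j * (μ j)⁻¹
        = (μ j * (μ j)⁻¹) * ((Agg f).mulVec x (f j) / (Agg f).mulVec μ (f j) * y j) from by
      ring]
    rw [mul_inv_cancel₀ (hμpos j).ne', one_mul])]
  exact fiber_sum f (fun i => (Agg f).mulVec x i / (Agg f).mulVec μ i) y

lemma innerW_Pi_symm (f : Fin N → Fin n) (μ : Fin N → ℝ) (hμpos : ∀ i, 0 < μ i)
    (x y : Fin N → ℝ) :
    innerW (fun i => (μ i)⁻¹) ((PiProj f μ).mulVec x) y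
      = innerW (fun i => (μ i)⁻¹) x ((PiProj f μ).mulVec y) := by
  rw [innerW_Pi f μ hμpos, innerW_comm, innerW_Pi f μ hμpos]
  exact Finset.sum_congr rfl fun i _ => by ring

lemma hPiPi (f : Fin N → Fin n) (hf : Function.Surjective f) (μ : Fin N → ℝ)
    (hμpos : ∀ i, 0 < μ i) : PiProj f μ * PiProj f μ = PiProj f μ := by
  rw [PiProj, Matrix.mul_assoc, ← Matrix.mul_assoc (Agg f), hAD f hf μ hμpos,
    Matrix.one_mul]

lemma pyth (f : Fin N → Fin n) (hf : Function.Surjective f) (μ : Fin N → ℝ)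
    (hμpos : ∀ i, 0 < μ i) (x : Fin N → ℝ) :
    innerW (fun i => (μ i)⁻¹) x x
      = innerW (fun i => (μ i)⁻¹) ((PiProj f μ).mulVec x) ((PiProj f μ).mulVec x)
        + innerW (fun i => (μ i)⁻¹) (((1 : Matrix (Fin N) (Fin N) ℝ) - PiProj f μ).mulVec x)
            (((1 : Matrix (Fin N) (Fin N) ℝ) - PiProj f μ).mulVec x) := by
  have h1 : ((1 : Matrix (Fin N) (Fin N) ℝ) - PiProj f μ).mulVec x
      = x - (PiProj f μ).mulVec x := by
    rw [Matrix.sub_mulVec, Matrix.one_mulVec]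
  have h2 : innerW (fun i => (μ i)⁻¹) ((PiProj f μ).mulVec x) ((PiProj f μ).mulVec x)
      = innerW (fun i => (μ i)⁻¹) x ((PiProj f μ).mulVec x) := by
    rw [innerW_Pi_symm f μ hμpos, Matrix.mulVec_mulVec, hPiPi f hf μ hμpos]
  have h3 : innerW (fun i => (μ i)⁻¹) (x - (PiProj f μ).mulVec x) (x - (PiProj f μ).mulVec x)
      = innerW (fun i => (μ i)⁻¹) x x
        - 2 * innerW (fun i => (μ i)⁻¹) x ((PiProj f μ).mulVec x)
        + innerW (fun i => (μ i)⁻¹) ((PiProj f μ).mulVec x) ((PiProj f μ).mulVec x) := by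
    rw [innerW_sub_right, innerW_sub_left, innerW_sub_left,
      innerW_comm _ ((PiProj f μ).mulVec x) x]
    ring
  rw [h1, h3, h2]
  ring

lemma innerW_Pi_le (f : Fin N → Fin n) (hf : Function.Surjective f) (μ : Fin N → ℝ)
    (hμpos : ∀ i, 0 < μ i) (x : Fin N → ℝ) :
    innerW (fun i => (μ i)⁻¹) (((1 : Matrix (Fin N) (Fin N) ℝ) - PiProj f μ).mulVec x)
        (((1 : Matrix (Fin N) (Fin N) ℝ) - PiProj f μ).mulVec x)
      ≤ innerW (fun i => (μ i)⁻¹) x x := by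
  have h := pyth f hf μ hμpos x
  have h2 := innerW_self_nonneg (w := fun i => (μ i)⁻¹) (fun i => (inv_nonneg).2 (hμpos i).le)
    ((PiProj f μ).mulVec x)
  linarith
/-! ### Nonnegative matrices and Perron–Frobenius arguments -/

lemma mul_entry_nonneg {m : ℕ} {M M' : Matrix (Fin m) (Fin m) ℝ}
    (hM : ∀ i j, 0 ≤ M i j) (hM' : ∀ i j, 0 ≤ M' i j) : ∀ i j, 0 ≤ (M * M') i j := by
  intro i j
  rw [Matrix.mul_apply]
  exact Finset.sum_nonneg fun l _ => mul_nonneg (hM i l) (hM' l j)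

lemma pow_entry_nonneg {m : ℕ} {M : Matrix (Fin m) (Fin m) ℝ}
    (hM : ∀ i j, 0 ≤ M i j) : ∀ (k : ℕ) i j, 0 ≤ (M ^ k) i j := by
  intro k
  induction k with
  | zero => intro i j; rw [pow_zero]; by_cases h : i = j <;> simp [Matrix.one_apply, h]
  | succ k ih => rw [pow_succ]; exact mul_entry_nonneg ih hM

lemma mul_ne_zero_exists {m : ℕ} {M M' : Matrix (Fin m) (Fin m) ℝ} {i j : Fin m}
    (h : (M * M') i j ≠ 0) : ∃ l, M i l ≠ 0 ∧ M' l j ≠ 0 := by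
  rw [Matrix.mul_apply] at h
  obtain ⟨l, _, hl⟩ := Finset.exists_ne_zero_of_sum_ne_zero h
  exact ⟨l, mul_ne_zero_iff.1 hl⟩

lemma mul_entry_pos {m : ℕ} {M M' : Matrix (Fin m) (Fin m) ℝ}
    (hM : ∀ i j, 0 ≤ M i j) (hM' : ∀ i j, 0 ≤ M' i j) {i l j : Fin m}
    (h1 : 0 < M i l) (h2 : 0 < M' l j) : 0 < (M * M') i j := by
  rw [Matrix.mul_apply]
  have h3 := Finset.single_le_sum (f := fun l' => M i l' * M' l' j)
    (fun l' _ => mul_nonneg (hM i l') (hM' l' j)) (Finset.mem_univ l)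
  have h4 : 0 < M i l * M' l j := mul_pos h1 h2
  exact lt_of_lt_of_le h4 h3

lemma rel_of_pow {m : ℕ} {M : Matrix (Fin m) (Fin m) ℝ} {a : Fin m → ℝ}
    (h : ∀ i j, M i j ≠ 0 → a i = a j) :
    ∀ (k : ℕ) i j, (M ^ k) i j ≠ 0 → a i = a j := by
  intro k
  induction k with
  | zero =>
      intro i j hij
      rw [pow_zero] at hij
      by_cases hh : i = j
      · rw [hh]
      · exact absurd (Matrix.one_apply_ne hh) hij
  | succ k ih =>
      intro i j hij
      rw [pow_succ'] at hij
      obtain ⟨l, h1, h2⟩ := mul_ne_zero_exists hij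
      exact (h i l h1).trans (ih l j h2)

lemma irred_transfer {m : ℕ} {M M' : Matrix (Fin m) (Fin m) ℝ}
    (hM : ∀ i j, 0 ≤ M i j) (hM' : ∀ i j, 0 ≤ M' i j)
    (hsupp : ∀ i j, M i j ≠ 0 → M' i j ≠ 0) (h : Irred M) : Irred M' := by
  have key : ∀ (k : ℕ) i j, (M ^ k) i j ≠ 0 → (M' ^ k) i j ≠ 0 := by
    intro k
    induction k with
    | zero => intro i j; rw [pow_zero, pow_zero]; exact id
    | succ k ih =>
        intro i j hij
        rw [pow_succ'] at hij ⊢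
        obtain ⟨l, h1, h2⟩ := mul_ne_zero_exists hij
        have p1 : 0 < M' i l := lt_of_le_of_ne (hM' i l) (Ne.symm (hsupp i l h1))
        have p2 : 0 < (M' ^ k) l j := lt_of_le_of_ne (pow_entry_nonneg hM' k l j)
          (Ne.symm (ih l j h2))
        exact (mul_entry_pos hM' (pow_entry_nonneg hM' k) p1 p2).ne'
  intro i j
  obtain ⟨k, hk, hkij⟩ := h i j
  exact ⟨k, hk, key k i j hkij⟩

lemma pow_mulVec_fixed {m : ℕ} {M : Matrix (Fin m) (Fin m) ℝ} {z : Fin m → ℝ}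
    (h : M.mulVec z = z) : ∀ k : ℕ, (M ^ k).mulVec z = z := by
  intro k
  induction k with
  | zero => rw [pow_zero, Matrix.one_mulVec]
  | succ k ih => rw [pow_succ', ← Matrix.mulVec_mulVec, ih, h]

/-- Perron–Frobenius: for an irreducible nonnegative matrix with positive fixed vector ν,
any fixed vector is a multiple of ν. -/
lemma pf_eig {m : ℕ} {M : Matrix (Fin m) (Fin m) ℝ} (hnn : ∀ i j, 0 ≤ M i j)
    (hirr : Irred M) {ν : Fin m → ℝ} (hν : ∀ i, 0 < ν i) (hMν : M.mulVec ν = ν)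
    {x : Fin m → ℝ} (hx : M.mulVec x = x) : ∃ c : ℝ, x = c • ν := by
  rcases Nat.eq_zero_or_pos m with hm | hm
  · exact ⟨0, funext fun i => absurd i.2 (by omega)⟩
  have hne : (Finset.univ : Finset (Fin m)).Nonempty := ⟨⟨0, hm⟩, Finset.mem_univ _⟩
  obtain ⟨i0, _, hi0⟩ := Finset.exists_min_image Finset.univ (fun i => x i / ν i) hne
  set r := x i0 / ν i0 with hr
  refine ⟨r, ?_⟩
  set z := x - r • ν with hz
  have hzn : ∀ i, 0 ≤ z i := by
    intro i
    simp only [hz, Pi.sub_apply, Pi.smul_apply, smul_eq_mul, sub_nonneg]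
    exact (le_div_iff₀ (hν i)).1 (hi0 i (Finset.mem_univ i))
  have hzfix : M.mulVec z = z := by
    rw [hz, Matrix.mulVec_sub, Matrix.mulVec_smul, hMν, hx]
  have hzi0 : z i0 = 0 := by
    simp only [hz, Pi.sub_apply, Pi.smul_apply, smul_eq_mul, hr]
    rw [div_mul_cancel₀ _ (hν i0).ne', sub_self]
  have hzero : ∀ j, z j = 0 := by
    intro j
    obtain ⟨k, -, hk⟩ := hirr i0 j
    have hfix := pow_mulVec_fixed hzfix k
    have h0 : ∑ l, (M ^ k) i0 l * z l = 0 := by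
      have : (M ^ k).mulVec z i0 = z i0 := by rw [hfix]
      rw [Matrix.mulVec, dotProduct] at this
      rw [this, hzi0]
    have hterm := (Finset.sum_eq_zero_iff_of_nonneg
      (fun l _ => mul_nonneg (pow_entry_nonneg hnn k i0 l) (hzn l))).1 h0 j (Finset.mem_univ j)
    rcases mul_eq_zero.1 hterm with h | h
    · exact absurd h hk
    · exact h
  have hz0 : x - r • ν = 0 := hz ▸ funext hzero
  exact sub_eq_zero.1 hz0
/-! ### Quadratic form of a stochastic matrix -/

lemma quad_id {m : ℕ} (Q : Matrix (Fin m) (Fin m) ℝ) (μ : Fin m → ℝ) (hμpos : ∀ i, 0 < μ i)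
    (hQμ : Q.mulVec μ = μ) (hcol : ∀ j, ∑ i, Q i j = 1) (z : Fin m → ℝ) :
    innerW (fun i => (μ i)⁻¹) z z - innerW (fun i => (μ i)⁻¹) z (Q.mulVec z)
      = (1/2) * ∑ i, ∑ j, Q i j * μ j * (z i * (μ i)⁻¹ - z j * (μ j)⁻¹)^2 := by
  have e1 : ∀ i, ∑ j, Q i j * μ j = μ i := fun i => by
    have h := congrFun hQμ i
    rwa [Matrix.mulVec, dotProduct] at h
  have claim1 : (∑ i, ∑ j, Q i j * μ j * (z i * (μ i)⁻¹)^2)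
      = ∑ i, μ i * (z i * (μ i)⁻¹)^2 := by
    refine Finset.sum_congr rfl fun i _ => ?_
    rw [← Finset.sum_mul, e1 i]
  have claim2 : (∑ i, ∑ j, Q i j * μ j * (z j * (μ j)⁻¹)^2)
      = ∑ j, μ j * (z j * (μ j)⁻¹)^2 := by
    rw [Finset.sum_comm]
    refine Finset.sum_congr rfl fun j _ => ?_
    rw [Finset.sum_congr rfl (fun i _ => show Q i j * μ j * (z j * (μ j)⁻¹)^2
      = Q i j * (μ j * (z j * (μ j)⁻¹)^2) from by ring), ← Finset.sum_mul, hcol j, one_mul]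
  have claim3 : innerW (fun i => (μ i)⁻¹) z z = ∑ i, μ i * (z i * (μ i)⁻¹)^2 := by
    refine Finset.sum_congr rfl fun i _ => ?_
    have h := (hμpos i).ne'
    field_simp
  have claim4 : innerW (fun i => (μ i)⁻¹) z (Q.mulVec z)
      = ∑ i, ∑ j, Q i j * μ j * (z i * (μ i)⁻¹) * (z j * (μ j)⁻¹) := by
    refine Finset.sum_congr rfl fun i _ => ?_
    rw [Matrix.mulVec, dotProduct, Finset.mul_sum, Finset.sum_mul]
    refine Finset.sum_congr rfl fun j _ => ?_
    have h1 := (hμpos j).ne'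
    have h2 := (hμpos i).ne'
    field_simp
  have expand : ∑ i, ∑ j, Q i j * μ j * (z i * (μ i)⁻¹ - z j * (μ j)⁻¹)^2
      = (∑ i, ∑ j, Q i j * μ j * (z i * (μ i)⁻¹)^2)
        - 2 * (∑ i, ∑ j, Q i j * μ j * (z i * (μ i)⁻¹) * (z j * (μ j)⁻¹))
        + (∑ i, ∑ j, Q i j * μ j * (z j * (μ j)⁻¹)^2) := by
    have h : ∀ i j, Q i j * μ j * (z i * (μ i)⁻¹ - z j * (μ j)⁻¹)^2
        = Q i j * μ j * (z i * (μ i)⁻¹)^2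
          - 2 * (Q i j * μ j * (z i * (μ i)⁻¹) * (z j * (μ j)⁻¹))
          + Q i j * μ j * (z j * (μ j)⁻¹)^2 := fun i j => by ring
    simp only [h, Finset.sum_add_distrib, Finset.sum_sub_distrib, ← Finset.mul_sum]
  rw [claim3, claim4, expand, claim1, claim2]
  ring

lemma quad_nonneg {m : ℕ} (Q : Matrix (Fin m) (Fin m) ℝ) (μ : Fin m → ℝ)
    (hμpos : ∀ i, 0 < μ i) (hQnn : ∀ i j, 0 ≤ Q i j)
    (hQμ : Q.mulVec μ = μ) (hcol : ∀ j, ∑ i, Q i j = 1) (z : Fin m → ℝ) :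
    0 ≤ innerW (fun i => (μ i)⁻¹) z z - innerW (fun i => (μ i)⁻¹) z (Q.mulVec z) := by
  rw [quad_id Q μ hμpos hQμ hcol z]
  refine mul_nonneg (by norm_num) (Finset.sum_nonneg fun i _ => Finset.sum_nonneg fun j _ => ?_)
  exact mul_nonneg (mul_nonneg (hQnn i j) (hμpos j).le) (sq_nonneg _)

lemma quad_zero_span {m : ℕ} (Q : Matrix (Fin m) (Fin m) ℝ) (μ : Fin m → ℝ)
    (hμpos : ∀ i, 0 < μ i) (hQnn : ∀ i j, 0 ≤ Q i j) (hQirr : Irred Q)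
    (hQμ : Q.mulVec μ = μ) (hcol : ∀ j, ∑ i, Q i j = 1) (z : Fin m → ℝ)
    (h : innerW (fun i => (μ i)⁻¹) z z - innerW (fun i => (μ i)⁻¹) z (Q.mulVec z) = 0) :
    ∃ c : ℝ, z = c • μ := by
  rcases Nat.eq_zero_or_pos m with hm | hm
  · exact ⟨0, funext fun i => absurd i.2 (by omega)⟩
  rw [quad_id Q μ hμpos hQμ hcol z] at h
  have hsum : ∑ i, ∑ j, Q i j * μ j * (z i * (μ i)⁻¹ - z j * (μ j)⁻¹)^2 = 0 := by linarith
  have hterm : ∀ i j, Q i j * μ j * (z i * (μ i)⁻¹ - z j * (μ j)⁻¹)^2 = 0 := by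
    intro i j
    have hinner : ∀ i, 0 ≤ ∑ j, Q i j * μ j * (z i * (μ i)⁻¹ - z j * (μ j)⁻¹)^2 :=
      fun i => Finset.sum_nonneg fun j _ =>
        mul_nonneg (mul_nonneg (hQnn i j) (hμpos j).le) (sq_nonneg _)
    have h1 := (Finset.sum_eq_zero_iff_of_nonneg (fun i _ => hinner i)).1 hsum i (Finset.mem_univ i)
    exact (Finset.sum_eq_zero_iff_of_nonneg (fun j _ =>
      mul_nonneg (mul_nonneg (hQnn i j) (hμpos j).le) (sq_nonneg _))).1 h1 j (Finset.mem_univ j)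
  have hrel : ∀ i j, Q i j ≠ 0 → z i * (μ i)⁻¹ = z j * (μ j)⁻¹ := by
    intro i j hQ
    have := hterm i j
    rcases mul_eq_zero.1 this with h' | h'
    · rcases mul_eq_zero.1 h' with h'' | h''
      · exact absurd h'' hQ
      · exact absurd h'' (hμpos j).ne'
    · exact sub_eq_zero.1 ((pow_eq_zero_iff two_ne_zero).1 h')
  have hall : ∀ i j, z i * (μ i)⁻¹ = z j * (μ j)⁻¹ := by
    intro i j
    obtain ⟨k, -, hk⟩ := hQirr i j
    exact rel_of_pow hrel k i j hk
  set i0 : Fin m := ⟨0, hm⟩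
  refine ⟨z i0 * (μ i0)⁻¹, funext fun i => ?_⟩
  have h5 := hall i i0
  simp only [Pi.smul_apply, smul_eq_mul]
  have h6 : z i * (μ i)⁻¹ * μ i = z i0 * (μ i0)⁻¹ * μ i := by rw [h5]
  rwa [mul_assoc, inv_mul_cancel₀ (hμpos i).ne', mul_one] at h6
/-! ### Facts about `Q = P* P` and `hatP` -/

lemma Q_apply (μ : Fin N → ℝ) (P : Matrix (Fin N) (Fin N) ℝ) (i j : Fin N) :
    (adjW μ P * P) i j = ∑ l, μ i * P l i * (μ l)⁻¹ * P l j := by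
  rw [Matrix.mul_apply]
  exact Finset.sum_congr rfl fun l _ => by rw [adjW_apply]

lemma Q_nn (μ : Fin N → ℝ) (hμpos : ∀ i, 0 < μ i) (P : Matrix (Fin N) (Fin N) ℝ)
    (hPnn : ∀ i j, 0 ≤ P i j) : ∀ i j, 0 ≤ (adjW μ P * P) i j := by
  intro i j
  rw [Q_apply]
  refine Finset.sum_nonneg fun l _ => ?_
  have := hμpos i
  have := hμpos l
  have := hPnn l i
  have := hPnn l j
  positivity

lemma adjW_mulVec_mu (μ : Fin N → ℝ) (hμpos : ∀ i, 0 < μ i)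
    (P : Matrix (Fin N) (Fin N) ℝ) (hPcol : ∀ j, ∑ i, P i j = 1) :
    (adjW μ P).mulVec μ = μ := by
  funext j
  rw [Matrix.mulVec, dotProduct]
  rw [Finset.sum_congr rfl (fun i _ => show adjW μ P j i * μ i = μ j * P i j from by
    rw [adjW_apply, mul_assoc, mul_assoc, inv_mul_cancel₀ (hμpos i).ne', mul_one])]
  rw [← Finset.mul_sum, hPcol j, mul_one]

lemma Q_mulVec_mu (μ : Fin N → ℝ) (hμpos : ∀ i, 0 < μ i)
    (P : Matrix (Fin N) (Fin N) ℝ) (hPcol : ∀ j, ∑ i, P i j = 1)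
    (hinv : P.mulVec μ = μ) : (adjW μ P * P).mulVec μ = μ := by
  rw [← Matrix.mulVec_mulVec, hinv, adjW_mulVec_mu μ hμpos P hPcol]

lemma Q_colsum (μ : Fin N → ℝ) (hμpos : ∀ i, 0 < μ i)
    (P : Matrix (Fin N) (Fin N) ℝ) (hPcol : ∀ j, ∑ i, P i j = 1)
    (hinv : P.mulVec μ = μ) : ∀ j, ∑ i, (adjW μ P * P) i j = 1 := by
  intro j
  simp only [Q_apply]
  rw [Finset.sum_comm]
  have key : ∀ l, ∑ i, μ i * P l i * (μ l)⁻¹ * P l j = P l j := by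
    intro l
    rw [Finset.sum_congr rfl (fun i _ => show μ i * P l i * (μ l)⁻¹ * P l j
      = (P l i * μ i) * ((μ l)⁻¹ * P l j) from by ring), ← Finset.sum_mul]
    have : ∑ i, P l i * μ i = μ l := by
      have h := congrFun hinv l
      rwa [Matrix.mulVec, dotProduct] at h
    rw [this, ← mul_assoc, mul_inv_cancel₀ (hμpos l).ne', one_mul]
  rw [Finset.sum_congr rfl fun l _ => key l, hPcol j]

lemma Q_irred (μ : Fin N → ℝ) (hμpos : ∀ i, 0 < μ i) (P : Matrix (Fin N) (Fin N) ℝ)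
    (hPnn : ∀ i j, 0 ≤ P i j) (hirr2 : Irred (Pᵀ * P)) : Irred (adjW μ P * P) := by
  refine irred_transfer (fun i j => ?_) (Q_nn μ hμpos P hPnn) (fun i j h => ?_) hirr2
  · rw [Matrix.mul_apply]
    exact Finset.sum_nonneg fun l _ => mul_nonneg (hPnn l i) (hPnn l j)
  · rw [Matrix.mul_apply] at h
    obtain ⟨l, -, hl⟩ := Finset.exists_ne_zero_of_sum_ne_zero h
    rw [Matrix.transpose_apply] at hl
    obtain ⟨h1, h2⟩ := mul_ne_zero_iff.1 hl
    have hp1 : 0 < P l i := lt_of_le_of_ne (hPnn l i) (Ne.symm h1)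
    have hp2 : 0 < P l j := lt_of_le_of_ne (hPnn l j) (Ne.symm h2)
    have hterm : 0 < μ i * P l i * (μ l)⁻¹ * P l j := by
      have := hμpos i; have := hμpos l; positivity
    have hle := Finset.single_le_sum (f := fun l' => μ i * P l' i * (μ l')⁻¹ * P l' j)
      (fun l' _ => by have := hμpos i; have := hμpos l'; have := hPnn l' i; have := hPnn l' j
                      positivity) (Finset.mem_univ l)
    rw [Q_apply]
    exact (lt_of_lt_of_le hterm hle).ne'

lemma adjW_vecMulVec (μ : Fin N → ℝ) (hμpos : ∀ i, 0 < μ i) :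
    adjW μ (vecMulVec μ 1) = vecMulVec μ (1 : Fin N → ℝ) := by
  ext i j
  rw [adjW, Matrix.mul_diagonal, Matrix.diagonal_mul, Matrix.transpose_apply,
    Matrix.vecMulVec_apply, Matrix.vecMulVec_apply, Pi.one_apply, Pi.one_apply]
  have := (hμpos j).ne'
  field_simp

lemma adj_hat (μ : Fin N → ℝ) (hμpos : ∀ i, 0 < μ i) (hμsum : ∑ i, μ i = 1)
    (P : Matrix (Fin N) (Fin N) ℝ) (hPcol : ∀ j, ∑ i, P i j = 1) :
    adjW μ (hatP P μ) * hatP P μ = adjW μ P * P - vecMulVec μ 1 := by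
  have hadj : adjW μ (hatP P μ) = adjW μ P - vecMulVec μ 1 := by
    have h : adjW μ (hatP P μ) = adjW μ P - adjW μ (vecMulVec μ 1) := by
      rw [hatP, adjW, adjW, adjW, Matrix.transpose_sub, Matrix.mul_sub, Matrix.sub_mul]
    rw [h, adjW_vecMulVec μ hμpos]
  rw [hadj, hatP, Matrix.sub_mul, Matrix.mul_sub, Matrix.mul_sub]
  have hXV : adjW μ P * vecMulVec μ 1 = vecMulVec μ (1 : Fin N → ℝ) := by
    ext i j
    rw [Matrix.mul_apply, Matrix.vecMulVec_apply, Pi.one_apply, mul_one]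
    rw [Finset.sum_congr rfl (fun l _ => show adjW μ P i l * vecMulVec μ 1 l j
      = μ i * P l i from by
        rw [adjW_apply, Matrix.vecMulVec_apply, Pi.one_apply, mul_one, mul_assoc,
          inv_mul_cancel₀ (hμpos l).ne', mul_one])]
    rw [← Finset.mul_sum, hPcol i, mul_one]
  have hVP : vecMulVec μ 1 * P = vecMulVec μ (1 : Fin N → ℝ) := by
    ext i j
    rw [Matrix.mul_apply, Matrix.vecMulVec_apply, Pi.one_apply, mul_one]
    rw [Finset.sum_congr rfl (fun l _ => show vecMulVec μ 1 i l * P l j = μ i * P l j from by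
      rw [Matrix.vecMulVec_apply, Pi.one_apply, mul_one])]
    rw [← Finset.mul_sum, hPcol j, mul_one]
  have hVV : (vecMulVec μ 1 : Matrix (Fin N) (Fin N) ℝ) * vecMulVec μ 1
      = vecMulVec μ (1 : Fin N → ℝ) := by
    ext i j
    rw [Matrix.mul_apply, Matrix.vecMulVec_apply, Pi.one_apply, mul_one]
    rw [Finset.sum_congr rfl (fun l _ => show vecMulVec μ 1 i l * vecMulVec μ 1 l j
      = μ i * μ l from by rw [Matrix.vecMulVec_apply, Matrix.vecMulVec_apply]; simp)]
    rw [← Finset.mul_sum, hμsum, mul_one]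
  rw [hXV, hVP, hVV]
  abel
/-! ### The coarse matrix C -/

lemma single_le_mul_apply {α β γ : Type*} [Fintype β] (X : Matrix α β ℝ) (Y : Matrix β γ ℝ)
    (hX : ∀ i j, 0 ≤ X i j) (hY : ∀ i j, 0 ≤ Y i j) (i : α) (b : β) (j : γ) :
    X i b * Y b j ≤ (X * Y) i j := by
  rw [Matrix.mul_apply]
  exact Finset.single_le_sum (f := fun b' => X i b' * Y b' j)
    (fun b' _ => mul_nonneg (hX i b') (hY b' j)) (Finset.mem_univ b)

lemma Agg_nn (f : Fin N → Fin n) : ∀ i j, 0 ≤ Agg f i j := by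
  intro i j; by_cases h : f j = i <;> simp [Agg, h]

lemma Disagg_nn (f : Fin N → Fin n) (hf : Function.Surjective f) (μ : Fin N → ℝ)
    (hμpos : ∀ i, 0 < μ i) : ∀ j i, 0 ≤ Disagg f μ j i := by
  intro j i
  by_cases h : f j = i
  · simp only [Disagg, if_pos h]
    exact (div_pos (hμpos j) (aggMu_pos f hf μ hμpos i)).le
  · simp [Disagg, h]

lemma C_nn (P : Matrix (Fin N) (Fin N) ℝ) (hPnn : ∀ i j, 0 ≤ P i j) (f : Fin N → Fin n)
    (hf : Function.Surjective f) (μ : Fin N → ℝ) (hμpos : ∀ i, 0 < μ i) :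
    ∀ i j, 0 ≤ CoarseC P f μ i j := by
  intro i j
  rw [CoarseC, Matrix.mul_apply]
  refine Finset.sum_nonneg fun b _ => mul_nonneg ?_ (Disagg_nn f hf μ hμpos b j)
  rw [Matrix.mul_apply]
  exact Finset.sum_nonneg fun a _ => mul_nonneg (Agg_nn f i a) (hPnn a b)

lemma Agg_colsum (f : Fin N → Fin n) : ∀ a, ∑ i, Agg f i a = 1 := by
  intro a
  rw [show (∑ i, Agg f i a) = ∑ i, if f a = i then (1:ℝ) else 0 from rfl,
    Finset.sum_ite_eq univ (f a) (fun _ => (1:ℝ))]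
  simp

lemma colsum_one_mul {m k l : Type*} [Fintype m] [Fintype k] [Fintype l]
    (X : Matrix m k ℝ) (Y : Matrix k l ℝ) (hX : ∀ a, ∑ i, X i a = 1)
    (hY : ∀ j, ∑ a, Y a j = 1) (j : l) : ∑ i, (X * Y) i j = 1 := by
  simp only [Matrix.mul_apply]
  rw [Finset.sum_comm]
  calc ∑ a, ∑ i, X i a * Y a j = ∑ a, (∑ i, X i a) * Y a j :=
        Finset.sum_congr rfl fun a _ => (Finset.sum_mul ..).symm
    _ = ∑ a, Y a j := Finset.sum_congr rfl fun a _ => by rw [hX a, one_mul]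
    _ = 1 := hY j

lemma C_colsum (P : Matrix (Fin N) (Fin N) ℝ) (hPcol : ∀ j, ∑ i, P i j = 1)
    (f : Fin N → Fin n) (hf : Function.Surjective f) (μ : Fin N → ℝ)
    (hμpos : ∀ i, 0 < μ i) : ∀ j, ∑ i, CoarseC P f μ i j = 1 := by
  intro j
  rw [CoarseC]
  exact colsum_one_mul (Agg f * P) (Disagg f μ)
    (fun a => colsum_one_mul (Agg f) P (Agg_colsum f) hPcol a)
    (fun i => hDcol f hf μ hμpos i) j

lemma D_mulVec_aggMu (f : Fin N → Fin n) (hf : Function.Surjective f) (μ : Fin N → ℝ)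
    (hμpos : ∀ i, 0 < μ i) : (Disagg f μ).mulVec ((Agg f).mulVec μ) = μ := by
  funext j
  rw [Disagg_mulVec]
  exact div_mul_cancel₀ (μ j) (aggMu_pos f hf μ hμpos (f j)).ne'

lemma C_fix (P : Matrix (Fin N) (Fin N) ℝ) (f : Fin N → Fin n)
    (hf : Function.Surjective f) (μ : Fin N → ℝ) (hμpos : ∀ i, 0 < μ i)
    (hinv : P.mulVec μ = μ) :
    (CoarseC P f μ).mulVec ((Agg f).mulVec μ) = (Agg f).mulVec μ := by
  rw [CoarseC, ← Matrix.mulVec_mulVec, D_mulVec_aggMu f hf μ hμpos,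
    ← Matrix.mulVec_mulVec, hinv]

lemma C_irred (P : Matrix (Fin N) (Fin N) ℝ) (hPnn : ∀ i j, 0 ≤ P i j) (hirr : Irred P)
    (f : Fin N → Fin n) (hf : Function.Surjective f) (μ : Fin N → ℝ)
    (hμpos : ∀ i, 0 < μ i) : Irred (CoarseC P f μ) := by
  have hCnn := C_nn P hPnn f hf μ hμpos
  have hAPnn : ∀ i b, 0 ≤ (Agg f * P) i b := by
    intro i b
    rw [Matrix.mul_apply]
    exact Finset.sum_nonneg fun a' _ => mul_nonneg (Agg_nn f i a') (hPnn a' b)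
  have hstep : ∀ a c, P a c ≠ 0 → 0 < CoarseC P f μ (f a) (f c) := by
    intro a c hac
    have hPac : 0 < P a c := lt_of_le_of_ne (hPnn a c) (Ne.symm hac)
    have h1 : (0:ℝ) < (Agg f * P) (f a) c := by
      have := single_le_mul_apply (Agg f) P (Agg_nn f) hPnn (f a) a c
      rw [show Agg f (f a) a = 1 from if_pos rfl] at this
      linarith
    have h2 : (0:ℝ) < Disagg f μ c (f c) := by
      rw [Disagg, if_pos rfl]
      exact div_pos (hμpos c) (aggMu_pos f hf μ hμpos (f c))
    have h3 := single_le_mul_apply (Agg f * P) (Disagg f μ) hAPnn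
      (fun b j => Disagg_nn f hf μ hμpos b j) (f a) c (f c)
    rw [CoarseC]
    nlinarith
  have key : ∀ (k : ℕ) a b, (P ^ k) a b ≠ 0 → 0 < ((CoarseC P f μ) ^ k) (f a) (f b) := by
    intro k
    induction k with
    | zero =>
        intro a b hab
        rw [pow_zero] at hab ⊢
        by_cases h : a = b
        · subst h; rw [Matrix.one_apply_eq]; norm_num
        · exact absurd (Matrix.one_apply_ne h) hab
    | succ k ih =>
        intro a b hab
        rw [pow_succ'] at hab ⊢
        obtain ⟨c, h1, h2⟩ := mul_ne_zero_exists hab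
        exact mul_entry_pos hCnn (pow_entry_nonneg hCnn k) (hstep a c h1) (ih c b h2)
  intro i j
  obtain ⟨a, ha⟩ := hf i
  obtain ⟨b, hb⟩ := hf j
  obtain ⟨k, hk, hkab⟩ := hirr a b
  exact ⟨k, hk, by rw [← ha, ← hb]; exact (key k a b hkab).ne'⟩
/-! ### Invertibility of the coarse matrix B -/

lemma vecMulVec_one_mulVec {k : ℕ} (u : Fin k → ℝ) (d : Fin k → ℝ) :
    (vecMulVec u (1 : Fin k → ℝ)).mulVec d = (∑ j, d j) • u := by
  funext i
  rw [Matrix.mulVec, dotProduct, Pi.smul_apply, smul_eq_mul]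
  rw [Finset.sum_congr rfl (fun j _ => show vecMulVec u (1 : Fin k → ℝ) i j * d j
    = u i * d j from by rw [Matrix.vecMulVec_apply, Pi.one_apply, mul_one])]
  rw [← Finset.mul_sum, mul_comm]

lemma mulVec_colsum {m k : Type*} [Fintype m] [Fintype k] (M : Matrix m k ℝ)
    (hM : ∀ j, ∑ i, M i j = 1) (d : k → ℝ) : ∑ i, M.mulVec d i = ∑ j, d j := by
  simp only [Matrix.mulVec, dotProduct]
  rw [Finset.sum_comm]
  refine Finset.sum_congr rfl fun j _ => ?_
  rw [← Finset.sum_mul, hM j, one_mul]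

lemma B_eq (P : Matrix (Fin N) (Fin N) ℝ) (f : Fin N → Fin n)
    (hf : Function.Surjective f) (μ : Fin N → ℝ) (hμpos : ∀ i, 0 < μ i) :
    Agg f * (1 - P + vecMulVec μ 1) * Disagg f μ
      = 1 - CoarseC P f μ + vecMulVec ((Agg f).mulVec μ) (1 : Fin n → ℝ) := by
  rw [Matrix.mul_add, Matrix.mul_sub, Matrix.mul_one, Matrix.add_mul, Matrix.sub_mul,
    hAD f hf μ hμpos]
  have hAV : Agg f * vecMulVec μ 1 = vecMulVec ((Agg f).mulVec μ) (1 : Fin N → ℝ) := by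
    ext i j
    rw [Matrix.mul_apply, Matrix.vecMulVec_apply, Pi.one_apply, mul_one, Matrix.mulVec,
      dotProduct]
    exact Finset.sum_congr rfl fun a _ => by
      rw [Matrix.vecMulVec_apply, Pi.one_apply, mul_one]
  have hVD : vecMulVec ((Agg f).mulVec μ) (1 : Fin N → ℝ) * Disagg f μ
      = vecMulVec ((Agg f).mulVec μ) (1 : Fin n → ℝ) := by
    ext i j
    rw [Matrix.mul_apply, Matrix.vecMulVec_apply, Pi.one_apply, mul_one]
    rw [Finset.sum_congr rfl (fun b _ => show vecMulVec ((Agg f).mulVec μ) 1 i b * Disagg f μ b j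
      = (Agg f).mulVec μ i * Disagg f μ b j from by
        rw [Matrix.vecMulVec_apply, Pi.one_apply, mul_one])]
    rw [← Finset.mul_sum, hDcol f hf μ hμpos j, mul_one]
  rw [hAV, hVD, CoarseC]

lemma B_unit (P : Matrix (Fin N) (Fin N) ℝ) (hP : ColStoch P) (hirr : Irred P)
    (f : Fin N → Fin n) (hf : Function.Surjective f) (μ : Fin N → ℝ)
    (hμpos : ∀ i, 0 < μ i) (hμsum : ∑ i, μ i = 1) (hinv : P.mulVec μ = μ) :
    IsUnit (Agg f * (1 - P + vecMulVec μ 1) * Disagg f μ).det := by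
  rw [B_eq P f hf μ hμpos]
  set C := CoarseC P f μ with hC
  set ν := (Agg f).mulVec μ with hν
  have hνpos : ∀ i, 0 < ν i := aggMu_pos f hf μ hμpos
  have hνsum : ∑ i, ν i = 1 := by
    rw [hν, mulVec_colsum (Agg f) (fun a => Agg_colsum f a) μ, hμsum]
  set B := 1 - C + vecMulVec ν (1 : Fin n → ℝ) with hB
  rw [← Matrix.isUnit_iff_isUnit_det]
  rw [← Matrix.mulVec_injective_iff_isUnit]
  have key : ∀ d : Fin n → ℝ, B.mulVec d = 0 → d = 0 := by
    intro d hd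
    have hexp : B.mulVec d = d - C.mulVec d + (∑ j, d j) • ν := by
      rw [hB, Matrix.add_mulVec, Matrix.sub_mulVec, Matrix.one_mulVec,
        vecMulVec_one_mulVec]
    rw [hexp] at hd
    have hsum0 : ∑ j, d j = 0 := by
      have h1 : ∑ i, (d - C.mulVec d + (∑ j, d j) • ν) i = 0 := by rw [hd]; simp
      have h2 : ∑ i, (d - C.mulVec d + (∑ j, d j) • ν) i
          = ∑ i, d i - ∑ i, C.mulVec d i + (∑ j, d j) * ∑ i, ν i := by
        simp only [Pi.add_apply, Pi.sub_apply, Pi.smul_apply, smul_eq_mul,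
          Finset.sum_add_distrib, Finset.sum_sub_distrib, ← Finset.mul_sum]
      rw [h2, mulVec_colsum C (C_colsum P hP.2 f hf μ hμpos) d, hνsum, mul_one] at h1
      linarith
    have hfix : C.mulVec d = d := by
      rw [hsum0, zero_smul, add_zero] at hd
      exact (sub_eq_zero.1 hd).symm
    obtain ⟨c, hc⟩ := pf_eig (C_nn P hP.1 f hf μ hμpos) (C_irred P hP.1 hirr f hf μ hμpos)
      hνpos (C_fix P f hf μ hμpos hinv) hfix
    have : c = 0 := by
      have h3 : ∑ j, d j = c * ∑ j, ν j := by
        rw [hc]; simp only [Pi.smul_apply, smul_eq_mul, ← Finset.mul_sum]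
      rw [hsum0, hνsum, mul_one] at h3
      exact h3.symm
    rw [hc, this, zero_smul]
  intro x y hxy
  have : B.mulVec (x - y) = 0 := by rw [Matrix.mulVec_sub, hxy, sub_self]
  exact sub_eq_zero.1 (key _ this)
/-! ### Algebra of the coarse projection S -/

lemma S_ES (P : Matrix (Fin N) (Fin N) ℝ) (f : Fin N → Fin n) (μ : Fin N → ℝ)
    (hB : IsUnit (Agg f * (1 - P + vecMulVec μ 1) * Disagg f μ).det) :
    (Agg f * (1 - P + vecMulVec μ 1)) * CoarseS P f μ μ
      = Agg f * (1 - P + vecMulVec μ 1) := by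
  set E := Agg f * (1 - P + vecMulVec μ 1) with hE
  have hS : CoarseS P f μ μ = Disagg f μ * (E * Disagg f μ)⁻¹ * E := rfl
  rw [hS, ← Matrix.mul_assoc E (Disagg f μ * (E * Disagg f μ)⁻¹) E,
    ← Matrix.mul_assoc E (Disagg f μ) ((E * Disagg f μ)⁻¹),
    Matrix.mul_nonsing_inv _ hB, Matrix.one_mul]

lemma S_idem (P : Matrix (Fin N) (Fin N) ℝ) (f : Fin N → Fin n) (μ : Fin N → ℝ)
    (hB : IsUnit (Agg f * (1 - P + vecMulVec μ 1) * Disagg f μ).det) :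
    CoarseS P f μ μ * CoarseS P f μ μ = CoarseS P f μ μ := by
  set E := Agg f * (1 - P + vecMulVec μ 1) with hE
  have hS : CoarseS P f μ μ = Disagg f μ * (E * Disagg f μ)⁻¹ * E := rfl
  nth_rewrite 1 [hS]
  rw [Matrix.mul_assoc (Disagg f μ * (E * Disagg f μ)⁻¹) E (CoarseS P f μ μ),
    S_ES P f μ hB, ← hS]

lemma S_Pi (P : Matrix (Fin N) (Fin N) ℝ) (f : Fin N → Fin n)
    (hf : Function.Surjective f) (μ : Fin N → ℝ) (hμpos : ∀ i, 0 < μ i)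
    (hB : IsUnit (Agg f * (1 - P + vecMulVec μ 1) * Disagg f μ).det) :
    CoarseS P f μ μ * PiProj f μ = PiProj f μ := by
  set E := Agg f * (1 - P + vecMulVec μ 1) with hE
  set D := Disagg f μ with hD
  set X := (E * D)⁻¹ with hX
  have hS : CoarseS P f μ μ = D * X * E := rfl
  rw [hS, PiProj, ← hD]
  rw [Matrix.mul_assoc (D * X) E (D * Agg f), ← Matrix.mul_assoc E D (Agg f),
    ← Matrix.mul_assoc (D * X) (E * D) (Agg f), Matrix.mul_assoc D X (E * D),
    hX, Matrix.nonsing_inv_mul _ hB, Matrix.mul_one]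

lemma Pi_S (P : Matrix (Fin N) (Fin N) ℝ) (f : Fin N → Fin n)
    (hf : Function.Surjective f) (μ : Fin N → ℝ) (hμpos : ∀ i, 0 < μ i) :
    PiProj f μ * CoarseS P f μ μ = CoarseS P f μ μ := by
  set E := Agg f * (1 - P + vecMulVec μ 1) with hE
  set D := Disagg f μ with hD
  set X := (E * D)⁻¹ with hX
  have hS : CoarseS P f μ μ = D * X * E := rfl
  rw [hS, PiProj, ← hD]
  rw [← Matrix.mul_assoc (D * Agg f) (D * X) E, ← Matrix.mul_assoc (D * Agg f) D X,
    Matrix.mul_assoc D (Agg f) D, hD, hAD f hf μ hμpos, Matrix.mul_one]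

lemma one_sub_Pi_mul (P : Matrix (Fin N) (Fin N) ℝ) (f : Fin N → Fin n)
    (hf : Function.Surjective f) (μ : Fin N → ℝ) (hμpos : ∀ i, 0 < μ i) :
    (1 - PiProj f μ) * (1 - CoarseS P f μ μ) = 1 - PiProj f μ := by
  simp only [Matrix.mul_sub, Matrix.sub_mul, Matrix.one_mul, Matrix.mul_one]
  rw [Pi_S P f hf μ hμpos]
  abel

lemma one_sub_S_mul (P : Matrix (Fin N) (Fin N) ℝ) (f : Fin N → Fin n)
    (hf : Function.Surjective f) (μ : Fin N → ℝ) (hμpos : ∀ i, 0 < μ i)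
    (hB : IsUnit (Agg f * (1 - P + vecMulVec μ 1) * Disagg f μ).det) :
    (1 - CoarseS P f μ μ) * (1 - PiProj f μ) = 1 - CoarseS P f μ μ := by
  simp only [Matrix.mul_sub, Matrix.sub_mul, Matrix.one_mul, Matrix.mul_one]
  rw [S_Pi P f hf μ hμpos hB]
  abel

lemma S_range_iff (P : Matrix (Fin N) (Fin N) ℝ) (f : Fin N → Fin n) (μ : Fin N → ℝ)
    (hB : IsUnit (Agg f * (1 - P + vecMulVec μ 1) * Disagg f μ).det) (z : Fin N → ℝ) :
    z ∈ Set.range (1 - CoarseS P f μ μ).mulVec ↔ (CoarseS P f μ μ).mulVec z = 0 := by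
  constructor
  · rintro ⟨x, rfl⟩
    rw [Matrix.mulVec_mulVec]
    have : CoarseS P f μ μ * (1 - CoarseS P f μ μ) = 0 := by
      rw [Matrix.mul_sub, Matrix.mul_one, S_idem P f μ hB, sub_self]
    rw [this, Matrix.zero_mulVec]
  · intro h
    exact ⟨z, by rw [Matrix.sub_mulVec, Matrix.one_mulVec, h, sub_zero]⟩

lemma onePi_ne_zero (P : Matrix (Fin N) (Fin N) ℝ) (f : Fin N → Fin n)
    (hf : Function.Surjective f) (μ : Fin N → ℝ) (hμpos : ∀ i, 0 < μ i)
    (hB : IsUnit (Agg f * (1 - P + vecMulVec μ 1) * Disagg f μ).det)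
    {z : Fin N → ℝ} (hSz : (CoarseS P f μ μ).mulVec z = 0) (hz : z ≠ 0) :
    ((1 : Matrix (Fin N) (Fin N) ℝ) - PiProj f μ).mulVec z ≠ 0 := by
  intro h0
  rw [Matrix.sub_mulVec, Matrix.one_mulVec] at h0
  have hPiz : (PiProj f μ).mulVec z = z := by
    have := sub_eq_zero.1 h0
    exact this.symm
  have : (CoarseS P f μ μ).mulVec ((PiProj f μ).mulVec z) = (PiProj f μ).mulVec z := by
    rw [Matrix.mulVec_mulVec, S_Pi P f hf μ hμpos hB]
  rw [hPiz, hSz] at this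
  exact hz this.symm

lemma E_vanish (P : Matrix (Fin N) (Fin N) ℝ) (f : Fin N → Fin n) (μ : Fin N → ℝ)
    (hB : IsUnit (Agg f * (1 - P + vecMulVec μ 1) * Disagg f μ).det)
    {z : Fin N → ℝ} (hSz : (CoarseS P f μ μ).mulVec z = 0) :
    (Agg f * (1 - P + vecMulVec μ 1)).mulVec z = 0 := by
  have hz : z = (1 - CoarseS P f μ μ).mulVec z := by
    rw [Matrix.sub_mulVec, Matrix.one_mulVec, hSz, sub_zero]
  rw [hz, Matrix.mulVec_mulVec]
  have h4 : (Agg f * (1 - P + vecMulVec μ 1)) * (1 - CoarseS P f μ μ) = 0 := by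
    rw [Matrix.mul_sub, Matrix.mul_one, S_ES P f μ hB, sub_self]
  rw [h4, Matrix.zero_mulVec]

lemma Pi_hatP (P : Matrix (Fin N) (Fin N) ℝ) (f : Fin N → Fin n) (μ : Fin N → ℝ)
    {z : Fin N → ℝ}
    (hEz : (Agg f * (1 - P + vecMulVec μ 1)).mulVec z = 0) :
    (PiProj f μ).mulVec ((hatP P μ).mulVec z) = (PiProj f μ).mulVec z := by
  have hAz : (Agg f).mulVec ((1 - P + vecMulVec μ 1).mulVec z) = 0 := by
    rw [Matrix.mulVec_mulVec]; exact hEz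
  have h2 : (1 - P + vecMulVec μ 1).mulVec z = z - (hatP P μ).mulVec z := by
    rw [hatP, Matrix.add_mulVec, Matrix.sub_mulVec, Matrix.sub_mulVec, Matrix.one_mulVec]
    funext i
    simp only [Pi.add_apply, Pi.sub_apply]
    ring
  rw [h2, Matrix.mulVec_sub] at hAz
  have h3 : (Agg f).mulVec ((hatP P μ).mulVec z) = (Agg f).mulVec z :=
    (sub_eq_zero.1 hAz).symm
  rw [PiProj, ← Matrix.mulVec_mulVec, ← Matrix.mulVec_mulVec, h3]
/-! ### Dimension count and continuity -/

lemma n_lt_N (f : Fin N → Fin n) (hf : Function.Surjective f)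
    (hcoarse : ∃ a b : Fin N, a ≠ b ∧ f a = f b) : n < N := by
  obtain ⟨a, b, hab, hfab⟩ := hcoarse
  have hg : Function.Injective (Function.surjInv hf) := Function.injective_surjInv hf
  have h1 : ∃ x : Fin N, x ∉ Set.range (Function.surjInv hf) := by
    by_contra h
    push_neg at h
    obtain ⟨i, hi⟩ := h a
    obtain ⟨j, hj⟩ := h b
    apply hab
    have hfa : f a = i := by rw [← hi, Function.surjInv_eq hf]
    have hfb : f b = j := by rw [← hj, Function.surjInv_eq hf]
    have hij : i = j := by rw [← hfa, ← hfb, hfab]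
    rw [← hi, ← hj, hij]
  obtain ⟨x, hx⟩ := h1
  have := Fintype.card_lt_of_injective_of_notMem (Function.surjInv hf) hg hx
  simpa using this

lemma exists_ker (P : Matrix (Fin N) (Fin N) ℝ) (f : Fin N → Fin n)
    (hf : Function.Surjective f) (μ : Fin N → ℝ)
    (hcoarse : ∃ a b : Fin N, a ≠ b ∧ f a = f b) :
    ∃ z : Fin N → ℝ, z ≠ 0 ∧ (CoarseS P f μ μ).mulVec z = 0 := by
  set L := Matrix.mulVecLin (Agg f * (1 - P + vecMulVec μ 1)) with hL
  have hker : LinearMap.ker L ≠ ⊥ := by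
    intro hbot
    have h1 := LinearMap.finrank_range_add_finrank_ker L
    rw [hbot, finrank_bot] at h1
    have h2 : Module.finrank ℝ (LinearMap.range L) ≤ n := by
      have := Submodule.finrank_le (LinearMap.range L)
      rwa [Module.finrank_fintype_fun_eq_card, Fintype.card_fin] at this
    rw [Module.finrank_fintype_fun_eq_card, Fintype.card_fin] at h1
    have := n_lt_N f hf hcoarse
    omega
  obtain ⟨z, hzker, hzne⟩ := (Submodule.ne_bot_iff _).1 hker
  refine ⟨z, hzne, ?_⟩
  have hEz : (Agg f * (1 - P + vecMulVec μ 1)).mulVec z = 0 := hzker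
  have : CoarseS P f μ μ = (Disagg f μ * (Agg f * (1 - P + vecMulVec μ 1) * Disagg f μ)⁻¹)
      * (Agg f * (1 - P + vecMulVec μ 1)) := by rw [CoarseS]
  rw [this, ← Matrix.mulVec_mulVec, hEz, Matrix.mulVec_zero]

lemma cont_quadform (w : Fin N → ℝ) (M : Matrix (Fin N) (Fin N) ℝ) :
    Continuous fun z : Fin N → ℝ => innerW w z (M.mulVec z) := by
  unfold innerW
  refine continuous_finset_sum _ fun i _ => ?_
  refine Continuous.mul (Continuous.mul (continuous_apply i) ?_) continuous_const
  unfold Matrix.mulVec dotProduct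
  exact continuous_finset_sum _ fun j _ => Continuous.mul continuous_const (continuous_apply j)

lemma cont_quadform' (w : Fin N → ℝ) (M : Matrix (Fin N) (Fin N) ℝ) :
    Continuous fun z : Fin N → ℝ => innerW w (M.mulVec z) (M.mulVec z) := by
  unfold innerW
  refine continuous_finset_sum _ fun i _ => ?_
  have hM : Continuous fun z : Fin N → ℝ => M.mulVec z i := by
    unfold Matrix.mulVec dotProduct
    exact continuous_finset_sum _ fun j _ => Continuous.mul continuous_const (continuous_apply j)
  exact Continuous.mul (Continuous.mul hM hM) continuous_const

lemma innerW_smul_right {m : Type*} [Fintype m] (w : m → ℝ) (c : ℝ) (x y : m → ℝ) :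
    innerW w x (c • y) = c * innerW w x y := by
  unfold innerW
  rw [Finset.mul_sum]
  exact Finset.sum_congr rfl fun i _ => by simp only [Pi.smul_apply, smul_eq_mul]; ring

lemma innerW_mu_right (μ : Fin N → ℝ) (hμpos : ∀ i, 0 < μ i) (z : Fin N → ℝ) :
    innerW (fun i => (μ i)⁻¹) z μ = ∑ i, z i := by
  unfold innerW
  exact Finset.sum_congr rfl fun i _ => by
    rw [mul_assoc, mul_inv_cancel₀ (hμpos i).ne', mul_one]

lemma innerW_zero_right {m : Type*} [Fintype m] (w x : m → ℝ) :
    innerW w x 0 = 0 := by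
  unfold innerW
  exact Finset.sum_eq_zero fun i _ => by simp

end Aux14
end Aux14
/-- exact variational formula for `‖(I-Π(μ))J(μ)‖²_{1/μ}` and strict bound
below one. -/
theorem stmt14 {N n : ℕ} (P : Matrix (Fin N) (Fin N) ℝ)
    (μ : Fin N → ℝ) (hP : ColStoch P) (hirr : Irred P) (hirr2 : Irred (Pᵀ * P))
    (hμpos : ∀ i, 0 < μ i) (hμsum : ∑ i, μ i = 1) (hinv : P.mulVec μ = μ)
    (f : Fin N → Fin n) (hf : Function.Surjective f)
    (hcoarse : ∃ a b : Fin N, a ≠ b ∧ f a = f b) :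
    opNormW (fun i => (μ i)⁻¹) ((1 - PiProj f μ) * Jop P f μ μ) ^ 2 =
        1 - sInf {r : ℝ | ∃ z ∈ Set.range (1 - CoarseS P f μ μ).mulVec, z ≠ 0 ∧
          r = innerW (fun i => (μ i)⁻¹) z
                ((1 - adjW μ (hatP P μ) * hatP P μ).mulVec z) /
              normW (fun i => (μ i)⁻¹) ((1 - PiProj f μ).mulVec z) ^ 2} ∧
      opNormW (fun i => (μ i)⁻¹) ((1 - PiProj f μ) * Jop P f μ μ) ^ 2 < 1 := by
  classical
  obtain ⟨hPnn, hPcol⟩ := hP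
  have hwpos : ∀ i, 0 < (fun i => (μ i)⁻¹) i := fun i => inv_pos.2 (hμpos i)
  have hwnn : ∀ i, 0 ≤ (fun i => (μ i)⁻¹) i := fun i => (hwpos i).le
  have hB : IsUnit (Agg f * (1 - P + vecMulVec μ 1) * Disagg f μ).det :=
    Aux14.B_unit P ⟨hPnn, hPcol⟩ hirr f hf μ hμpos hμsum hinv
  -- numerator split
  have hnum_eq : ∀ z : Fin N → ℝ,
      innerW (fun i => (μ i)⁻¹) z ((1 - adjW μ (hatP P μ) * hatP P μ).mulVec z)
        = (innerW (fun i => (μ i)⁻¹) z z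
            - innerW (fun i => (μ i)⁻¹) z ((adjW μ P * P).mulVec z)) + (∑ i, z i) ^ 2 := by
    intro z
    rw [Aux14.adj_hat μ hμpos hμsum P hPcol]
    have h1 : ((1 : Matrix (Fin N) (Fin N) ℝ) - (adjW μ P * P - vecMulVec μ 1)).mulVec z
        = z - (adjW μ P * P).mulVec z + (∑ i, z i) • μ := by
      rw [show (1 : Matrix (Fin N) (Fin N) ℝ) - (adjW μ P * P - vecMulVec μ 1)
          = 1 - adjW μ P * P + vecMulVec μ 1 from by abel]
      rw [Matrix.add_mulVec, Matrix.sub_mulVec, Matrix.one_mulVec,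
        Aux14.vecMulVec_one_mulVec]
    rw [h1, Aux14.innerW_add_right, Aux14.innerW_sub_right, Aux14.innerW_smul_right,
      Aux14.innerW_mu_right μ hμpos]
    ring
  have hQnn := Aux14.Q_nn μ hμpos P hPnn
  have hQμ := Aux14.Q_mulVec_mu μ hμpos P hPcol hinv
  have hQcol := Aux14.Q_colsum μ hμpos P hPcol hinv
  have hquad_nn : ∀ z : Fin N → ℝ, 0 ≤ innerW (fun i => (μ i)⁻¹) z z
      - innerW (fun i => (μ i)⁻¹) z ((adjW μ P * P).mulVec z) :=
    fun z => Aux14.quad_nonneg (adjW μ P * P) μ hμpos hQnn hQμ hQcol z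
  -- positivity of the numerator
  have hnum_pos : ∀ z : Fin N → ℝ, z ≠ 0 →
      0 < innerW (fun i => (μ i)⁻¹) z ((1 - adjW μ (hatP P μ) * hatP P μ).mulVec z) := by
    intro z hz
    rw [hnum_eq z]
    rcases lt_or_eq_of_le (hquad_nn z) with h | h
    · nlinarith [sq_nonneg (∑ i, z i)]
    · obtain ⟨c, hc⟩ := Aux14.quad_zero_span (adjW μ P * P) μ hμpos hQnn
        (Aux14.Q_irred μ hμpos P hPnn hirr2) hQμ hQcol z h.symm
      have hcne : c ≠ 0 := by
        rintro rfl
        exact hz (by rw [hc, zero_smul])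
      have hsz : ∑ i, z i = c := by
        rw [hc]
        simp only [Pi.smul_apply, smul_eq_mul, ← Finset.mul_sum]
        rw [hμsum, mul_one]
      have hc2 : 0 < c ^ 2 := lt_of_le_of_ne (sq_nonneg c) (Ne.symm (pow_ne_zero 2 hcne))
      rw [hsz]
      linarith
  have hnum_norm : ∀ z : Fin N → ℝ,
      innerW (fun i => (μ i)⁻¹) z ((1 - adjW μ (hatP P μ) * hatP P μ).mulVec z)
        = innerW (fun i => (μ i)⁻¹) z z
          - innerW (fun i => (μ i)⁻¹) ((hatP P μ).mulVec z) ((hatP P μ).mulVec z) := by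
    intro z
    rw [Matrix.sub_mulVec, Matrix.one_mulVec, Aux14.innerW_sub_right,
      Aux14.innerW_adjW_mul μ hμpos (hatP P μ) z]
  -- key pointwise identity
  have key_id : ∀ z : Fin N → ℝ, (CoarseS P f μ μ).mulVec z = 0 →
      innerW (fun i => (μ i)⁻¹)
          ((1 - PiProj f μ).mulVec ((hatP P μ).mulVec z))
          ((1 - PiProj f μ).mulVec ((hatP P μ).mulVec z))
        = innerW (fun i => (μ i)⁻¹) ((1 - PiProj f μ).mulVec z)
            ((1 - PiProj f μ).mulVec z)
          - innerW (fun i => (μ i)⁻¹) z ((1 - adjW μ (hatP P μ) * hatP P μ).mulVec z) := by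
    intro z hSz
    have hEz := Aux14.E_vanish P f μ hB hSz
    have hPih := Aux14.Pi_hatP P f μ hEz
    have hp1 := Aux14.pyth f hf μ hμpos ((hatP P μ).mulVec z)
    have hp2 := Aux14.pyth f hf μ hμpos z
    rw [hPih] at hp1
    rw [hnum_norm z]
    linarith
  -- compact minimization
  have hKcl : IsClosed {z : Fin N → ℝ | (CoarseS P f μ μ).mulVec z = 0} := by
    have hc : Continuous fun z : Fin N → ℝ => (CoarseS P f μ μ).mulVec z := by
      have := (Matrix.mulVecLin (CoarseS P f μ μ)).continuous_of_finiteDimensional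
      exact this
    exact isClosed_singleton.preimage hc
  have hKcomp : IsCompact ({z : Fin N → ℝ | (CoarseS P f μ μ).mulVec z = 0}
      ∩ Metric.sphere 0 1) := by
    rw [Set.inter_comm]
    exact (isCompact_sphere 0 1).inter_right hKcl
  have hKne0 : ∀ z ∈ ({z : Fin N → ℝ | (CoarseS P f μ μ).mulVec z = 0}
      ∩ Metric.sphere 0 1), z ≠ 0 := by
    rintro z ⟨-, hz2⟩ rfl
    rw [mem_sphere_iff_norm, sub_zero, norm_zero] at hz2
    norm_num at hz2
  have hKne : ({z : Fin N → ℝ | (CoarseS P f μ μ).mulVec z = 0}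
      ∩ Metric.sphere 0 1).Nonempty := by
    obtain ⟨z0, hz0ne, hz0⟩ := Aux14.exists_ker P f hf μ hcoarse
    refine ⟨‖z0‖⁻¹ • z0, ?_, ?_⟩
    · show (CoarseS P f μ μ).mulVec (‖z0‖⁻¹ • z0) = 0
      rw [Matrix.mulVec_smul, hz0, smul_zero]
    · rw [mem_sphere_iff_norm, sub_zero]
      exact norm_smul_inv_norm hz0ne
  have hdenp : ∀ z : Fin N → ℝ, (CoarseS P f μ μ).mulVec z = 0 → z ≠ 0 →
      0 < innerW (fun i => (μ i)⁻¹) ((1 - PiProj f μ).mulVec z)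
        ((1 - PiProj f μ).mulVec z) :=
    fun z hSz hzne => Aux14.innerW_self_pos hwpos
      (Aux14.onePi_ne_zero P f hf μ hμpos hB hSz hzne)
  have hcont : ContinuousOn (fun z : Fin N → ℝ =>
      innerW (fun i => (μ i)⁻¹) z ((1 - adjW μ (hatP P μ) * hatP P μ).mulVec z)
      / innerW (fun i => (μ i)⁻¹) ((1 - PiProj f μ).mulVec z) ((1 - PiProj f μ).mulVec z))
      ({z : Fin N → ℝ | (CoarseS P f μ μ).mulVec z = 0} ∩ Metric.sphere 0 1) :=
    ((Aux14.cont_quadform _ _).continuousOn).div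
      ((Aux14.cont_quadform' _ _).continuousOn)
      (fun z hz => (hdenp z hz.1 (hKne0 z hz)).ne')
  obtain ⟨zs, hzsK, hzsmin⟩ := hKcomp.exists_isMinOn hKne hcont
  have hzsS : (CoarseS P f μ μ).mulVec zs = 0 := hzsK.1
  have hzsne : zs ≠ 0 := hKne0 zs hzsK
  set m := innerW (fun i => (μ i)⁻¹) zs ((1 - adjW μ (hatP P μ) * hatP P μ).mulVec zs)
      / innerW (fun i => (μ i)⁻¹) ((1 - PiProj f μ).mulVec zs)
          ((1 - PiProj f μ).mulVec zs) with hm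
  -- scale invariance and minimality over all admissible z
  have hscale : ∀ z : Fin N → ℝ, (CoarseS P f μ μ).mulVec z = 0 → z ≠ 0 →
      m ≤ innerW (fun i => (μ i)⁻¹) z ((1 - adjW μ (hatP P μ) * hatP P μ).mulVec z)
          / innerW (fun i => (μ i)⁻¹) ((1 - PiProj f μ).mulVec z)
              ((1 - PiProj f μ).mulVec z) := by
    intro z hSz hzne
    have hnz : ‖z‖⁻¹ ≠ 0 := inv_ne_zero (norm_ne_zero_iff.2 hzne)
    have hu : (‖z‖⁻¹ • z) ∈ ({z : Fin N → ℝ | (CoarseS P f μ μ).mulVec z = 0}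
        ∩ Metric.sphere 0 1) := by
      refine ⟨?_, ?_⟩
      · show (CoarseS P f μ μ).mulVec (‖z‖⁻¹ • z) = 0
        rw [Matrix.mulVec_smul, hSz, smul_zero]
      · rw [mem_sphere_iff_norm, sub_zero]
        exact norm_smul_inv_norm hzne
    have hmin : innerW (fun i => (μ i)⁻¹) zs
        ((1 - adjW μ (hatP P μ) * hatP P μ).mulVec zs)
        / innerW (fun i => (μ i)⁻¹) ((1 - PiProj f μ).mulVec zs)
            ((1 - PiProj f μ).mulVec zs)
        ≤ innerW (fun i => (μ i)⁻¹) (‖z‖⁻¹ • z)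
            ((1 - adjW μ (hatP P μ) * hatP P μ).mulVec (‖z‖⁻¹ • z))
          / innerW (fun i => (μ i)⁻¹) ((1 - PiProj f μ).mulVec (‖z‖⁻¹ • z))
              ((1 - PiProj f μ).mulVec (‖z‖⁻¹ • z)) :=
      isMinOn_iff.mp hzsmin _ hu
    have h1 : innerW (fun i => (μ i)⁻¹) (‖z‖⁻¹ • z)
        ((1 - adjW μ (hatP P μ) * hatP P μ).mulVec (‖z‖⁻¹ • z))
        = (‖z‖⁻¹) ^ 2 * innerW (fun i => (μ i)⁻¹) z
            ((1 - adjW μ (hatP P μ) * hatP P μ).mulVec z) := by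
      rw [Matrix.mulVec_smul, Aux14.innerW_smul_smul]
    have h2 : innerW (fun i => (μ i)⁻¹) ((1 - PiProj f μ).mulVec (‖z‖⁻¹ • z))
        ((1 - PiProj f μ).mulVec (‖z‖⁻¹ • z))
        = (‖z‖⁻¹) ^ 2 * innerW (fun i => (μ i)⁻¹) ((1 - PiProj f μ).mulVec z)
            ((1 - PiProj f μ).mulVec z) := by
      rw [Matrix.mulVec_smul, Aux14.innerW_smul_smul]
    rw [h1, h2, mul_div_mul_left _ _ (pow_ne_zero 2 hnz)] at hmin
    rw [hm]
    exact hmin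
  -- identification of the infimum
  have hmem : m ∈ {r : ℝ | ∃ z ∈ Set.range (1 - CoarseS P f μ μ).mulVec, z ≠ 0 ∧
      r = innerW (fun i => (μ i)⁻¹) z ((1 - adjW μ (hatP P μ) * hatP P μ).mulVec z) /
        normW (fun i => (μ i)⁻¹) ((1 - PiProj f μ).mulVec z) ^ 2} := by
    refine ⟨zs, (Aux14.S_range_iff P f μ hB zs).2 hzsS, hzsne, ?_⟩
    rw [Aux14.normW_sq hwnn]
  have hlb : ∀ r ∈ {r : ℝ | ∃ z ∈ Set.range (1 - CoarseS P f μ μ).mulVec, z ≠ 0 ∧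
      r = innerW (fun i => (μ i)⁻¹) z ((1 - adjW μ (hatP P μ) * hatP P μ).mulVec z) /
        normW (fun i => (μ i)⁻¹) ((1 - PiProj f μ).mulVec z) ^ 2}, m ≤ r := by
    rintro r ⟨z, hzr, hzne, rfl⟩
    rw [Aux14.normW_sq hwnn]
    exact hscale z ((Aux14.S_range_iff P f μ hB z).1 hzr) hzne
  have hInf : sInf {r : ℝ | ∃ z ∈ Set.range (1 - CoarseS P f μ μ).mulVec, z ≠ 0 ∧
      r = innerW (fun i => (μ i)⁻¹) z ((1 - adjW μ (hatP P μ) * hatP P μ).mulVec z) /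
        normW (fun i => (μ i)⁻¹) ((1 - PiProj f μ).mulVec z) ^ 2} = m :=
    le_antisymm (csInf_le ⟨m, hlb⟩ hmem) (le_csInf ⟨m, hmem⟩ hlb)
  have hm_pos : 0 < m := div_pos (hnum_pos zs hzsne) (hdenp zs hzsS hzsne)
  have hm_le1 : m ≤ 1 := by
    have hki := key_id zs hzsS
    have h2 := Aux14.innerW_self_nonneg hwnn
      ((1 - PiProj f μ).mulVec ((hatP P μ).mulVec zs))
    rw [hm, div_le_one (hdenp zs hzsS hzsne)]
    linarith
  -- operator norm analysis
  have hM0 : ∀ x : Fin N → ℝ, ((1 - PiProj f μ) * Jop P f μ μ).mulVec x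
      = (1 - PiProj f μ).mulVec ((hatP P μ).mulVec ((1 - CoarseS P f μ μ).mulVec x)) := by
    intro x
    rw [Jop, Matrix.mulVec_mulVec, Matrix.mulVec_mulVec, ← Matrix.mul_assoc]
  have hbound : ∀ x, normW (fun i => (μ i)⁻¹) (((1 - PiProj f μ) * Jop P f μ μ).mulVec x)
      ≤ Real.sqrt (1 - m) * normW (fun i => (μ i)⁻¹) x := by
    intro x
    have hSz : (CoarseS P f μ μ).mulVec ((1 - CoarseS P f μ μ).mulVec x) = 0 :=
      (Aux14.S_range_iff P f μ hB _).1 ⟨x, rfl⟩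
    have hkey := key_id _ hSz
    have hnd : m * innerW (fun i => (μ i)⁻¹)
        ((1 - PiProj f μ).mulVec ((1 - CoarseS P f μ μ).mulVec x))
        ((1 - PiProj f μ).mulVec ((1 - CoarseS P f μ μ).mulVec x))
        ≤ innerW (fun i => (μ i)⁻¹) ((1 - CoarseS P f μ μ).mulVec x)
          ((1 - adjW μ (hatP P μ) * hatP P μ).mulVec ((1 - CoarseS P f μ μ).mulVec x)) := by
      by_cases hz0 : (1 - CoarseS P f μ μ).mulVec x = 0
      · rw [hz0]
        simp only [Matrix.mulVec_zero, Aux14.innerW_zero_right, mul_zero]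
        exact le_rfl
      · have hs := hscale _ hSz hz0
        rw [le_div_iff₀ (hdenp _ hSz hz0)] at hs
        linarith
    have hPix : (1 - PiProj f μ).mulVec ((1 - CoarseS P f μ μ).mulVec x)
        = (1 - PiProj f μ).mulVec x := by
      rw [Matrix.mulVec_mulVec, Aux14.one_sub_Pi_mul P f hf μ hμpos]
    have hle2 : innerW (fun i => (μ i)⁻¹) ((1 - PiProj f μ).mulVec x)
        ((1 - PiProj f μ).mulVec x) ≤ innerW (fun i => (μ i)⁻¹) x x :=
      Aux14.innerW_Pi_le f hf μ hμpos x
    have hle3 : innerW (fun i => (μ i)⁻¹)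
        (((1 - PiProj f μ) * Jop P f μ μ).mulVec x)
        (((1 - PiProj f μ) * Jop P f μ μ).mulVec x)
        ≤ (1 - m) * innerW (fun i => (μ i)⁻¹) x x := by
      rw [hM0 x]
      rw [hPix] at hkey hnd
      nlinarith [hle2, hm_le1]
    rw [normW, normW]
    calc Real.sqrt (innerW (fun i => (μ i)⁻¹)
          (((1 - PiProj f μ) * Jop P f μ μ).mulVec x)
          (((1 - PiProj f μ) * Jop P f μ μ).mulVec x))
        ≤ Real.sqrt ((1 - m) * innerW (fun i => (μ i)⁻¹) x x) := Real.sqrt_le_sqrt hle3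
      _ = Real.sqrt (1 - m) * Real.sqrt (innerW (fun i => (μ i)⁻¹) x x) :=
          Real.sqrt_mul (by linarith) _
  -- attainment at xs = (1 - Π) zs
  have hxsne : (1 - PiProj f μ).mulVec zs ≠ 0 :=
    Aux14.onePi_ne_zero P f hf μ hμpos hB hzsS hzsne
  have hfix : (1 - CoarseS P f μ μ).mulVec ((1 - PiProj f μ).mulVec zs) = zs := by
    rw [Matrix.mulVec_mulVec, Aux14.one_sub_S_mul P f hf μ hμpos hB,
      Matrix.sub_mulVec, Matrix.one_mulVec, hzsS, sub_zero]
  have hMxs : ((1 - PiProj f μ) * Jop P f μ μ).mulVec ((1 - PiProj f μ).mulVec zs)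
      = (1 - PiProj f μ).mulVec ((hatP P μ).mulVec zs) := by
    rw [hM0, hfix]
  have hnums : innerW (fun i => (μ i)⁻¹) zs
      ((1 - adjW μ (hatP P μ) * hatP P μ).mulVec zs)
      = m * innerW (fun i => (μ i)⁻¹) ((1 - PiProj f μ).mulVec zs)
        ((1 - PiProj f μ).mulVec zs) := by
    rw [hm, div_mul_cancel₀ _ (hdenp zs hzsS hzsne).ne']
  have hvv : innerW (fun i => (μ i)⁻¹)
      (((1 - PiProj f μ) * Jop P f μ μ).mulVec ((1 - PiProj f μ).mulVec zs))
      (((1 - PiProj f μ) * Jop P f μ μ).mulVec ((1 - PiProj f μ).mulVec zs))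
      = (1 - m) * innerW (fun i => (μ i)⁻¹) ((1 - PiProj f μ).mulVec zs)
          ((1 - PiProj f μ).mulVec zs) := by
    rw [hMxs]
    have hki := key_id zs hzsS
    linarith [hnums]
  have hnorm_eq : normW (fun i => (μ i)⁻¹)
      (((1 - PiProj f μ) * Jop P f μ μ).mulVec ((1 - PiProj f μ).mulVec zs))
      = Real.sqrt (1 - m) * normW (fun i => (μ i)⁻¹) ((1 - PiProj f μ).mulVec zs) := by
    rw [normW, normW, hvv, Real.sqrt_mul (by linarith)]
  have hxspos : 0 < normW (fun i => (μ i)⁻¹) ((1 - PiProj f μ).mulVec zs) :=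
    Real.sqrt_pos.2 (Aux14.innerW_self_pos hwpos hxsne)
  have hmemT : Real.sqrt (1 - m) ∈ {c | 0 ≤ c ∧ ∀ x,
      normW (fun i => (μ i)⁻¹) (((1 - PiProj f μ) * Jop P f μ μ).mulVec x)
        ≤ c * normW (fun i => (μ i)⁻¹) x} := ⟨Real.sqrt_nonneg _, hbound⟩
  have hlbT : ∀ c ∈ {c | 0 ≤ c ∧ ∀ x,
      normW (fun i => (μ i)⁻¹) (((1 - PiProj f μ) * Jop P f μ μ).mulVec x)
        ≤ c * normW (fun i => (μ i)⁻¹) x}, Real.sqrt (1 - m) ≤ c := by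
    rintro c ⟨hc0, hc⟩
    have h := hc ((1 - PiProj f μ).mulVec zs)
    rw [hnorm_eq] at h
    exact le_of_mul_le_mul_right h hxspos
  have hop : opNormW (fun i => (μ i)⁻¹) ((1 - PiProj f μ) * Jop P f μ μ)
      = Real.sqrt (1 - m) := by
    rw [opNormW]
    exact le_antisymm (csInf_le ⟨0, fun c hc => hc.1⟩ hmemT) (le_csInf ⟨_, hmemT⟩ hlbT)
  constructor
  · rw [hop, Real.sq_sqrt (by linarith : (0:ℝ) ≤ 1 - m), hInf]
  · rw [hop, Real.sq_sqrt (by linarith : (0:ℝ) ≤ 1 - m)]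
    linarith
end

section
/- Assume P and PᵀP are irreducible and at least one coarse state contains more than one fine state. Then ‖(I − Π(μ)) J(μ)‖²_{1/μ} ≤ 1 − 1/‖(I − Π(μ)) (I − P̂*P̂)^{−1} (I − Π(μ))‖_{1/μ}. -/
open Matrix BigOperators

namespace S15
open Finset
variable {N : ℕ}

open Finset
variable {N : ℕ}

lemma innerW_comm (w x y : Fin N → ℝ) : innerW w x y = innerW w y x := by
  unfold innerW; exact Finset.sum_congr rfl fun i _ => by ring

lemma innerW_self_nonneg {w : Fin N → ℝ} (hw : ∀ i, 0 ≤ w i) (x : Fin N → ℝ) :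
    0 ≤ innerW w x x :=
  Finset.sum_nonneg fun i _ => by nlinarith [hw i, sq_nonneg (x i)]

lemma innerW_CS {w : Fin N → ℝ} (hw : ∀ i, 0 ≤ w i) (x y : Fin N → ℝ) :
    innerW w x y ^ 2 ≤ innerW w x x * innerW w y y := by
  unfold innerW
  refine Finset.sum_sq_le_sum_mul_sum_of_sq_eq_mul _ (fun i _ => ?_) (fun i _ => ?_)
    (fun i _ => by ring)
  · nlinarith [hw i, sq_nonneg (x i)]
  · nlinarith [hw i, sq_nonneg (y i)]

lemma innerW_self_eq_zero {w : Fin N → ℝ} (hw : ∀ i, 0 < w i) {x : Fin N → ℝ}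
    (h : innerW w x x = 0) : x = 0 := by
  have := (Finset.sum_eq_zero_iff_of_nonneg
    (fun i _ => by nlinarith [(hw i).le, sq_nonneg (x i)] : ∀ i ∈ Finset.univ,
      (0:ℝ) ≤ x i * x i * w i)).1 h
  funext i
  have hi := this i (Finset.mem_univ i)
  have := (hw i).ne'
  have : x i * x i = 0 := by
    rcases mul_eq_zero.1 hi with h' | h'
    · exact h'
    · exact absurd h' this
  simpa [Pi.zero_apply, mul_self_eq_zero] using this

lemma innerW_add_left (w x y z : Fin N → ℝ) :
    innerW w (x + y) z = innerW w x z + innerW w y z := by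
  unfold innerW
  rw [← Finset.sum_add_distrib]
  exact Finset.sum_congr rfl fun i _ => by simp [Pi.add_apply]; ring

lemma innerW_sub_left (w x y z : Fin N → ℝ) :
    innerW w (x - y) z = innerW w x z - innerW w y z := by
  unfold innerW
  rw [← Finset.sum_sub_distrib]
  exact Finset.sum_congr rfl fun i _ => by simp [Pi.sub_apply]; ring

lemma innerW_smul_left (w : Fin N → ℝ) (t : ℝ) (x y : Fin N → ℝ) :
    innerW w (t • x) y = t * innerW w x y := by
  unfold innerW
  rw [Finset.mul_sum]
  exact Finset.sum_congr rfl fun i _ => by simp [Pi.smul_apply, smul_eq_mul]; ring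



open Finset
variable {N : ℕ}

lemma mulVec_apply (M : Matrix (Fin N) (Fin N) ℝ) (x : Fin N → ℝ) (i : Fin N) :
    M.mulVec x i = ∑ j, M i j * x j := rfl

lemma mulVecA {a b : Type*} [Fintype a] [Fintype b] (M : Matrix a b ℝ) (x : b → ℝ) (i : a) :
    M.mulVec x i = ∑ j, M i j * x j := rfl

lemma normW_le {w : Fin N → ℝ} {u v : Fin N → ℝ} {c : ℝ} (hc : 0 ≤ c)
    (h : innerW w u u ≤ c ^ 2 * innerW w v v) : normW w u ≤ c * normW w v := by
  unfold normW
  rw [show c * Real.sqrt (innerW w v v) = Real.sqrt (c ^ 2 * innerW w v v) by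
    rw [Real.sqrt_mul (sq_nonneg c), Real.sqrt_sq hc]]
  exact Real.sqrt_le_sqrt h

lemma of_normW_le {w : Fin N → ℝ} (hw : ∀ i, 0 ≤ w i) {u v : Fin N → ℝ} {c : ℝ}
    (h : normW w u ≤ c * normW w v) : innerW w u u ≤ c ^ 2 * innerW w v v := by
  have h1 : innerW w u u = normW w u ^ 2 := by
    rw [normW, Real.sq_sqrt (innerW_self_nonneg hw u)]
  have h2 : innerW w v v = normW w v ^ 2 := by
    rw [normW, Real.sq_sqrt (innerW_self_nonneg hw v)]
  rw [h1, h2]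
  have h0 : 0 ≤ normW w u := Real.sqrt_nonneg _
  nlinarith

lemma opNormW_nonneg (w : Fin N → ℝ) (M : Matrix (Fin N) (Fin N) ℝ) : 0 ≤ opNormW w M :=
  Real.sInf_nonneg fun _ hc => hc.1

lemma opNormW_exists_bound {w : Fin N → ℝ} (hw : ∀ i, 0 < w i) (M : Matrix (Fin N) (Fin N) ℝ) :
    ∃ c, 0 ≤ c ∧ ∀ x, normW w (M.mulVec x) ≤ c * normW w x := by
  refine ⟨Real.sqrt (∑ i, ∑ j, w i * (M i j ^ 2 / w j)), Real.sqrt_nonneg _, fun x => ?_⟩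
  refine normW_le (Real.sqrt_nonneg _) ?_
  rw [Real.sq_sqrt (Finset.sum_nonneg fun i _ => Finset.sum_nonneg fun j _ => by
    have := (hw i).le; have := (hw j).le; positivity)]
  unfold innerW
  rw [Finset.sum_mul]
  refine Finset.sum_le_sum fun i _ => ?_
  have key : (M.mulVec x i) ^ 2 ≤ (∑ j, M i j ^ 2 / w j) * ∑ j, x j * x j * w j := by
    rw [mulVec_apply]
    refine Finset.sum_sq_le_sum_mul_sum_of_sq_eq_mul _
      (fun j _ => by have := (hw j).le; positivity)
      (fun j _ => by nlinarith [(hw j).le, sq_nonneg (x j)]) (fun j _ => ?_)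
    rw [mul_pow]
    rw [div_mul_eq_mul_div, mul_comm (x j * x j) (w j), ← mul_assoc]
    field_simp [(hw j).ne']
  calc M.mulVec x i * M.mulVec x i * w i = w i * (M.mulVec x i) ^ 2 := by ring
    _ ≤ w i * ((∑ j, M i j ^ 2 / w j) * ∑ j, x j * x j * w j) :=
        mul_le_mul_of_nonneg_left key (hw i).le
    _ = (∑ j, w i * (M i j ^ 2 / w j)) * ∑ j, x j * x j * w j := by
        rw [← Finset.mul_sum, mul_assoc]

lemma opNormW_bound {w : Fin N → ℝ} (hw : ∀ i, 0 < w i) (M : Matrix (Fin N) (Fin N) ℝ)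
    (x : Fin N → ℝ) : normW w (M.mulVec x) ≤ opNormW w M * normW w x := by
  obtain ⟨c0, hc0, hb0⟩ := opNormW_exists_bound hw M
  have hne : Set.Nonempty {c | 0 ≤ c ∧ ∀ x, normW w (M.mulVec x) ≤ c * normW w x} :=
    ⟨c0, hc0, hb0⟩
  have hnn : (0:ℝ) ≤ normW w x := Real.sqrt_nonneg _
  rcases eq_or_lt_of_le hnn with h0 | h0
  · have := hb0 x
    rw [← h0, mul_zero] at this
    rw [← h0, mul_zero]
    exact this
  · rw [← div_le_iff₀ h0]
    exact le_csInf hne fun c hc => (div_le_iff₀ h0).2 (hc.2 x)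

lemma opNormW_le {w : Fin N → ℝ} {M : Matrix (Fin N) (Fin N) ℝ} {c : ℝ} (hc : 0 ≤ c)
    (hb : ∀ x, normW w (M.mulVec x) ≤ c * normW w x) : opNormW w M ≤ c :=
  csInf_le ⟨0, fun _ hd => hd.1⟩ ⟨hc, hb⟩



open Finset
variable {N : ℕ}

lemma innerW_double (w : Fin N → ℝ) (M : Matrix (Fin N) (Fin N) ℝ) (x y : Fin N → ℝ) :
    innerW w (M.mulVec x) y = ∑ i, ∑ j, M i j * x j * y i * w i := by
  unfold innerW
  refine Finset.sum_congr rfl fun i _ => ?_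
  rw [mulVec_apply, Finset.sum_mul, Finset.sum_mul]

lemma innerW_double' (w : Fin N → ℝ) (M : Matrix (Fin N) (Fin N) ℝ) (x y : Fin N → ℝ) :
    innerW w x (M.mulVec y) = ∑ i, ∑ j, M i j * y j * x i * w i := by
  unfold innerW
  refine Finset.sum_congr rfl fun i _ => ?_
  rw [mulVec_apply, Finset.mul_sum, Finset.sum_mul]
  exact Finset.sum_congr rfl fun j _ => by ring

lemma adjW_apply (μ : Fin N → ℝ) (M : Matrix (Fin N) (Fin N) ℝ) (i j : Fin N) :
    adjW μ M i j = μ i * M j i * (μ j)⁻¹ := by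
  simp [adjW, Matrix.mul_diagonal, Matrix.diagonal_mul, Matrix.transpose_apply]

lemma adj_spec {μ : Fin N → ℝ} (hμ : ∀ i, 0 < μ i) (M : Matrix (Fin N) (Fin N) ℝ)
    (x y : Fin N → ℝ) :
    innerW (fun i => (μ i)⁻¹) ((adjW μ M).mulVec x) y
      = innerW (fun i => (μ i)⁻¹) x (M.mulVec y) := by
  rw [innerW_double, innerW_double']
  rw [Finset.sum_comm]
  refine Finset.sum_congr rfl fun i _ => Finset.sum_congr rfl fun j _ => ?_
  rw [adjW_apply]
  field_simp [(hμ i).ne', (hμ j).ne']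

lemma symm_spec {w : Fin N → ℝ} {M : Matrix (Fin N) (Fin N) ℝ}
    (h : ∀ i j, w i * M i j = w j * M j i) (x y : Fin N → ℝ) :
    innerW w (M.mulVec x) y = innerW w x (M.mulVec y) := by
  rw [innerW_double, innerW_double', Finset.sum_comm]
  refine Finset.sum_congr rfl fun i _ => Finset.sum_congr rfl fun j _ => ?_
  linear_combination (x i * y j) * h j i

lemma innerW_expand (w a b : Fin N → ℝ) :
    innerW w (a - b) (a - b)
      = innerW w a a - 2 * innerW w a b + innerW w b b := by
  unfold innerW
  rw [Finset.mul_sum, ← Finset.sum_sub_distrib, ← Finset.sum_add_distrib]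
  exact Finset.sum_congr rfl fun i _ => by simp [Pi.sub_apply]; ring

lemma contraction_left {P : Matrix (Fin N) (Fin N) ℝ} {μ : Fin N → ℝ} (hP : ColStoch P)
    (hμ : ∀ i, 0 < μ i) (hinv : P.mulVec μ = μ) (x : Fin N → ℝ) :
    innerW (fun i => (μ i)⁻¹) (P.mulVec x) (P.mulVec x) ≤ innerW (fun i => (μ i)⁻¹) x x := by
  unfold innerW
  have key : ∀ i, (P.mulVec x i) ^ 2 ≤ μ i * ∑ j, P i j * (x j ^ 2 / μ j) := by
    intro i
    have := Finset.sum_sq_le_sum_mul_sum_of_sq_eq_mul (univ : Finset (Fin N))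
      (f := fun j => P i j * μ j) (g := fun j => P i j * (x j ^ 2 / μ j))
      (r := fun j => P i j * x j)
      (fun j _ => mul_nonneg (hP.1 i j) (hμ j).le)
      (fun j _ => mul_nonneg (hP.1 i j) (div_nonneg (sq_nonneg _) (hμ j).le))
      (fun j _ => by field_simp [(hμ j).ne'])
    have hs : ∑ j, P i j * μ j = μ i := by
      have := congrFun hinv i; rw [← this]; rfl
    rw [hs] at this
    rw [mulVec_apply]
    exact this
  calc ∑ i, P.mulVec x i * P.mulVec x i * (μ i)⁻¹
      ≤ ∑ i, ∑ j, P i j * (x j ^ 2 / μ j) := by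
        refine Finset.sum_le_sum fun i _ => ?_
        have h1 : P.mulVec x i * P.mulVec x i * (μ i)⁻¹ = (P.mulVec x i) ^ 2 * (μ i)⁻¹ := by ring
        rw [h1]
        calc (P.mulVec x i) ^ 2 * (μ i)⁻¹
            ≤ (μ i * ∑ j, P i j * (x j ^ 2 / μ j)) * (μ i)⁻¹ :=
              mul_le_mul_of_nonneg_right (key i) (inv_nonneg.2 (hμ i).le)
          _ = ∑ j, P i j * (x j ^ 2 / μ j) := by
              field_simp [(hμ i).ne']
    _ = ∑ j, x j * x j * (μ j)⁻¹ := by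
        rw [Finset.sum_comm]
        refine Finset.sum_congr rfl fun j _ => ?_
        rw [← Finset.sum_mul, hP.2 j]
        field_simp [(hμ j).ne']

lemma contraction_right {P : Matrix (Fin N) (Fin N) ℝ} {μ : Fin N → ℝ} (hP : ColStoch P)
    (hμ : ∀ i, 0 < μ i) (hinv : P.mulVec μ = μ) (u : Fin N → ℝ) :
    innerW (fun i => (μ i)⁻¹) ((adjW μ P).mulVec u) ((adjW μ P).mulVec u)
      ≤ innerW (fun i => (μ i)⁻¹) u u := by
  unfold innerW
  have hrow : ∀ i, (adjW μ P).mulVec u i = μ i * ∑ k, P k i * (u k / μ k) := by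
    intro i
    rw [mulVec_apply, Finset.mul_sum]
    exact Finset.sum_congr rfl fun k _ => by rw [adjW_apply]; field_simp
  have key : ∀ i, (∑ k, P k i * (u k / μ k)) ^ 2 ≤ ∑ k, P k i * (u k / μ k) ^ 2 := by
    intro i
    have := Finset.sum_sq_le_sum_mul_sum_of_sq_eq_mul (univ : Finset (Fin N))
      (f := fun k => P k i) (g := fun k => P k i * (u k / μ k) ^ 2)
      (r := fun k => P k i * (u k / μ k))
      (fun k _ => hP.1 k i) (fun k _ => mul_nonneg (hP.1 k i) (sq_nonneg _))
      (fun k _ => by ring)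
    rw [hP.2 i, one_mul] at this
    exact this
  calc ∑ i, (adjW μ P).mulVec u i * (adjW μ P).mulVec u i * (μ i)⁻¹
      ≤ ∑ i, μ i * ∑ k, P k i * (u k / μ k) ^ 2 := by
        refine Finset.sum_le_sum fun i _ => ?_
        rw [hrow i]
        have h1 : μ i * (∑ k, P k i * (u k / μ k)) * (μ i * (∑ k, P k i * (u k / μ k))) * (μ i)⁻¹
            = μ i * (∑ k, P k i * (u k / μ k)) ^ 2 := by
          field_simp [(hμ i).ne']
        rw [h1]
        exact mul_le_mul_of_nonneg_left (key i) (hμ i).le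
    _ = ∑ k, u k * u k * (μ k)⁻¹ := by
        simp only [Finset.mul_sum]
        rw [Finset.sum_comm]
        refine Finset.sum_congr rfl fun k _ => ?_
        have hthis : ∀ i, μ i * (P k i * (u k / μ k) ^ 2) = P k i * μ i * ((u k / μ k) ^ 2) :=
          fun i => by ring
        rw [Finset.sum_congr rfl fun i _ => hthis i, ← Finset.sum_mul]
        have hs : ∑ i, P k i * μ i = μ k := by
          have := congrFun hinv k; rw [← this]; rfl
        rw [hs]
        field_simp [(hμ k).ne']


lemma pow_entry_nonneg {A : Matrix (Fin N) (Fin N) ℝ} (hA : ∀ i j, 0 ≤ A i j) :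
    ∀ m i j, 0 ≤ (A ^ m) i j := by
  intro m
  induction m with
  | zero =>
      intro i j
      rw [pow_zero]
      by_cases hij : i = j
      · subst hij; simp [Matrix.one_apply_eq]
      · simp [Matrix.one_apply_ne hij]
  | succ m ih =>
      intro i j
      rw [pow_succ, Matrix.mul_apply]
      exact Finset.sum_nonneg fun k _ => mul_nonneg (ih i k) (hA k j)

lemma pow_pattern {A B : Matrix (Fin N) (Fin N) ℝ} (hA : ∀ i j, 0 ≤ A i j)
    (hB : ∀ i j, 0 ≤ B i j) (hAB : ∀ i j, A i j ≠ 0 → 0 < B i j) :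
    ∀ m i j, (A ^ m) i j ≠ 0 → 0 < (B ^ m) i j := by
  intro m
  induction m with
  | zero =>
      intro i j h
      rw [pow_zero] at h ⊢
      by_cases hij : i = j
      · subst hij; simp [Matrix.one_apply_eq]
      · exact absurd (Matrix.one_apply_ne hij) h
  | succ m ih =>
      intro i j h
      rw [pow_succ, Matrix.mul_apply] at h
      obtain ⟨k, _, hk⟩ := Finset.exists_ne_zero_of_sum_ne_zero h
      have h1 : (A ^ m) i k ≠ 0 := left_ne_zero_of_mul hk
      have h2 : A k j ≠ 0 := right_ne_zero_of_mul hk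
      rw [pow_succ, Matrix.mul_apply]
      refine lt_of_lt_of_le (mul_pos (ih i k h1) (hAB k j h2)) ?_
      exact Finset.single_le_sum
        (f := fun l => (B ^ m) i l * B l j)
        (fun l _ => mul_nonneg (pow_entry_nonneg hB m i l) (hB l j)) (Finset.mem_univ k)

lemma pow_mulVec_fixed {A : Matrix (Fin N) (Fin N) ℝ} {y : Fin N → ℝ} (h : A.mulVec y = y) :
    ∀ m, (A ^ m).mulVec y = y := by
  intro m
  induction m with
  | zero => simp
  | succ m ih => rw [pow_succ, ← Matrix.mulVec_mulVec, h, ih]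

lemma innerW_self_eq_zero' {w : Fin N → ℝ} (hw : ∀ i, 0 < w i) {x : Fin N → ℝ}
    (h : innerW w x x ≤ 0) : x = 0 :=
  innerW_self_eq_zero hw (le_antisymm h (innerW_self_nonneg (fun i => (hw i).le) x))

lemma key_lemma {P : Matrix (Fin N) (Fin N) ℝ} {μ : Fin N → ℝ} (hP : ColStoch P)
    (hirr2 : Irred (Pᵀ * P)) (hμ : ∀ i, 0 < μ i) (hinv : P.mulVec μ = μ)
    (hNe : (Finset.univ : Finset (Fin N)).Nonempty) {z : Fin N → ℝ}
    (hz : innerW (fun i => (μ i)⁻¹) z z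
      ≤ innerW (fun i => (μ i)⁻¹) (P.mulVec z) (P.mulVec z)) :
    ∃ t : ℝ, z = t • μ := by
  have hwpos : ∀ i, (0:ℝ) < (fun i => (μ i)⁻¹) i := fun i => inv_pos.2 (hμ i)
  set w : Fin N → ℝ := fun i => (μ i)⁻¹ with hwdef
  set M := adjW μ P * P with hMdef
  have hMvv : ∀ v : Fin N → ℝ, M.mulVec v = (adjW μ P).mulVec (P.mulVec v) := fun v => by
    rw [Matrix.mulVec_mulVec]
  have hMzz : innerW w (M.mulVec z) z = innerW w (P.mulVec z) (P.mulVec z) := by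
    rw [hMvv z]
    exact adj_spec hμ P (P.mulVec z) z
  have hMz2 : innerW w (M.mulVec z) (M.mulVec z) ≤ innerW w z z := by
    rw [hMvv z]
    exact le_trans (contraction_right hP hμ hinv (P.mulVec z)) (contraction_left hP hμ hinv z)
  have hfix : M.mulVec z = z := by
    have hexp := innerW_expand w (M.mulVec z) z
    have : innerW w (M.mulVec z - z) (M.mulVec z - z) ≤ 0 := by
      rw [hexp, hMzz]; linarith
    have h0 := innerW_self_eq_zero' hwpos this
    funext i
    have := congrFun h0 i
    simpa [Pi.sub_apply, sub_eq_zero] using this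
  have hMapply : ∀ i j, M i j = ∑ k, μ i * P k i * (μ k)⁻¹ * P k j := by
    intro i j
    rw [hMdef, Matrix.mul_apply]
    exact Finset.sum_congr rfl fun k _ => by rw [adjW_apply]
  have hMnn : ∀ i j, 0 ≤ M i j := by
    intro i j
    rw [hMapply]
    exact Finset.sum_nonneg fun k _ => by
      have := hP.1 k i; have := hP.1 k j; have := (hμ i).le; have h4 := inv_nonneg.2 (hμ k).le
      positivity
  have hPtP : ∀ i j, (Pᵀ * P) i j = ∑ k, P k i * P k j := by
    intro i j
    rw [Matrix.mul_apply]
    exact Finset.sum_congr rfl fun k _ => by rw [Matrix.transpose_apply]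
  have hPtPnn : ∀ i j, 0 ≤ (Pᵀ * P) i j := by
    intro i j
    rw [hPtP]
    exact Finset.sum_nonneg fun k _ => mul_nonneg (hP.1 k i) (hP.1 k j)
  have hpat : ∀ i j, (Pᵀ * P) i j ≠ 0 → 0 < M i j := by
    intro i j h
    rw [hPtP] at h
    obtain ⟨k, _, hk⟩ := Finset.exists_ne_zero_of_sum_ne_zero h
    have h1 : 0 < P k i := lt_of_le_of_ne (hP.1 k i) (Ne.symm (left_ne_zero_of_mul hk))
    have h2 : 0 < P k j := lt_of_le_of_ne (hP.1 k j) (Ne.symm (right_ne_zero_of_mul hk))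
    rw [hMapply]
    refine lt_of_lt_of_le ?_ (Finset.single_le_sum
      (f := fun k => μ i * P k i * (μ k)⁻¹ * P k j)
      (fun l _ => by
        have := hP.1 l i; have := hP.1 l j; have := (hμ i).le
        have h4 := inv_nonneg.2 (hμ l).le; positivity)
      (Finset.mem_univ k))
    have := hμ i; have h4 := inv_pos.2 (hμ k)
    positivity
  have hMμ : M.mulVec μ = μ := by
    rw [hMvv μ, hinv]
    funext i
    rw [mulVec_apply]
    have hterm : ∀ j, adjW μ P i j * μ j = μ i * P j i := fun j => by
      rw [adjW_apply]; field_simp [(hμ j).ne']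
    rw [Finset.sum_congr rfl fun j _ => hterm j, ← Finset.mul_sum, hP.2 i, mul_one]
  obtain ⟨k, _, hkmax⟩ := Finset.exists_max_image Finset.univ (fun i => z i / μ i) hNe
  set t := z k / μ k with htdef
  set y : Fin N → ℝ := t • μ - z with hydef
  have hy0 : ∀ i, 0 ≤ y i := by
    intro i
    have := hkmax i (Finset.mem_univ i)
    have h2 : z i ≤ t * μ i := (div_le_iff₀ (hμ i)).1 this
    simp only [hydef, Pi.sub_apply, Pi.smul_apply, smul_eq_mul]
    linarith
  have hyk : y k = 0 := by
    simp only [hydef, Pi.sub_apply, Pi.smul_apply, smul_eq_mul, htdef]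
    field_simp [(hμ k).ne']
    ring
  have hMy : M.mulVec y = y := by
    rw [hydef, Matrix.mulVec_sub, Matrix.mulVec_smul, hMμ, hfix]
  have hyzero : ∀ j, y j = 0 := by
    intro j
    obtain ⟨m, _, hmne⟩ := hirr2 k j
    have hpos := pow_pattern hPtPnn hMnn hpat m k j hmne
    have hfx : (M ^ m).mulVec y k = y k := by rw [pow_mulVec_fixed hMy m]
    have hsum : ∑ l, (M ^ m) k l * y l = 0 := by
      rw [← mulVec_apply, hfx, hyk]
    have hle : (M ^ m) k j * y j ≤ 0 := by
      rw [← hsum]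
      exact Finset.single_le_sum
        (f := fun l => (M ^ m) k l * y l)
        (fun l _ => mul_nonneg (pow_entry_nonneg hMnn m k l) (hy0 l)) (Finset.mem_univ j)
    have hge : 0 ≤ (M ^ m) k j * y j := mul_nonneg hpos.le (hy0 j)
    have := le_antisymm hle hge
    exact (mul_eq_zero.1 this).resolve_left hpos.ne'
  refine ⟨t, ?_⟩
  funext j
  have := hyzero j
  simp only [hydef, Pi.sub_apply, Pi.smul_apply, smul_eq_mul] at this
  simp [Pi.smul_apply, smul_eq_mul]
  linarith

section AggStuff
variable {n : ℕ} (f : Fin N → Fin n) (μ : Fin N → ℝ)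

lemma Agg_mulVec_apply (v : Fin N → ℝ) (c : Fin n) :
    (Agg f).mulVec v c = ∑ j, if f j = c then v j else 0 := by
  rw [mulVecA]
  exact Finset.sum_congr rfl fun j _ => by simp [Agg]

lemma m_pos (hf : Function.Surjective f) (hμ : ∀ i, 0 < μ i) (c : Fin n) :
    0 < (Agg f).mulVec μ c := by
  obtain ⟨a, ha⟩ := hf c
  rw [Agg_mulVec_apply]
  refine lt_of_lt_of_le ?_ (Finset.single_le_sum
    (f := fun j => if f j = c then μ j else 0)
    (fun j _ => by split <;> [exact (hμ j).le; rfl]) (Finset.mem_univ a))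
  show (0:ℝ) < if f a = c then μ a else 0
  rw [if_pos ha]
  exact hμ a

lemma hAD (hf : Function.Surjective f) (hμ : ∀ i, 0 < μ i) :
    Agg f * Disagg f μ = 1 := by
  ext c d
  rw [Matrix.mul_apply]
  have hterm : ∀ j, Agg f c j * Disagg f μ j d
      = if f j = c ∧ f j = d then μ j / (Agg f).mulVec μ d else 0 := by
    intro j
    simp only [Agg, Disagg]
    by_cases h1 : f j = c <;> by_cases h2 : f j = d <;> simp [h1, h2]
  rw [Finset.sum_congr rfl fun j _ => hterm j]
  by_cases hcd : c = d
  · subst hcd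
    simp only [and_self]
    rw [Matrix.one_apply_eq]
    have hterm2 : ∀ j, (if f j = c then μ j / (Agg f).mulVec μ c else 0)
        = (if f j = c then μ j else 0) / (Agg f).mulVec μ c := by
      intro j; split <;> simp
    rw [Finset.sum_congr rfl fun j _ => hterm2 j, ← Finset.sum_div]
    rw [div_eq_one_iff_eq (m_pos f μ hf hμ c).ne']
    rw [Agg_mulVec_apply]
  · rw [Matrix.one_apply_ne hcd]
    refine Finset.sum_eq_zero fun j _ => ?_
    rw [if_neg]
    rintro ⟨h1, h2⟩
    exact hcd (h1 ▸ h2 ▸ rfl)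

lemma hPiD (hf : Function.Surjective f) (hμ : ∀ i, 0 < μ i) :
    PiProj f μ * Disagg f μ = Disagg f μ := by
  rw [PiProj, Matrix.mul_assoc, hAD f μ hf hμ, Matrix.mul_one]

lemma hPiPi (hf : Function.Surjective f) (hμ : ∀ i, 0 < μ i) :
    PiProj f μ * PiProj f μ = PiProj f μ := by
  rw [PiProj, ← Matrix.mul_assoc, Matrix.mul_assoc (Disagg f μ) (Agg f) (Disagg f μ),
    hAD f μ hf hμ, Matrix.mul_one]

lemma Pi_apply (j k : Fin N) :
    PiProj f μ j k = if f j = f k then μ j / (Agg f).mulVec μ (f j) else 0 := by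
  rw [PiProj, Matrix.mul_apply]
  rw [Finset.sum_eq_single (f j)]
  · show (if f j = f j then μ j / (Agg f).mulVec μ (f j) else 0)
        * (if f k = f j then (1:ℝ) else 0)
      = if f j = f k then μ j / (Agg f).mulVec μ (f j) else 0
    rw [if_pos rfl]
    by_cases h : f j = f k
    · rw [if_pos h.symm, mul_one, if_pos h]
    · rw [if_neg (fun hh => h hh.symm), mul_zero, if_neg h]
  · intro c _ hc
    show (if f j = c then μ j / (Agg f).mulVec μ c else 0) * (if f k = c then (1:ℝ) else 0) = 0
    rw [if_neg (fun h : f j = c => hc h.symm), zero_mul]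
  · intro h
    exact absurd (Finset.mem_univ (f j)) h

lemma Pi_symm (hμ : ∀ i, 0 < μ i) (j k : Fin N) :
    (μ j)⁻¹ * PiProj f μ j k = (μ k)⁻¹ * PiProj f μ k j := by
  rw [Pi_apply, Pi_apply]
  by_cases h : f j = f k
  · rw [if_pos h, if_pos h.symm, h]
    field_simp
    rw [div_mul_cancel_left₀ (hμ j).ne', mul_comm, div_mul_cancel_left₀ (hμ k).ne']
  · rw [if_neg h, if_neg (fun hh => h hh.symm), mul_zero, mul_zero]

lemma Pi_mu (hμ : ∀ i, 0 < μ i) : (PiProj f μ).mulVec μ = μ := by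
  funext j
  rw [mulVec_apply]
  have hterm : ∀ k, PiProj f μ j k * μ k
      = (μ j / (Agg f).mulVec μ (f j)) * (if f k = f j then μ k else 0) := by
    intro k
    rw [Pi_apply]
    by_cases h : f j = f k
    · rw [if_pos h, if_pos h.symm]
    · rw [if_neg h, if_neg (fun hh => h hh.symm), zero_mul, mul_zero]
  have hmpos : (0:ℝ) < (Agg f).mulVec μ (f j) := by
    rw [Agg_mulVec_apply]
    refine lt_of_lt_of_le ?_ (Finset.single_le_sum
      (f := fun k => if f k = f j then μ k else 0)
      (fun k _ => by split <;> [exact (hμ k).le; rfl]) (Finset.mem_univ j))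
    show (0:ℝ) < if f j = f j then μ j else 0
    rw [if_pos rfl]; exact hμ j
  rw [Finset.sum_congr rfl fun k _ => hterm k, ← Finset.mul_sum, ← Agg_mulVec_apply]
  exact div_mul_cancel₀ (μ j) hmpos.ne'

end AggStuff

section MainIdent
variable {n : ℕ}

lemma hatP_mulVec (P : Matrix (Fin N) (Fin N) ℝ) (μ : Fin N → ℝ) (x : Fin N → ℝ) :
    (hatP P μ).mulVec x = P.mulVec x - (∑ j, x j) • μ := by
  rw [hatP, Matrix.sub_mulVec]
  congr 1
  funext i
  rw [mulVecA]
  simp only [vecMulVec_apply, Pi.one_apply, mul_one, Pi.smul_apply, smul_eq_mul]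
  rw [← Finset.mul_sum, mul_comm]

lemma sum_Agg (f : Fin N → Fin n) (v : Fin N → ℝ) :
    ∑ c, (Agg f).mulVec v c = ∑ j, v j := by
  simp only [Agg_mulVec_apply]
  rw [Finset.sum_comm]
  refine Finset.sum_congr rfl fun j _ => ?_
  rw [Finset.sum_ite_eq]
  simp

lemma sum_Disagg (f : Fin N → Fin n) (μ : Fin N → ℝ) (hf : Function.Surjective f)
    (hμ : ∀ i, 0 < μ i) (x : Fin n → ℝ) :
    ∑ j, (Disagg f μ).mulVec x j = ∑ c, x c := by
  simp only [mulVecA]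
  rw [Finset.sum_comm]
  refine Finset.sum_congr rfl fun c _ => ?_
  have hterm : ∀ j, Disagg f μ j c * x c
      = (if f j = c then μ j else 0) * (x c / (Agg f).mulVec μ c) := by
    intro j
    simp only [Disagg]
    split
    · ring
    · rw [zero_mul, zero_mul]
  rw [Finset.sum_congr rfl fun j _ => hterm j, ← Finset.sum_mul, ← Agg_mulVec_apply,
    mul_comm, div_mul_cancel₀ _ (m_pos f μ hf hμ c).ne']

lemma sum_P {P : Matrix (Fin N) (Fin N) ℝ} (hP : ColStoch P) (v : Fin N → ℝ) :
    ∑ i, P.mulVec v i = ∑ j, v j := by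
  simp only [mulVec_apply]
  rw [Finset.sum_comm]
  refine Finset.sum_congr rfl fun j _ => ?_
  rw [← Finset.sum_mul, hP.2 j, one_mul]

lemma sum_hatP {P : Matrix (Fin N) (Fin N) ℝ} {μ : Fin N → ℝ} (hP : ColStoch P)
    (hμsum : ∑ i, μ i = 1) (x : Fin N → ℝ) :
    ∑ i, (hatP P μ).mulVec x i = 0 := by
  rw [hatP_mulVec]
  simp only [Pi.sub_apply, Pi.smul_apply, smul_eq_mul]
  rw [Finset.sum_sub_distrib, sum_P hP, ← Finset.mul_sum, hμsum, mul_one, sub_self]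

lemma Pi_mulVec_idem (f : Fin N → Fin n) (μ : Fin N → ℝ) (hf : Function.Surjective f)
    (hμ : ∀ i, 0 < μ i) (v : Fin N → ℝ) :
    (PiProj f μ).mulVec ((PiProj f μ).mulVec v) = (PiProj f μ).mulVec v := by
  rw [Matrix.mulVec_mulVec, hPiPi f μ hf hμ]

lemma Pi_inner (f : Fin N → Fin n) (μ : Fin N → ℝ) (hf : Function.Surjective f)
    (hμ : ∀ i, 0 < μ i) (v : Fin N → ℝ) :
    innerW (fun i => (μ i)⁻¹) ((PiProj f μ).mulVec v) ((PiProj f μ).mulVec v)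
      = innerW (fun i => (μ i)⁻¹) v ((PiProj f μ).mulVec v) := by
  have h := symm_spec (M := PiProj f μ) (w := fun i => (μ i)⁻¹)
    (Pi_symm f μ hμ) v ((PiProj f μ).mulVec v)
  rw [Pi_mulVec_idem f μ hf hμ] at h
  exact h

lemma Pi_contract (f : Fin N → Fin n) (μ : Fin N → ℝ) (hf : Function.Surjective f)
    (hμ : ∀ i, 0 < μ i) (v : Fin N → ℝ) :
    innerW (fun i => (μ i)⁻¹) ((PiProj f μ).mulVec v) ((PiProj f μ).mulVec v)
      ≤ innerW (fun i => (μ i)⁻¹) v v := by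
  set w : Fin N → ℝ := fun i => (μ i)⁻¹ with hw
  have hwnn : ∀ i, 0 ≤ w i := fun i => inv_nonneg.2 (hμ i).le
  have hpi := Pi_inner f μ hf hμ v
  have hcs := innerW_CS hwnn v ((PiProj f μ).mulVec v)
  rw [← hpi] at hcs
  have ha0 : 0 ≤ innerW w ((PiProj f μ).mulVec v) ((PiProj f μ).mulVec v) :=
    innerW_self_nonneg hwnn _
  have hc0 : 0 ≤ innerW w v v := innerW_self_nonneg hwnn v
  rcases eq_or_lt_of_le ha0 with h0 | h0
  · rw [← h0]; exact hc0
  · nlinarith [hcs, h0]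

lemma E_unit {P : Matrix (Fin N) (Fin N) ℝ} {μ : Fin N → ℝ} (f : Fin N → Fin n)
    (hP : ColStoch P) (hirr2 : Irred (Pᵀ * P)) (hμ : ∀ i, 0 < μ i)
    (hμsum : ∑ i, μ i = 1) (hinv : P.mulVec μ = μ) (hf : Function.Surjective f)
    (hNe : (Finset.univ : Finset (Fin N)).Nonempty) :
    IsUnit (Agg f * (1 - P + vecMulVec μ 1) * Disagg f μ).det := by
  set K : Matrix (Fin N) (Fin N) ℝ := 1 - P + vecMulVec μ 1 with hKdef
  have hK : K = 1 - hatP P μ := by rw [hKdef, hatP]; abel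
  rw [isUnit_iff_ne_zero]
  intro hd
  obtain ⟨x, hx0, hx⟩ := Matrix.exists_mulVec_eq_zero_iff.2 hd
  set z := (Disagg f μ).mulVec x with hz
  have hEx : (Agg f).mulVec (K.mulVec z) = 0 := by
    rw [hz, Matrix.mulVec_mulVec, Matrix.mulVec_mulVec]
    exact hx
  have hKz' : ∀ v : Fin N → ℝ, K.mulVec v = v - (hatP P μ).mulVec v := fun v => by
    rw [hK, Matrix.sub_mulVec, Matrix.one_mulVec]
  have hσ : ∑ c, x c = 0 := by
    have h1 : ∑ c, ((Agg f).mulVec (K.mulVec z)) c = 0 := by rw [hEx]; simp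
    rw [sum_Agg] at h1
    have h2 : ∑ i, K.mulVec z i = ∑ j, z j := by
      rw [hKz' z]
      simp only [Pi.sub_apply]
      rw [Finset.sum_sub_distrib, sum_hatP hP hμsum, sub_zero]
    rw [h2, hz, sum_Disagg f μ hf hμ] at h1
    exact h1
  have hsz : ∑ j, z j = 0 := by rw [hz, sum_Disagg f μ hf hμ]; exact hσ
  have hPz : (hatP P μ).mulVec z = P.mulVec z := by
    rw [hatP_mulVec, hsz, zero_smul, sub_zero]
  have hPicz : (PiProj f μ).mulVec z = z := by
    rw [hz, Matrix.mulVec_mulVec, hPiD f μ hf hμ]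
  have hPicKz : (PiProj f μ).mulVec (K.mulVec z) = 0 := by
    rw [PiProj, ← Matrix.mulVec_mulVec, hEx, Matrix.mulVec_zero]
  have hzPz : z = (PiProj f μ).mulVec (P.mulVec z) := by
    rw [hKz' z, hPz, Matrix.mulVec_sub, hPicz] at hPicKz
    exact (sub_eq_zero.1 hPicKz)
  have hcontr : innerW (fun i => (μ i)⁻¹) z z
      ≤ innerW (fun i => (μ i)⁻¹) (P.mulVec z) (P.mulVec z) := by
    calc innerW (fun i => (μ i)⁻¹) z z
        = innerW (fun i => (μ i)⁻¹) ((PiProj f μ).mulVec (P.mulVec z))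
            ((PiProj f μ).mulVec (P.mulVec z)) := by rw [← hzPz]
      _ ≤ innerW (fun i => (μ i)⁻¹) (P.mulVec z) (P.mulVec z) :=
          Pi_contract f μ hf hμ (P.mulVec z)
  obtain ⟨t, ht⟩ := key_lemma hP hirr2 hμ hinv hNe hcontr
  have ht0 : t = 0 := by
    have : ∑ j, z j = t := by
      rw [ht]
      simp only [Pi.smul_apply, smul_eq_mul]
      rw [← Finset.mul_sum, hμsum, mul_one]
    rw [hsz] at this
    exact this.symm
  have hz0 : z = 0 := by rw [ht, ht0, zero_smul]
  have hxz : x = (Agg f).mulVec z := by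
    rw [hz, Matrix.mulVec_mulVec, hAD f μ hf hμ, Matrix.one_mulVec]
  rw [hz0, Matrix.mulVec_zero] at hxz
  exact hx0 hxz

end MainIdent

lemma innerW_smul_right (w : Fin N → ℝ) (t : ℝ) (x y : Fin N → ℝ) :
    innerW w x (t • y) = t * innerW w x y := by
  rw [innerW_comm, innerW_smul_left, innerW_comm]

lemma innerW_add_right (w x y z : Fin N → ℝ) :
    innerW w x (y + z) = innerW w x y + innerW w x z := by
  rw [innerW_comm, innerW_add_left, innerW_comm w y x, innerW_comm w z x]

lemma innerW_sub_right (w x y z : Fin N → ℝ) :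
    innerW w x (y - z) = innerW w x y - innerW w x z := by
  rw [innerW_comm, innerW_sub_left, innerW_comm w y x, innerW_comm w z x]

lemma innerW_self_pos {w : Fin N → ℝ} (hw : ∀ i, 0 < w i) {v : Fin N → ℝ} (hv : v ≠ 0) :
    0 < innerW w v v :=
  lt_of_le_of_ne (innerW_self_nonneg (fun i => (hw i).le) v)
    (fun h => hv (innerW_self_eq_zero hw h.symm))

lemma inner_mu {μ : Fin N → ℝ} (hμ : ∀ i, 0 < μ i) (x : Fin N → ℝ) :
    innerW (fun i => (μ i)⁻¹) x μ = ∑ i, x i := by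
  unfold innerW
  exact Finset.sum_congr rfl fun i _ => by
    rw [mul_assoc, mul_inv_cancel₀ (hμ i).ne', mul_one]

lemma bilin_CS {w : Fin N → ℝ} {R : Matrix (Fin N) (Fin N) ℝ}
    (hsym : ∀ u v, innerW w (R.mulVec u) v = innerW w u (R.mulVec v))
    (hpos : ∀ u, 0 ≤ innerW w u (R.mulVec u)) (u v : Fin N → ℝ) :
    innerW w u (R.mulVec v) ^ 2 ≤ innerW w u (R.mulVec u) * innerW w v (R.mulVec v) := by
  have hsym' : ∀ a b : Fin N → ℝ, innerW w a (R.mulVec b) = innerW w b (R.mulVec a) := by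
    intro a b
    rw [← hsym a b, innerW_comm]
  have key : ∀ s : ℝ, 0 ≤ innerW w v (R.mulVec v) * (s * s)
      + (2 * innerW w u (R.mulVec v)) * s + innerW w u (R.mulVec u) := by
    intro s
    have h0 := hpos (u + s • v)
    rw [Matrix.mulVec_add, Matrix.mulVec_smul, innerW_add_left, innerW_add_right,
      innerW_add_right, innerW_smul_right, innerW_smul_left, innerW_smul_left,
      innerW_smul_right] at h0
    have huv : innerW w v (R.mulVec u) = innerW w u (R.mulVec v) := hsym' v u
    rw [huv] at h0
    nlinarith [h0]
  have hd := discrim_le_zero key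
  rw [discrim] at hd
  nlinarith [hd]

lemma hatP_contract {P : Matrix (Fin N) (Fin N) ℝ} {μ : Fin N → ℝ} (hP : ColStoch P)
    (hμ : ∀ i, 0 < μ i) (hμsum : ∑ i, μ i = 1) (hinv : P.mulVec μ = μ) (x : Fin N → ℝ) :
    innerW (fun i => (μ i)⁻¹) ((hatP P μ).mulVec x) ((hatP P μ).mulVec x)
      ≤ innerW (fun i => (μ i)⁻¹) x x - (∑ j, x j) ^ 2 := by
  set w : Fin N → ℝ := fun i => (μ i)⁻¹ with hwdef
  set s := ∑ j, x j with hs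
  have h1 : (hatP P μ).mulVec x = P.mulVec (x - s • μ) := by
    rw [Matrix.mulVec_sub, Matrix.mulVec_smul, hinv, hatP_mulVec]
  have hxmu : innerW w x μ = s := inner_mu hμ x
  have hmumu : innerW w μ μ = 1 := by rw [inner_mu hμ μ, hμsum]
  have h2 : innerW w (x - s • μ) (x - s • μ) = innerW w x x - s ^ 2 := by
    rw [innerW_expand, innerW_smul_right, innerW_smul_left, innerW_smul_right,
      hxmu, hmumu]
    ring
  rw [h1]
  exact le_trans (contraction_left hP hμ hinv _) (le_of_eq h2)

lemma R_unit {P : Matrix (Fin N) (Fin N) ℝ} {μ : Fin N → ℝ} (hP : ColStoch P)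
    (hirr2 : Irred (Pᵀ * P)) (hμ : ∀ i, 0 < μ i) (hμsum : ∑ i, μ i = 1)
    (hinv : P.mulVec μ = μ) (hNe : (Finset.univ : Finset (Fin N)).Nonempty) :
    IsUnit (1 - adjW μ (hatP P μ) * hatP P μ).det := by
  rw [isUnit_iff_ne_zero]
  intro hd
  obtain ⟨x, hx0, hx⟩ := Matrix.exists_mulVec_eq_zero_iff.2 hd
  set w : Fin N → ℝ := fun i => (μ i)⁻¹ with hwdef
  have hTx : (adjW μ (hatP P μ) * hatP P μ).mulVec x = x := by
    rw [Matrix.sub_mulVec, Matrix.one_mulVec] at hx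
    have := sub_eq_zero.1 hx
    exact this.symm
  have hTi : innerW w ((adjW μ (hatP P μ) * hatP P μ).mulVec x) x
      = innerW w ((hatP P μ).mulVec x) ((hatP P μ).mulVec x) := by
    rw [← Matrix.mulVec_mulVec]
    exact adj_spec hμ (hatP P μ) ((hatP P μ).mulVec x) x
  rw [hTx] at hTi
  have hcon := hatP_contract hP hμ hμsum hinv x
  have hs : ∑ j, x j = 0 := by nlinarith [sq_nonneg (∑ j, x j)]
  have hHP : (hatP P μ).mulVec x = P.mulVec x := by
    rw [hatP_mulVec, hs, zero_smul, sub_zero]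
  rw [hHP] at hTi
  obtain ⟨t, ht⟩ := key_lemma hP hirr2 hμ hinv hNe (le_of_eq hTi)
  have ht0 : t = 0 := by
    have h2 : ∑ j, x j = t := by
      rw [ht]
      simp only [Pi.smul_apply, smul_eq_mul]
      rw [← Finset.mul_sum, hμsum, mul_one]
    rw [hs] at h2
    exact h2.symm
  rw [ht, ht0, zero_smul] at hx0
  exact hx0 rfl

section Final
variable {n : ℕ} {P : Matrix (Fin N) (Fin N) ℝ} {μ : Fin N → ℝ} {f : Fin N → Fin n}

lemma Q_symm (hμ : ∀ i, 0 < μ i) (i j : Fin N) :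
    (μ i)⁻¹ * (1 - PiProj f μ) i j = (μ j)⁻¹ * (1 - PiProj f μ) j i := by
  rw [Matrix.sub_apply, Matrix.sub_apply, mul_sub, mul_sub, Pi_symm f μ hμ i j]
  congr 1
  by_cases h : i = j
  · subst h; rfl
  · rw [Matrix.one_apply_ne h, Matrix.one_apply_ne (Ne.symm h), mul_zero, mul_zero]

lemma Q_inner (hμ : ∀ i, 0 < μ i) (u v : Fin N → ℝ) :
    innerW (fun i => (μ i)⁻¹) ((1 - PiProj f μ).mulVec u) v
      = innerW (fun i => (μ i)⁻¹) u ((1 - PiProj f μ).mulVec v) :=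
  symm_spec (fun i j => Q_symm hμ i j) u v

lemma Q_norm_split (hf : Function.Surjective f) (hμ : ∀ i, 0 < μ i) (v : Fin N → ℝ) :
    innerW (fun i => (μ i)⁻¹) ((1 - PiProj f μ).mulVec v) ((1 - PiProj f μ).mulVec v)
      = innerW (fun i => (μ i)⁻¹) v v
        - innerW (fun i => (μ i)⁻¹) ((PiProj f μ).mulVec v) ((PiProj f μ).mulVec v) := by
  have hQv : (1 - PiProj f μ).mulVec v = v - (PiProj f μ).mulVec v := by
    rw [Matrix.sub_mulVec, Matrix.one_mulVec]
  rw [hQv, innerW_expand, ← Pi_inner f μ hf hμ v]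
  ring

lemma Q_idemV (hf : Function.Surjective f) (hμ : ∀ i, 0 < μ i) (v : Fin N → ℝ) :
    (1 - PiProj f μ).mulVec ((1 - PiProj f μ).mulVec v) = (1 - PiProj f μ).mulVec v := by
  have h1 : (PiProj f μ).mulVec ((1 - PiProj f μ).mulVec v) = 0 := by
    rw [Matrix.sub_mulVec, Matrix.one_mulVec, Matrix.mulVec_sub, Pi_mulVec_idem f μ hf hμ,
      sub_self]
  rw [Matrix.sub_mulVec, Matrix.one_mulVec, h1, sub_zero]

lemma T_inner (hμ : ∀ i, 0 < μ i) (u v : Fin N → ℝ) :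
    innerW (fun i => (μ i)⁻¹) ((adjW μ (hatP P μ) * hatP P μ).mulVec u) v
      = innerW (fun i => (μ i)⁻¹) ((hatP P μ).mulVec u) ((hatP P μ).mulVec v) := by
  rw [← Matrix.mulVec_mulVec]
  exact adj_spec hμ (hatP P μ) ((hatP P μ).mulVec u) v

lemma R_sym (hμ : ∀ i, 0 < μ i) (u v : Fin N → ℝ) :
    innerW (fun i => (μ i)⁻¹) ((1 - adjW μ (hatP P μ) * hatP P μ).mulVec u) v
      = innerW (fun i => (μ i)⁻¹) u ((1 - adjW μ (hatP P μ) * hatP P μ).mulVec v) := by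
  rw [Matrix.sub_mulVec, Matrix.one_mulVec, Matrix.sub_mulVec, Matrix.one_mulVec,
    innerW_sub_left, innerW_sub_right, T_inner hμ u v]
  have h2 : innerW (fun i => (μ i)⁻¹) u ((adjW μ (hatP P μ) * hatP P μ).mulVec v)
      = innerW (fun i => (μ i)⁻¹) ((hatP P μ).mulVec u) ((hatP P μ).mulVec v) := by
    rw [innerW_comm, T_inner hμ v u, innerW_comm]
  rw [h2]

lemma R_pos (hP : ColStoch P) (hμ : ∀ i, 0 < μ i) (hμsum : ∑ i, μ i = 1)
    (hinv : P.mulVec μ = μ) (u : Fin N → ℝ) :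
    0 ≤ innerW (fun i => (μ i)⁻¹) u ((1 - adjW μ (hatP P μ) * hatP P μ).mulVec u) := by
  rw [Matrix.sub_mulVec, Matrix.one_mulVec, innerW_sub_right]
  have h2 : innerW (fun i => (μ i)⁻¹) u ((adjW μ (hatP P μ) * hatP P μ).mulVec u)
      = innerW (fun i => (μ i)⁻¹) ((hatP P μ).mulVec u) ((hatP P μ).mulVec u) := by
    rw [innerW_comm, T_inner hμ u u]
  rw [h2]
  have := hatP_contract hP hμ hμsum hinv u
  nlinarith [sq_nonneg (∑ j, u j)]

lemma R_le (hμ : ∀ i, 0 < μ i) (u : Fin N → ℝ) :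
    innerW (fun i => (μ i)⁻¹) u ((1 - adjW μ (hatP P μ) * hatP P μ).mulVec u)
      ≤ innerW (fun i => (μ i)⁻¹) u u := by
  rw [Matrix.sub_mulVec, Matrix.one_mulVec, innerW_sub_right]
  have h2 : innerW (fun i => (μ i)⁻¹) u ((adjW μ (hatP P μ) * hatP P μ).mulVec u)
      = innerW (fun i => (μ i)⁻¹) ((hatP P μ).mulVec u) ((hatP P μ).mulVec u) := by
    rw [innerW_comm, T_inner hμ u u]
  rw [h2]
  have := innerW_self_nonneg (fun i => inv_nonneg.2 (hμ i).le) ((hatP P μ).mulVec u)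
  linarith

lemma beta_ge_one (hP : ColStoch P) (hirr2 : Irred (Pᵀ * P)) (hμ : ∀ i, 0 < μ i)
    (hμsum : ∑ i, μ i = 1) (hinv : P.mulVec μ = μ) (hf : Function.Surjective f)
    {a b : Fin N} (hab : a ≠ b) (hfab : f a = f b) :
    1 ≤ opNormW (fun i => (μ i)⁻¹)
      ((1 - PiProj f μ) * (1 - adjW μ (hatP P μ) * hatP P μ)⁻¹ * (1 - PiProj f μ)) := by
  have hwpos : ∀ i, (0:ℝ) < (fun i => (μ i)⁻¹) i := fun i => inv_pos.2 (hμ i)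
  have hwnn : ∀ i, (0:ℝ) ≤ (fun i => (μ i)⁻¹) i := fun i => (hwpos i).le
  have hNe : (Finset.univ : Finset (Fin N)).Nonempty := ⟨a, Finset.mem_univ a⟩
  have hRunit := R_unit hP hirr2 hμ hμsum hinv hNe
  set w : Fin N → ℝ := fun i => (μ i)⁻¹ with hwdef
  set Rm : Matrix (Fin N) (Fin N) ℝ := 1 - adjW μ (hatP P μ) * hatP P μ with hRdef
  set Q : Matrix (Fin N) (Fin N) ℝ := 1 - PiProj f μ with hQdef
  set B : Matrix (Fin N) (Fin N) ℝ := Q * Rm⁻¹ * Q with hBdef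
  set β := opNormW w B with hβdef
  set x₀ : Fin N → ℝ :=
    fun i => (if i = a then (1:ℝ) else 0) - (if i = b then 1 else 0) with hx₀def
  have hx₀ne : x₀ ≠ 0 := by
    intro h
    have := congrFun h a
    simp only [hx₀def, if_pos rfl, if_neg hab, Pi.zero_apply, sub_zero] at this
    exact one_ne_zero this
  have hPix₀ : (PiProj f μ).mulVec x₀ = 0 := by
    funext j
    rw [mulVec_apply]
    have hterm : ∀ k, PiProj f μ j k * x₀ k
        = (if k = a then PiProj f μ j k else 0) - (if k = b then PiProj f μ j k else 0) := by
      intro k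
      simp only [hx₀def, mul_sub, mul_ite, mul_one, mul_zero]
    rw [Finset.sum_congr rfl fun k _ => hterm k, Finset.sum_sub_distrib,
      Finset.sum_ite_eq', Finset.sum_ite_eq']
    simp only [Finset.mem_univ, if_true]
    rw [Pi_apply, Pi_apply, hfab]
    simp
  have hQx₀ : Q.mulVec x₀ = x₀ := by
    rw [hQdef, Matrix.sub_mulVec, Matrix.one_mulVec, hPix₀, sub_zero]
  set u₀ := Rm⁻¹.mulVec x₀ with hu₀def
  have hRu₀ : Rm.mulVec u₀ = x₀ := by
    rw [hu₀def, Matrix.mulVec_mulVec, Matrix.mul_nonsing_inv _ hRunit, Matrix.one_mulVec]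
  set t₀ := innerW w x₀ x₀ with ht₀def
  have ht₀ : 0 < t₀ := innerW_self_pos hwpos hx₀ne
  have hCS := bilin_CS (R := Rm) (fun u v => R_sym hμ u v) (fun u => R_pos hP hμ hμsum hinv u) u₀ x₀
  have h1 : innerW w u₀ (Rm.mulVec x₀) = t₀ := by
    rw [← R_sym hμ u₀ x₀, hRu₀]
  have h2 : innerW w u₀ (Rm.mulVec u₀) = innerW w x₀ u₀ := by
    rw [hRu₀, innerW_comm]
  have h3 : innerW w x₀ (Rm.mulVec x₀) ≤ t₀ := R_le hμ x₀
  have hc₀nn : 0 ≤ innerW w x₀ u₀ := by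
    rw [← h2]; exact R_pos hP hμ hμsum hinv u₀
  have ht₀c₀ : t₀ ≤ innerW w x₀ u₀ := by
    rw [h1, h2] at hCS
    nlinarith [hCS, ht₀, hc₀nn, h3]
  have hBx₀ : B.mulVec x₀ = Q.mulVec u₀ := by
    rw [hBdef, ← Matrix.mulVec_mulVec, ← Matrix.mulVec_mulVec, hQx₀, hu₀def]
  have hc₀B : innerW w x₀ u₀ = innerW w x₀ (B.mulVec x₀) := by
    rw [hBx₀, ← Q_inner hμ x₀ u₀, hQx₀]
  have hnormB : innerW w (B.mulVec x₀) (B.mulVec x₀) ≤ β ^ 2 * t₀ :=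
    of_normW_le hwnn (opNormW_bound hwpos B x₀)
  have hc₀β : innerW w x₀ u₀ ≤ β * t₀ := by
    have hcs2 := innerW_CS hwnn x₀ (B.mulVec x₀)
    have hβnn : 0 ≤ β := opNormW_nonneg w B
    rw [← hc₀B] at hcs2
    have hmul : innerW w x₀ u₀ ^ 2 ≤ (β * t₀) ^ 2 := by nlinarith [hcs2, hnormB, ht₀.le]
    have hβt : 0 ≤ β * t₀ := mul_nonneg hβnn ht₀.le
    nlinarith [hmul, hβt, hc₀nn]
  have := le_trans ht₀c₀ hc₀β
  nlinarith [this, ht₀]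

end Final

section Final2
variable {n : ℕ} {P : Matrix (Fin N) (Fin N) ℝ} {μ : Fin N → ℝ} {f : Fin N → Fin n}

lemma PiS (hf : Function.Surjective f) (hμ : ∀ i, 0 < μ i) :
    PiProj f μ * CoarseS P f μ μ = CoarseS P f μ μ := by
  have h : PiProj f μ * CoarseS P f μ μ
      = (PiProj f μ * Disagg f μ) * ((Agg f * (1 - P + vecMulVec μ 1) * Disagg f μ)⁻¹
        * (Agg f * (1 - P + vecMulVec μ 1))) := by
    rw [CoarseS]; simp only [Matrix.mul_assoc]
  rw [h, hPiD f μ hf hμ, CoarseS]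
  simp only [Matrix.mul_assoc]

lemma Q1S (hf : Function.Surjective f) (hμ : ∀ i, 0 < μ i) :
    (1 - PiProj f μ) * (1 - CoarseS P f μ μ) = 1 - PiProj f μ := by
  have hQS : (1 - PiProj f μ) * CoarseS P f μ μ = 0 := by
    rw [Matrix.sub_mul, Matrix.one_mul, PiS hf hμ, sub_self]
  rw [Matrix.mul_sub, Matrix.mul_one, hQS, sub_zero]

lemma AKS (hE : IsUnit (Agg f * (1 - P + vecMulVec μ 1) * Disagg f μ).det) :
    Agg f * (1 - P + vecMulVec μ 1) * CoarseS P f μ μ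
      = Agg f * (1 - P + vecMulVec μ 1) := by
  rw [CoarseS]
  have h : Agg f * (1 - P + vecMulVec μ 1) * (Disagg f μ
        * (Agg f * (1 - P + vecMulVec μ 1) * Disagg f μ)⁻¹
        * (Agg f * (1 - P + vecMulVec μ 1)))
      = (Agg f * (1 - P + vecMulVec μ 1) * Disagg f μ)
        * ((Agg f * (1 - P + vecMulVec μ 1) * Disagg f μ)⁻¹
          * (Agg f * (1 - P + vecMulVec μ 1))) := by
    simp only [Matrix.mul_assoc]
  rw [h, ← Matrix.mul_assoc, Matrix.mul_nonsing_inv _ hE, Matrix.one_mul]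

lemma PiK1S (hf : Function.Surjective f) (hμ : ∀ i, 0 < μ i)
    (hE : IsUnit (Agg f * (1 - P + vecMulVec μ 1) * Disagg f μ).det) :
    PiProj f μ * ((1 - P + vecMulVec μ 1) * (1 - CoarseS P f μ μ)) = 0 := by
  have h2 : Agg f * (1 - P + vecMulVec μ 1) * (1 - CoarseS P f μ μ) = 0 := by
    rw [Matrix.mul_sub, Matrix.mul_one, AKS hE, sub_self]
  rw [PiProj, Matrix.mul_assoc, ← Matrix.mul_assoc (Agg f), h2, Matrix.mul_zero]

set_option maxHeartbeats 1000000 in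
lemma perx (hP : ColStoch P) (hirr2 : Irred (Pᵀ * P)) (hμ : ∀ i, 0 < μ i)
    (hμsum : ∑ i, μ i = 1) (hinv : P.mulVec μ = μ) (hf : Function.Surjective f)
    (hNe : (Finset.univ : Finset (Fin N)).Nonempty)
    (hβ1 : 1 ≤ opNormW (fun i => (μ i)⁻¹) ((1 - PiProj f μ)
      * (1 - adjW μ (hatP P μ) * hatP P μ)⁻¹ * (1 - PiProj f μ)))
    (x : Fin N → ℝ) :
    innerW (fun i => (μ i)⁻¹) (((1 - PiProj f μ) * Jop P f μ μ).mulVec x)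
        (((1 - PiProj f μ) * Jop P f μ μ).mulVec x)
      ≤ (1 - 1 / opNormW (fun i => (μ i)⁻¹) ((1 - PiProj f μ)
          * (1 - adjW μ (hatP P μ) * hatP P μ)⁻¹ * (1 - PiProj f μ)))
        * innerW (fun i => (μ i)⁻¹) x x := by
  have hwpos : ∀ i, (0:ℝ) < (fun i => (μ i)⁻¹) i := fun i => inv_pos.2 (hμ i)
  have hwnn : ∀ i, (0:ℝ) ≤ (fun i => (μ i)⁻¹) i := fun i => (hwpos i).le
  have hEunit := E_unit f hP hirr2 hμ hμsum hinv hf hNe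
  have hRunit := R_unit hP hirr2 hμ hμsum hinv hNe
  set y := (1 - CoarseS P f μ μ).mulVec x with hydef
  set q := (1 - PiProj f μ).mulVec x with hqdef
  have hJx : ((1 - PiProj f μ) * Jop P f μ μ).mulVec x
      = (1 - PiProj f μ).mulVec ((hatP P μ).mulVec y) := by
    rw [← Matrix.mulVec_mulVec, Jop, ← Matrix.mulVec_mulVec, hydef]
  have hQy : (1 - PiProj f μ).mulVec y = q := by
    rw [hydef, Matrix.mulVec_mulVec, Q1S hf hμ, hqdef]
  have hKH : (1 - P + vecMulVec μ 1 : Matrix (Fin N) (Fin N) ℝ) = 1 - hatP P μ := by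
    rw [hatP]; abel
  have hPiHy : (PiProj f μ).mulVec ((hatP P μ).mulVec y) = (PiProj f μ).mulVec y := by
    have h0 : (PiProj f μ).mulVec
        (((1 - P + vecMulVec μ 1) * (1 - CoarseS P f μ μ)).mulVec x) = 0 := by
      rw [Matrix.mulVec_mulVec, PiK1S hf hμ hEunit, Matrix.zero_mulVec]
    have h1 : ((1 - P + vecMulVec μ 1) * (1 - CoarseS P f μ μ)).mulVec x
        = y - (hatP P μ).mulVec y := by
      rw [← Matrix.mulVec_mulVec, ← hydef, hKH, Matrix.sub_mulVec, Matrix.one_mulVec]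
    rw [h1, Matrix.mulVec_sub] at h0
    exact (sub_eq_zero.1 h0).symm
  have hA : innerW (fun i => (μ i)⁻¹)
        ((1 - PiProj f μ).mulVec ((hatP P μ).mulVec y))
        ((1 - PiProj f μ).mulVec ((hatP P μ).mulVec y))
      = innerW (fun i => (μ i)⁻¹) ((hatP P μ).mulVec y) ((hatP P μ).mulVec y)
        - innerW (fun i => (μ i)⁻¹) ((PiProj f μ).mulVec y) ((PiProj f μ).mulVec y) := by
    rw [Q_norm_split hf hμ, hPiHy]
  have hB2 : innerW (fun i => (μ i)⁻¹) ((PiProj f μ).mulVec y) ((PiProj f μ).mulVec y)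
      = innerW (fun i => (μ i)⁻¹) y y - innerW (fun i => (μ i)⁻¹) q q := by
    have h := Q_norm_split hf hμ y
    rw [hQy] at h
    linarith
  have hρ : innerW (fun i => (μ i)⁻¹) y
        ((1 - adjW μ (hatP P μ) * hatP P μ).mulVec y)
      = innerW (fun i => (μ i)⁻¹) y y
        - innerW (fun i => (μ i)⁻¹) ((hatP P μ).mulVec y) ((hatP P μ).mulVec y) := by
    rw [Matrix.sub_mulVec, Matrix.one_mulVec, innerW_sub_right]
    congr 1
    rw [innerW_comm, T_inner hμ y y]
  have hρnn : 0 ≤ innerW (fun i => (μ i)⁻¹) y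
      ((1 - adjW μ (hatP P μ) * hatP P μ).mulVec y) := R_pos hP hμ hμsum hinv y
  set u := (1 - adjW μ (hatP P μ) * hatP P μ)⁻¹.mulVec q with hudef
  have hRu : (1 - adjW μ (hatP P μ) * hatP P μ).mulVec u = q := by
    rw [hudef, Matrix.mulVec_mulVec, Matrix.mul_nonsing_inv _ hRunit, Matrix.one_mulVec]
  have hyq : innerW (fun i => (μ i)⁻¹) y q = innerW (fun i => (μ i)⁻¹) q q := by
    rw [← hQy]
    have h := Q_inner (f := f) hμ y ((1 - PiProj f μ).mulVec y)
    rw [Q_idemV hf hμ y] at h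
    exact h.symm
  have hCS := bilin_CS (R := 1 - adjW μ (hatP P μ) * hatP P μ)
    (fun u v => R_sym hμ u v) (fun u => R_pos hP hμ hμsum hinv u) y u
  have hyRu : innerW (fun i => (μ i)⁻¹) y ((1 - adjW μ (hatP P μ) * hatP P μ).mulVec u)
      = innerW (fun i => (μ i)⁻¹) q q := by rw [hRu]; exact hyq
  rw [hyRu] at hCS
  have hQq : (1 - PiProj f μ).mulVec q = q := by
    rw [hqdef]; exact Q_idemV hf hμ x
  have hBq : ((1 - PiProj f μ) * (1 - adjW μ (hatP P μ) * hatP P μ)⁻¹ * (1 - PiProj f μ)).mulVec q = (1 - PiProj f μ).mulVec u := by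
    rw [← Matrix.mulVec_mulVec, ← Matrix.mulVec_mulVec, hQq, hudef]
  have hqu : innerW (fun i => (μ i)⁻¹) u ((1 - adjW μ (hatP P μ) * hatP P μ).mulVec u)
      = innerW (fun i => (μ i)⁻¹) q (((1 - PiProj f μ) * (1 - adjW μ (hatP P μ) * hatP P μ)⁻¹ * (1 - PiProj f μ)).mulVec q) := by
    rw [hRu, hBq, ← Q_inner (f := f) hμ q u, hQq, innerW_comm]
  have hβpos : (0:ℝ) < opNormW (fun i => (μ i)⁻¹) ((1 - PiProj f μ) * (1 - adjW μ (hatP P μ) * hatP P μ)⁻¹ * (1 - PiProj f μ)) := lt_of_lt_of_le zero_lt_one hβ1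
  have hqq_nn : 0 ≤ innerW (fun i => (μ i)⁻¹) q q := innerW_self_nonneg hwnn q
  have hcβ : innerW (fun i => (μ i)⁻¹) q (((1 - PiProj f μ) * (1 - adjW μ (hatP P μ) * hatP P μ)⁻¹ * (1 - PiProj f μ)).mulVec q)
      ≤ opNormW (fun i => (μ i)⁻¹) ((1 - PiProj f μ) * (1 - adjW μ (hatP P μ) * hatP P μ)⁻¹ * (1 - PiProj f μ)) * innerW (fun i => (μ i)⁻¹) q q := by
    have hnormB : innerW (fun i => (μ i)⁻¹) (((1 - PiProj f μ) * (1 - adjW μ (hatP P μ) * hatP P μ)⁻¹ * (1 - PiProj f μ)).mulVec q) (((1 - PiProj f μ) * (1 - adjW μ (hatP P μ) * hatP P μ)⁻¹ * (1 - PiProj f μ)).mulVec q)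
        ≤ opNormW (fun i => (μ i)⁻¹) ((1 - PiProj f μ) * (1 - adjW μ (hatP P μ) * hatP P μ)⁻¹ * (1 - PiProj f μ)) ^ 2 * innerW (fun i => (μ i)⁻¹) q q :=
      of_normW_le hwnn (opNormW_bound hwpos ((1 - PiProj f μ) * (1 - adjW μ (hatP P μ) * hatP P μ)⁻¹ * (1 - PiProj f μ)) q)
    have hcs2 := innerW_CS hwnn q (((1 - PiProj f μ) * (1 - adjW μ (hatP P μ) * hatP P μ)⁻¹ * (1 - PiProj f μ)).mulVec q)
    have hcpos : 0 ≤ innerW (fun i => (μ i)⁻¹) q (((1 - PiProj f μ) * (1 - adjW μ (hatP P μ) * hatP P μ)⁻¹ * (1 - PiProj f μ)).mulVec q) := by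
      rw [← hqu]; exact R_pos hP hμ hμsum hinv u
    have hmul : innerW (fun i => (μ i)⁻¹) q (((1 - PiProj f μ) * (1 - adjW μ (hatP P μ) * hatP P μ)⁻¹ * (1 - PiProj f μ)).mulVec q) ^ 2
        ≤ (opNormW (fun i => (μ i)⁻¹) ((1 - PiProj f μ) * (1 - adjW μ (hatP P μ) * hatP P μ)⁻¹ * (1 - PiProj f μ)) * innerW (fun i => (μ i)⁻¹) q q) ^ 2 := by
      nlinarith [hcs2, hnormB, hqq_nn]
    have hβt : 0 ≤ opNormW (fun i => (μ i)⁻¹) ((1 - PiProj f μ) * (1 - adjW μ (hatP P μ) * hatP P μ)⁻¹ * (1 - PiProj f μ)) * innerW (fun i => (μ i)⁻¹) q q := mul_nonneg hβpos.le hqq_nn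
    nlinarith [hmul, hβt, hcpos]
  have hkey : innerW (fun i => (μ i)⁻¹) q q ^ 2
      ≤ innerW (fun i => (μ i)⁻¹) y ((1 - adjW μ (hatP P μ) * hatP P μ).mulVec y)
        * (opNormW (fun i => (μ i)⁻¹) ((1 - PiProj f μ) * (1 - adjW μ (hatP P μ) * hatP P μ)⁻¹ * (1 - PiProj f μ)) * innerW (fun i => (μ i)⁻¹) q q) := by
    calc innerW (fun i => (μ i)⁻¹) q q ^ 2
        ≤ innerW (fun i => (μ i)⁻¹) y ((1 - adjW μ (hatP P μ) * hatP P μ).mulVec y)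
          * innerW (fun i => (μ i)⁻¹) u ((1 - adjW μ (hatP P μ) * hatP P μ).mulVec u) :=
          hCS
      _ ≤ _ := by
          rw [hqu]
          exact mul_le_mul_of_nonneg_left hcβ hρnn
  rw [hJx, hA, hB2]
  have hqx : innerW (fun i => (μ i)⁻¹) q q ≤ innerW (fun i => (μ i)⁻¹) x x := by
    have h := Q_norm_split hf hμ x
    have h2 := innerW_self_nonneg hwnn ((PiProj f μ).mulVec x)
    rw [← hqdef] at h
    linarith
  have h1β : 0 ≤ 1 - 1/opNormW (fun i => (μ i)⁻¹) ((1 - PiProj f μ) * (1 - adjW μ (hatP P μ) * hatP P μ)⁻¹ * (1 - PiProj f μ)) := by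
    rw [sub_nonneg, div_le_one hβpos]; exact hβ1
  have hxx_nn : 0 ≤ innerW (fun i => (μ i)⁻¹) x x := innerW_self_nonneg hwnn x
  rcases eq_or_lt_of_le hqq_nn with h0 | h0
  · have hrhs : 0 ≤ (1 - 1/opNormW (fun i => (μ i)⁻¹) ((1 - PiProj f μ) * (1 - adjW μ (hatP P μ) * hatP P μ)⁻¹ * (1 - PiProj f μ))) * innerW (fun i => (μ i)⁻¹) x x :=
      mul_nonneg h1β hxx_nn
    rw [hρ] at hρnn
    linarith [hρnn, hrhs, h0]
  · have ht : innerW (fun i => (μ i)⁻¹) q q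
        ≤ innerW (fun i => (μ i)⁻¹) y ((1 - adjW μ (hatP P μ) * hatP P μ).mulVec y)
          * opNormW (fun i => (μ i)⁻¹) ((1 - PiProj f μ) * (1 - adjW μ (hatP P μ) * hatP P μ)⁻¹ * (1 - PiProj f μ)) := by
      have h2 : innerW (fun i => (μ i)⁻¹) q q * innerW (fun i => (μ i)⁻¹) q q
          ≤ (innerW (fun i => (μ i)⁻¹) y ((1 - adjW μ (hatP P μ) * hatP P μ).mulVec y)
            * opNormW (fun i => (μ i)⁻¹) ((1 - PiProj f μ) * (1 - adjW μ (hatP P μ) * hatP P μ)⁻¹ * (1 - PiProj f μ))) * innerW (fun i => (μ i)⁻¹) q q := by nlinarith [hkey]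
      exact le_of_mul_le_mul_right h2 h0
    have hρge : innerW (fun i => (μ i)⁻¹) q q / opNormW (fun i => (μ i)⁻¹) ((1 - PiProj f μ) * (1 - adjW μ (hatP P μ) * hatP P μ)⁻¹ * (1 - PiProj f μ))
        ≤ innerW (fun i => (μ i)⁻¹) y ((1 - adjW μ (hatP P μ) * hatP P μ).mulVec y) := by
      rw [div_le_iff₀ hβpos]
      exact ht
    have e1 : (1 - 1/opNormW (fun i => (μ i)⁻¹) ((1 - PiProj f μ) * (1 - adjW μ (hatP P μ) * hatP P μ)⁻¹ * (1 - PiProj f μ))) * innerW (fun i => (μ i)⁻¹) q q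
        = innerW (fun i => (μ i)⁻¹) q q - innerW (fun i => (μ i)⁻¹) q q / opNormW (fun i => (μ i)⁻¹) ((1 - PiProj f μ) * (1 - adjW μ (hatP P μ) * hatP P μ)⁻¹ * (1 - PiProj f μ)) := by
      rw [sub_mul, one_mul, one_div_mul_eq_div]
    have e2 : (1 - 1/opNormW (fun i => (μ i)⁻¹) ((1 - PiProj f μ) * (1 - adjW μ (hatP P μ) * hatP P μ)⁻¹ * (1 - PiProj f μ))) * innerW (fun i => (μ i)⁻¹) q q
        ≤ (1 - 1/opNormW (fun i => (μ i)⁻¹) ((1 - PiProj f μ) * (1 - adjW μ (hatP P μ) * hatP P μ)⁻¹ * (1 - PiProj f μ))) * innerW (fun i => (μ i)⁻¹) x x :=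
      mul_le_mul_of_nonneg_left hqx h1β
    have hρy := hρ
    linarith [hρge, e1, e2, hρ.symm.le, hρ.le]

end Final2

end S15

/-- `‖(I-Π(μ))J(μ)‖²_{1/μ} ≤ 1 - 1/‖(I-Π(μ))(I-P̂*P̂)⁻¹(I-Π(μ))‖_{1/μ}`. -/
theorem stmt15 {N n : ℕ} (P : Matrix (Fin N) (Fin N) ℝ)
    (μ : Fin N → ℝ) (hP : ColStoch P) (hirr : Irred P) (hirr2 : Irred (Pᵀ * P))
    (hμpos : ∀ i, 0 < μ i) (hμsum : ∑ i, μ i = 1) (hinv : P.mulVec μ = μ)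
    (f : Fin N → Fin n) (hf : Function.Surjective f)
    (hcoarse : ∃ a b : Fin N, a ≠ b ∧ f a = f b) :
    opNormW (fun i => (μ i)⁻¹) ((1 - PiProj f μ) * Jop P f μ μ) ^ 2 ≤
      1 - 1 / opNormW (fun i => (μ i)⁻¹)
        ((1 - PiProj f μ) * (1 - adjW μ (hatP P μ) * hatP P μ)⁻¹ * (1 - PiProj f μ)) := by
  obtain ⟨a, b, hab, hfab⟩ := hcoarse
  have hNe : (Finset.univ : Finset (Fin N)).Nonempty := ⟨a, Finset.mem_univ a⟩
  have hβ1 := S15.beta_ge_one hP hirr2 hμpos hμsum hinv hf hab hfab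
  have hβpos : (0:ℝ) < opNormW (fun i => (μ i)⁻¹) ((1 - PiProj f μ) * (1 - adjW μ (hatP P μ) * hatP P μ)⁻¹ * (1 - PiProj f μ)) := lt_of_lt_of_le zero_lt_one hβ1
  have h1β : 0 ≤ 1 - 1/opNormW (fun i => (μ i)⁻¹) ((1 - PiProj f μ) * (1 - adjW μ (hatP P μ) * hatP P μ)⁻¹ * (1 - PiProj f μ)) := by
    rw [sub_nonneg, div_le_one hβpos]; exact hβ1
  have hb : ∀ x, normW (fun i => (μ i)⁻¹) (((1 - PiProj f μ) * Jop P f μ μ).mulVec x)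
      ≤ Real.sqrt (1 - 1/opNormW (fun i => (μ i)⁻¹) ((1 - PiProj f μ) * (1 - adjW μ (hatP P μ) * hatP P μ)⁻¹ * (1 - PiProj f μ))) * normW (fun i => (μ i)⁻¹) x := fun x =>
    S15.normW_le (Real.sqrt_nonneg _) (by
      rw [Real.sq_sqrt h1β]
      exact S15.perx hP hirr2 hμpos hμsum hinv hf hNe hβ1 x)
  have hop := S15.opNormW_le (Real.sqrt_nonneg _) hb
  have hopnn := S15.opNormW_nonneg (fun i => (μ i)⁻¹) ((1 - PiProj f μ) * Jop P f μ μ)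
  calc opNormW (fun i => (μ i)⁻¹) ((1 - PiProj f μ) * Jop P f μ μ) ^ 2
      ≤ Real.sqrt (1 - 1/opNormW (fun i => (μ i)⁻¹) ((1 - PiProj f μ) * (1 - adjW μ (hatP P μ) * hatP P μ)⁻¹ * (1 - PiProj f μ))) ^ 2 := by nlinarith [hop, hopnn, Real.sqrt_nonneg (1 - 1/opNormW (fun i => (μ i)⁻¹) ((1 - PiProj f μ) * (1 - adjW μ (hatP P μ) * hatP P μ)⁻¹ * (1 - PiProj f μ)))]
    _ = 1 - 1/opNormW (fun i => (μ i)⁻¹) ((1 - PiProj f μ) * (1 - adjW μ (hatP P μ) * hatP P μ)⁻¹ * (1 - PiProj f μ)) := Real.sq_sqrt h1β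
end
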